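/- arXiv:1803.04466 — 6 statements merged into one kernel-verified Lean document; each statement's English description precedes it below -/
import Mathlib

section
/- Let G be a graph, S₁ and S₂ two disjoint subsets of V(G) that are k-linked. If each Sᵢ has a subset Tᵢ of size k−1 (i = 1,2) such that T₁ and T₂ are (k−1)-linked, then there exist vertices sᵢ ∈ Sᵢ \ Tᵢ (i = 1,2) such that T₁ ∪ {s₁} and T₂ ∪ {s₂} are k-linked. -/
/-- Two disjoint vertex sets `S₁`, `S₂` are `k`-linked: there are `k` pairwise
vertex-disjoint paths joining `k` distinct vertices of `S₁` to `k` distinct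
vertices of `S₂`, each path meeting each `Sᵢ` in exactly one vertex. -/
def SetsLinked {V : Type*} (G : SimpleGraph V) (k : ℕ) (S₁ S₂ : Set V) : Prop :=
  ∃ (a b : Fin k → V) (P : ∀ i, G.Walk (a i) (b i)),
    Function.Injective a ∧ Function.Injective b ∧
    (∀ i, a i ∈ S₁) ∧ (∀ i, b i ∈ S₂) ∧
    (∀ i, (P i).IsPath) ∧
    (∀ i, ∀ x ∈ (P i).support, x ∈ S₁ → x = a i) ∧
    (∀ i, ∀ x ∈ (P i).support, x ∈ S₂ → x = b i) ∧
    (∀ i j, i ≠ j → ∀ x, x ∈ (P i).support → x ∉ (P j).support)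

open SimpleGraph Sum Set

set_option linter.unusedSectionVars false

namespace MengerAux

variable {V : Type*}

section listwalk

/-- A separator: every walk from `A` to `B` meets `X`. -/
def Sep (G : SimpleGraph V) (A B X : Set V) : Prop :=
  ∀ a ∈ A, ∀ b ∈ B, ∀ p : G.Walk a b, ∃ z ∈ X, z ∈ p.support

lemma getLast?_support {G : SimpleGraph V} {a b : V} (p : G.Walk a b) :
    p.support.getLast? = some b := by
  induction p with
  | nil => simp
  | @cons u v w h q ih =>
      rw [SimpleGraph.Walk.support_cons]
      exact List.mem_getLast?_cons ih

lemma prefix_eq_of_getLast_mem {l₁ l₂ : List V} {x : V} (h : l₁ <+: l₂) (hd : l₂.Nodup)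
    (hx : l₂.getLast? = some x) (hmem : x ∈ l₁) : l₁ = l₂ := by
  obtain ⟨t, rfl⟩ := h
  cases t with
  | nil => simp
  | cons y ts =>
      exfalso
      have hlast : x ∈ y :: ts := by
        have h2 : (l₁ ++ y :: ts).getLast? = (y :: ts).getLast? := by
          rw [List.getLast?_append_of_ne_nil _ (by simp)]
        rw [h2] at hx
        obtain ⟨hne2, rfl⟩ := List.mem_getLast?_eq_getLast hx
        exact List.getLast_mem _
      exact (List.disjoint_of_nodup_append hd) hmem hlast

/-- First-hit prefix: if a walk meets `X`, there is a prefix walk ending at the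
first vertex of `X`, meeting `X` only there. -/
lemma exists_firstHit {G : SimpleGraph V} (X : Set V) :
    ∀ {a b : V} (p : G.Walk a b), (∃ z ∈ p.support, z ∈ X) →
    ∃ (w : V) (q : G.Walk a w), w ∈ X ∧ q.support <+: p.support ∧
      (∀ z ∈ q.support, z ∈ X → z = w) ∧ (∀ e ∈ q.edges, e ∈ p.edges) := by
  intro a b p
  induction p with
  | nil =>
      rintro ⟨z, hz, hzX⟩
      simp only [Walk.support_nil, List.mem_singleton] at hz
      subst hz
      exact ⟨z, Walk.nil, hzX, by simp, by simp, by simp⟩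
  | @cons u v w h q ih =>
      intro hex
      by_cases hu : u ∈ X
      · refine ⟨u, Walk.nil, hu, ?_, by simp, by simp⟩
        simp [Walk.support_cons]
      · have hex' : ∃ z ∈ q.support, z ∈ X := by
          obtain ⟨z, hz, hzX⟩ := hex
          rw [Walk.support_cons, List.mem_cons] at hz
          rcases hz with rfl | hz
          · exact absurd hzX hu
          · exact ⟨z, hz, hzX⟩
        obtain ⟨w', q', hw', hpre, honce, hedges⟩ := ih hex'
        refine ⟨w', Walk.cons h q', hw', ?_, ?_, ?_⟩
        · rw [Walk.support_cons, Walk.support_cons]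
          obtain ⟨t, ht⟩ := hpre
          exact ⟨t, by rw [List.cons_append, ht]⟩
        · intro z hz hzX
          rw [Walk.support_cons, List.mem_cons] at hz
          rcases hz with rfl | hz
          · exact absurd hzX hu
          · exact honce z hz hzX
        · intro e he
          rw [Walk.edges_cons] at he ⊢
          rcases List.mem_cons.mp he with rfl | he
          · exact List.mem_cons_self
          · exact List.mem_cons_of_mem _ (hedges e he)


end listwalk

section cleanup

lemma clean_one {G : SimpleGraph V} {A B : Set V} {a b : V} (p : G.Walk a b)
    (ha : a ∈ A) (hb : b ∈ B) :
    ∃ (a' b' : V) (q : G.Walk a' b'), a' ∈ A ∧ b' ∈ B ∧ q.IsPath ∧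
      (∀ z ∈ q.support, z ∈ p.support) ∧
      (∀ z ∈ q.support, z ∈ A → z = a') ∧ (∀ z ∈ q.support, z ∈ B → z = b') := by
  classical
  set p₀ := p.bypass with hp₀
  have hp₀path : p₀.IsPath := p.bypass_isPath
  have hsub : ∀ z ∈ p₀.support, z ∈ p.support := fun z hz => p.support_bypass_subset hz
  obtain ⟨w, q₁, hwB, hpre₁, honce₁, -⟩ :=
    exists_firstHit B p₀ ⟨b, p₀.end_mem_support, hb⟩
  have hq₁path : q₁.IsPath := by
    rw [Walk.isPath_def _]
    exact (hpre₁.sublist).nodup ((Walk.isPath_def _).mp hp₀path)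
  have hq₁sub : ∀ z ∈ q₁.support, z ∈ p₀.support := fun z hz => hpre₁.sublist.mem hz
  obtain ⟨a', q₂, haA, hpre₂, honce₂, -⟩ :=
    exists_firstHit A q₁.reverse ⟨a, by simp, ha⟩
  have hq₂path : q₂.IsPath := by
    rw [Walk.isPath_def _]
    exact (hpre₂.sublist).nodup ((Walk.isPath_def _).mp hq₁path.reverse)
  have hq₂sub : ∀ z ∈ q₂.support, z ∈ q₁.support := by
    intro z hz
    have := hpre₂.sublist.mem hz
    rwa [Walk.support_reverse, List.mem_reverse] at this
  refine ⟨a', w, q₂.reverse, haA, hwB, hq₂path.reverse, ?_, ?_, ?_⟩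
  · intro z hz
    rw [Walk.support_reverse, List.mem_reverse] at hz
    exact hsub z (hq₁sub z (hq₂sub z hz))
  · intro z hz hzA
    rw [Walk.support_reverse, List.mem_reverse] at hz
    exact honce₂ z hz hzA
  · intro z hz hzB
    rw [Walk.support_reverse, List.mem_reverse] at hz
    exact honce₁ z (hq₂sub z hz) hzB

lemma weak_to_linked {G : SimpleGraph V} {k : ℕ} {A B : Set V}
    (a b : Fin k → V) (P : ∀ i, G.Walk (a i) (b i))
    (ha : ∀ i, a i ∈ A) (hb : ∀ i, b i ∈ B)
    (hdisj : ∀ i j, i ≠ j → ∀ x, x ∈ (P i).support → x ∉ (P j).support) :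
    SetsLinked G k A B := by
  classical
  have h := fun i => clean_one (A := A) (B := B) (P i) (ha i) (hb i)
  choose a' b' q haA hbB hpath hsub hcleanA hcleanB using h
  have hdisj' : ∀ i j, i ≠ j → ∀ x, x ∈ (q i).support → x ∉ (q j).support := by
    intro i j hij x hxi hxj
    exact hdisj i j hij x (hsub i x hxi) (hsub j x hxj)
  refine ⟨a', b', q, ?_, ?_, haA, hbB, hpath, hcleanA, hcleanB, hdisj'⟩
  · intro i j hij
    by_contra hne
    refine hdisj' i j hne (a' i) (q i).start_mem_support ?_
    rw [hij]
    exact (q j).start_mem_support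
  · intro i j hij
    by_contra hne
    refine hdisj' i j hne (b' i) (q i).end_mem_support ?_
    rw [hij]
    exact (q j).end_mem_support


end cleanup

section contraction

variable [DecidableEq V] {G : SimpleGraph V} {x y : V}

/-- Contract `y` into `x`: `y` becomes isolated, its edges move to `x`. -/
def contract (G : SimpleGraph V) (x y : V) : SimpleGraph V where
  Adj u v := u ≠ v ∧ u ≠ y ∧ v ≠ y ∧
    (G.Adj u v ∨ (u = x ∧ G.Adj y v) ∨ (v = x ∧ G.Adj u y))
  symm := by
    constructor
    rintro u v ⟨h1, h2, h3, h4⟩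
    refine ⟨h1.symm, h3, h2, ?_⟩
    rcases h4 with h | ⟨rfl, h⟩ | ⟨rfl, h⟩
    · exact Or.inl h.symm
    · exact Or.inr (Or.inr ⟨rfl, h.symm⟩)
    · exact Or.inr (Or.inl ⟨rfl, h.symm⟩)
  loopless := ⟨fun u h => h.1 rfl⟩


lemma contract_ne_y {u v : V} (h : (contract G x y).Adj u v) : u ≠ y ∧ v ≠ y :=
  ⟨h.2.1, h.2.2.1⟩

/-- In the contraction, `y` does not appear on walks starting away from `y`. -/
lemma contract_no_y : ∀ {u v : V} (q : (contract G x y).Walk u v), u ≠ y →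
    ∀ z ∈ q.support, z ≠ y := by
  intro u v q
  induction q with
  | nil => intro hu z hz; simp at hz; subst hz; exact hu
  | @cons u w v h q ih =>
      intro hu z hz
      rw [Walk.support_cons, List.mem_cons] at hz
      rcases hz with rfl | hz
      · exact hu
      · exact ih (contract_ne_y h).2 z hz

/-- Push a `G`-walk down to the contraction. -/
lemma contract_walk (hxy : G.Adj x y) : ∀ {a b : V} (p : G.Walk a b),
    ∃ q : (contract G x y).Walk (if a = y then x else a) (if b = y then x else b),
      ∀ z ∈ q.support, ∃ w ∈ p.support, (if w = y then x else w) = z := by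
  have hxney : x ≠ y := hxy.ne
  intro a b p
  induction p with
  | @nil c =>
      refine ⟨Walk.nil, ?_⟩
      intro z hz
      rw [Walk.support_nil, List.mem_singleton] at hz
      exact ⟨c, by simp, hz.symm⟩
  | @cons c d e h p ih =>
      obtain ⟨q, hq⟩ := ih
      by_cases hcuw : (if c = y then x else c) = (if d = y then x else d)
      · refine ⟨q.copy hcuw.symm rfl, ?_⟩
        intro z hz
        rw [Walk.support_copy] at hz
        obtain ⟨t, ht, ht2⟩ := hq z hz
        exact ⟨t, by rw [Walk.support_cons]; exact List.mem_cons_of_mem _ ht, ht2⟩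
      · have hadj : (contract G x y).Adj (if c = y then x else c) (if d = y then x else d) := by
          refine ⟨hcuw, ?_, ?_, ?_⟩
          · split_ifs with h1
            · exact hxney
            · exact h1
          · split_ifs with h1
            · exact hxney
            · exact h1
          · by_cases h1 : c = y <;> by_cases h2 : d = y
            · exact absurd (by rw [if_pos h1, if_pos h2]) hcuw
            · refine Or.inr (Or.inl ⟨by rw [if_pos h1], ?_⟩)
              rw [if_neg h2]
              rwa [h1] at h
            · refine Or.inr (Or.inr ⟨by rw [if_pos h2], ?_⟩)
              rw [if_neg h1]
              rwa [h2] at h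
            · rw [if_neg h1, if_neg h2]
              exact Or.inl h
        refine ⟨Walk.cons hadj q, ?_⟩
        intro z hz
        rw [Walk.support_cons, List.mem_cons] at hz
        rcases hz with rfl | hz
        · exact ⟨c, by rw [Walk.support_cons]; exact List.mem_cons_self, rfl⟩
        · obtain ⟨t, ht, ht2⟩ := hq z hz
          exact ⟨t, by rw [Walk.support_cons]; exact List.mem_cons_of_mem _ ht, ht2⟩

/-- Lift a contraction-walk avoiding `x` back to `G`, with the same support. -/
lemma lift_no_x : ∀ {u v : V} (q : (contract G x y).Walk u v),
    (∀ z ∈ q.support, z ≠ x) → (∀ z ∈ q.support, z ≠ y) →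
    ∃ p : G.Walk u v, p.support = q.support := by
  intro u v q
  induction q with
  | nil => exact fun _ _ => ⟨Walk.nil, by simp⟩
  | @cons c d e h q ih =>
      intro hx hy
      have hx' : ∀ z ∈ q.support, z ≠ x := fun z hz =>
        hx z (by rw [Walk.support_cons]; exact List.mem_cons_of_mem _ hz)
      have hy' : ∀ z ∈ q.support, z ≠ y := fun z hz =>
        hy z (by rw [Walk.support_cons]; exact List.mem_cons_of_mem _ hz)
      obtain ⟨p, hp⟩ := ih hx' hy'
      have hadj : G.Adj c d := by
        rcases h.2.2.2 with h' | ⟨hcx, h'⟩ | ⟨hdx, h'⟩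
        · exact h'
        · exact absurd hcx (hx c (by rw [Walk.support_cons]; exact List.mem_cons_self))
        · refine absurd hdx (hx d ?_)
          rw [Walk.support_cons]
          exact List.mem_cons_of_mem _ q.start_mem_support
      refine ⟨Walk.cons hadj p, ?_⟩
      rw [Walk.support_cons, Walk.support_cons, hp]

/-- Lift a contraction-path starting at `x` back to `G`; the start may become `y`. -/
lemma lift_from_x (hxy : G.Adj x y) : ∀ {v : V} (d : (contract G x y).Walk x v),
    d.IsPath → (∀ z ∈ d.support, z ≠ y) →
    ∃ (x' : V) (p : G.Walk x' v), (x' = x ∨ x' = y) ∧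
      ∀ z ∈ p.support, z = x' ∨ z ∈ d.support := by
  intro v d
  cases d with
  | nil => exact fun _ _ => ⟨x, Walk.nil, Or.inl rfl, by simp⟩
  | @cons u w v h d =>
      intro hpath hy
      have hxnotin : x ∉ d.support := ((Walk.cons_isPath_iff h d).mp hpath).2
      have hy' : ∀ z ∈ d.support, z ≠ y := fun z hz =>
        hy z (by rw [Walk.support_cons]; exact List.mem_cons_of_mem _ hz)
      have hx' : ∀ z ∈ d.support, z ≠ x := fun z hz h' => hxnotin (h' ▸ hz)
      obtain ⟨p, hp⟩ := lift_no_x d hx' hy'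
      rcases h.2.2.2 with h' | ⟨-, h'⟩ | ⟨hcontra, -⟩
      · refine ⟨x, Walk.cons h' p, Or.inl rfl, ?_⟩
        intro z hz
        rw [Walk.support_cons, List.mem_cons] at hz
        rcases hz with rfl | hz
        · exact Or.inl rfl
        · rw [hp] at hz
          exact Or.inr (by rw [Walk.support_cons]; exact List.mem_cons_of_mem _ hz)
      · refine ⟨y, Walk.cons h' p, Or.inr rfl, ?_⟩
        intro z hz
        rw [Walk.support_cons, List.mem_cons] at hz
        rcases hz with rfl | hz
        · exact Or.inl rfl
        · rw [hp] at hz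
          exact Or.inr (by rw [Walk.support_cons]; exact List.mem_cons_of_mem _ hz)
      · exact absurd hcontra.symm h.1


lemma contract_edgeSet_lt [Finite V] (hxy : G.Adj x y) :
    (contract G x y).edgeSet.ncard < G.edgeSet.ncard := by
  classical
  set ψ : Sym2 V → Sym2 V := fun s => if s ∈ G.edgeSet then s else Sym2.map (Equiv.swap x y) s with hψ
  have hy_not : ∀ s ∈ (contract G x y).edgeSet, y ∉ s := by
    intro s hs
    induction s with
    | _ u v =>
      rw [SimpleGraph.mem_edgeSet] at hs
      obtain ⟨h1, h2, h3, -⟩ := hs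
      rw [Sym2.mem_iff]
      push_neg
      exact ⟨fun h => h2 h.symm, fun h => h3 h.symm⟩
  have hmaps : ∀ s ∈ (contract G x y).edgeSet, ψ s ∈ G.edgeSet \ {s(x,y)} := by
    intro s hs
    induction s with
    | _ u v =>
      rw [SimpleGraph.mem_edgeSet] at hs
      obtain ⟨h1, h2, h3, hd⟩ := hs
      have hne_of_noy : ∀ r : Sym2 V, y ∉ r → r ∉ ({s(x,y)} : Set (Sym2 V)) := by
        intro r hyr hcon
        rw [mem_singleton_iff] at hcon
        exact hyr (hcon ▸ Sym2.mem_mk_right x y)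
      have hne_of_nox : ∀ r : Sym2 V, x ∉ r → r ∉ ({s(x,y)} : Set (Sym2 V)) := by
        intro r hxr hcon
        rw [mem_singleton_iff] at hcon
        exact hxr (hcon ▸ Sym2.mem_mk_left x y)
      by_cases hG : s(u,v) ∈ G.edgeSet
      · simp only [hψ]
        rw [if_pos hG]
        refine ⟨hG, hne_of_noy _ ?_⟩
        rw [Sym2.mem_iff]
        push_neg
        exact ⟨fun h => h2 h.symm, fun h => h3 h.symm⟩
      · simp only [hψ]
        rw [if_neg hG]
        rw [Sym2.map_pair_eq]
        rw [SimpleGraph.mem_edgeSet] at hG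
        rcases hd with h' | ⟨hux, h'⟩ | ⟨hvx, h'⟩
        · exact absurd h' hG
        · rw [hux, Equiv.swap_apply_left,
            Equiv.swap_apply_of_ne_of_ne (fun h => h1 (hux ▸ h.symm)) h3]
          refine ⟨(SimpleGraph.mem_edgeSet G).mpr h', hne_of_nox _ ?_⟩
          rw [Sym2.mem_iff]
          push_neg
          exact ⟨hxy.ne, fun h => h1 (by rw [hux, ← h])⟩
        · rw [hvx, Equiv.swap_apply_left, Equiv.swap_apply_of_ne_of_ne (hvx ▸ h1) h2]
          refine ⟨(SimpleGraph.mem_edgeSet G).mpr h', hne_of_nox _ ?_⟩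
          rw [Sym2.mem_iff]
          push_neg
          exact ⟨fun h => h1 (by rw [hvx, h]), hxy.ne⟩
  have hinj : Set.InjOn ψ (contract G x y).edgeSet := by
    intro s hs t ht heq
    have hys := hy_not s hs
    have hyt := hy_not t ht
    have hxmem : ∀ r ∈ (contract G x y).edgeSet, r ∉ G.edgeSet → x ∈ r := by
      intro r hr hrG
      induction r with
      | _ u v =>
        rw [SimpleGraph.mem_edgeSet] at hr hrG
        obtain ⟨-, -, -, hd⟩ := hr
        rcases hd with h' | ⟨rfl, -⟩ | ⟨rfl, -⟩
        · exact absurd h' hrG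
        · exact Sym2.mem_mk_left _ _
        · exact Sym2.mem_mk_right _ _
    have hyswap : ∀ r : Sym2 V, x ∈ r → y ∈ Sym2.map (Equiv.swap x y) r := by
      intro r hxr
      rw [Sym2.mem_map]
      exact ⟨x, hxr, Equiv.swap_apply_left x y⟩
    rw [hψ] at heq
    simp only at heq
    by_cases hsG : s ∈ G.edgeSet <;> by_cases htG : t ∈ G.edgeSet
    · rwa [if_pos hsG, if_pos htG] at heq
    · rw [if_pos hsG, if_neg htG] at heq
      exact absurd (heq ▸ hyswap t (hxmem t ht htG)) hys
    · rw [if_neg hsG, if_pos htG] at heq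
      exact absurd (heq ▸ hyswap s (hxmem s hs hsG)) hyt
    · rw [if_neg hsG, if_neg htG] at heq
      have := congrArg (Sym2.map (Equiv.swap x y)) heq
      rw [Sym2.map_map, Sym2.map_map,
        (by ext z; simp : ((Equiv.swap x y : V → V) ∘ (Equiv.swap x y : V → V)) = id)] at this
      simpa using this
  calc (contract G x y).edgeSet.ncard = (ψ '' (contract G x y).edgeSet).ncard :=
        (Set.ncard_image_of_injOn hinj).symm
    _ ≤ (G.edgeSet \ {s(x,y)}).ncard := Set.ncard_le_ncard (fun z hz => by
        obtain ⟨w, hw, rfl⟩ := hz; exact hmaps w hw) (Set.toFinite _)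
    _ < G.edgeSet.ncard :=
        Set.ncard_diff_singleton_lt_of_mem ((SimpleGraph.mem_edgeSet G).mpr hxy) (Set.toFinite _)

lemma deleteEdges_edgeSet_lt [Finite V] (hxy : G.Adj x y) :
    (G.deleteEdges {s(x,y)}).edgeSet.ncard < G.edgeSet.ncard := by
  rw [edgeSet_deleteEdges]
  exact Set.ncard_diff_singleton_lt_of_mem ((SimpleGraph.mem_edgeSet G).mpr hxy) (Set.toFinite _)


lemma pre_xy (hxy : G.Adj x y) {s v : V} (w : V) (p : G.Walk s v)
    (hs : s = x ∨ s = y) (hw : w = x ∨ w = y) :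
    ∃ r : G.Walk w v, ∀ z ∈ r.support, z ∈ p.support ∨ z = x ∨ z = y := by
  by_cases hws : w = s
  · refine ⟨p.copy hws.symm rfl, ?_⟩
    intro z hz
    rw [Walk.support_copy] at hz
    exact Or.inl hz
  · have hadj : G.Adj w s := by
      rcases hw with rfl | rfl <;> rcases hs with rfl | rfl
      · exact absurd rfl hws
      · exact hxy
      · exact hxy.symm
      · exact absurd rfl hws
    refine ⟨Walk.cons hadj p, ?_⟩
    intro z hz
    rw [Walk.support_cons, List.mem_cons] at hz
    rcases hz with rfl | hz
    · exact Or.inr hw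
    · exact Or.inl hz

lemma uncontract_linked (hxy : G.Adj x y) {k : ℕ} {A B : Set V}
    (h : SetsLinked (contract G x y) k
      ((fun z => if z = y then x else z) '' A) ((fun z => if z = y then x else z) '' B)) :
    SetsLinked G k A B := by
  obtain ⟨a', b', P', -, -, haA, hbB, hpath, -, -, hdisj⟩ := h
  have hcney : ∀ z : V, (if z = y then x else z) ≠ y := by
    intro z
    split_ifs with h1
    · exact hxy.ne
    · exact h1
  have hstart : ∀ i, a' i ≠ y := by
    intro i
    obtain ⟨w, -, hw⟩ := haA i
    rw [← hw]
    exact hcney w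
  have hy' : ∀ i, ∀ z ∈ (P' i).support, z ≠ y := fun i => contract_no_y (P' i) (hstart i)
  have key : ∀ i, ∃ (u v : V) (p : G.Walk u v), u ∈ A ∧ v ∈ B ∧
      (∀ z ∈ p.support, z ∈ (P' i).support ∨ (x ∈ (P' i).support ∧ (z = x ∨ z = y))) := by
    intro i
    by_cases hxin : x ∈ (P' i).support
    · -- the path through the contracted vertex
      have ht_path : ((P' i).takeUntil x hxin).IsPath := (hpath i).takeUntil hxin
      have hd_path : ((P' i).dropUntil x hxin).IsPath := (hpath i).dropUntil hxin
      have htsub := (P' i).support_takeUntil_subset hxin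
      have hdsub := (P' i).support_dropUntil_subset hxin
      obtain ⟨xd, pd, hxdor, hpd⟩ := lift_from_x hxy ((P' i).dropUntil x hxin) hd_path
        (fun z hz => hy' i z (hdsub hz))
      obtain ⟨xt, pt, hxtor, hpt⟩ := lift_from_x hxy ((P' i).takeUntil x hxin).reverse
        ht_path.reverse (fun z hz => hy' i z (htsub (by
          rwa [Walk.support_reverse, List.mem_reverse] at hz)))
      obtain ⟨mid, hmid⟩ := pre_xy hxy xt pd hxdor hxtor
      -- W1 : a' i → b' i-side walk
      set W1 : G.Walk (a' i) (b' i) := pt.reverse.append mid with hW1def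
      have hW1 : ∀ z ∈ W1.support, z ∈ (P' i).support ∨ z = x ∨ z = y := by
        intro z hz
        rw [hW1def, Walk.mem_support_append_iff] at hz
        rcases hz with hz | hz
        · rw [Walk.support_reverse, List.mem_reverse] at hz
          rcases hpt z hz with rfl | hz
          · exact Or.inr hxtor
          · rw [Walk.support_reverse, List.mem_reverse] at hz
            exact Or.inl (htsub hz)
        · rcases hmid z hz with hz | hz | hz
          · rcases hpd z hz with rfl | hz
            · exact Or.inr hxdor
            · exact Or.inl (hdsub hz)
          · exact Or.inr (Or.inl hz)
          · exact Or.inr (Or.inr hz)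
      obtain ⟨wa, hwaA, hwa0⟩ := haA i
      obtain ⟨wb, hwbB, hwb0⟩ := hbB i
      have hwa : (if wa = y then x else wa) = a' i := hwa0
      have hwb : (if wb = y then x else wb) = b' i := hwb0
      -- adjust the start
      by_cases hway : wa = y
      · -- a' i = x, start from y
        have hax : a' i = x := by rw [← hwa, if_pos hway]
        by_cases hwby : wb = y
        · have hbx : b' i = x := by rw [← hwb, if_pos hwby]
          refine ⟨wa, wb, ((Walk.cons hxy.symm (W1.copy hax hbx)).append
            (Walk.cons hxy Walk.nil)).copy hway.symm hwby.symm, hwaA, hwbB, ?_⟩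
          intro z hz
          rw [Walk.support_copy, Walk.mem_support_append_iff] at hz
          rcases hz with hz | hz
          · rw [Walk.support_cons, List.mem_cons] at hz
            rcases hz with rfl | hz
            · exact Or.inr ⟨hxin, Or.inr rfl⟩
            · rw [Walk.support_copy] at hz
              rcases hW1 z hz with h' | h'
              · exact Or.inl h'
              · exact Or.inr ⟨hxin, h'⟩
          · rw [Walk.support_cons, List.mem_cons] at hz
            rcases hz with rfl | hz
            · exact Or.inr ⟨hxin, Or.inl rfl⟩
            · rw [Walk.support_nil, List.mem_singleton] at hz
              exact Or.inr ⟨hxin, Or.inr hz⟩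
        · have hbb : wb = b' i := by rw [← hwb, if_neg hwby]
          refine ⟨wa, wb, (Walk.cons hxy.symm (W1.copy hax rfl)).copy
            hway.symm hbb.symm, hwaA, hwbB, ?_⟩
          intro z hz
          rw [Walk.support_copy, Walk.support_cons, List.mem_cons] at hz
          rcases hz with rfl | hz
          · exact Or.inr ⟨hxin, Or.inr rfl⟩
          · rw [Walk.support_copy] at hz
            rcases hW1 z hz with h' | h'
            · exact Or.inl h'
            · exact Or.inr ⟨hxin, h'⟩
      · have haa : wa = a' i := by rw [← hwa, if_neg hway]
        by_cases hwby : wb = y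
        · have hbx : b' i = x := by rw [← hwb, if_pos hwby]
          refine ⟨wa, wb, ((W1.copy rfl hbx).append (Walk.cons hxy Walk.nil)).copy
            haa.symm hwby.symm, hwaA, hwbB, ?_⟩
          intro z hz
          rw [Walk.support_copy, Walk.mem_support_append_iff] at hz
          rcases hz with hz | hz
          · rw [Walk.support_copy] at hz
            rcases hW1 z hz with h' | h'
            · exact Or.inl h'
            · exact Or.inr ⟨hxin, h'⟩
          · rw [Walk.support_cons, List.mem_cons] at hz
            rcases hz with rfl | hz
            · exact Or.inr ⟨hxin, Or.inl rfl⟩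
            · rw [Walk.support_nil, List.mem_singleton] at hz
              exact Or.inr ⟨hxin, Or.inr hz⟩
        · have hbb : wb = b' i := by rw [← hwb, if_neg hwby]
          refine ⟨wa, wb, W1.copy haa.symm hbb.symm, hwaA, hwbB, ?_⟩
          intro z hz
          rw [Walk.support_copy] at hz
          rcases hW1 z hz with h' | h'
          · exact Or.inl h'
          · exact Or.inr ⟨hxin, h'⟩
    · -- x not on the path: lift directly
      have hx' : ∀ z ∈ (P' i).support, z ≠ x := fun z hz h' => hxin (h' ▸ hz)
      obtain ⟨p, hp⟩ := lift_no_x (P' i) hx' (hy' i)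
      have haii : a' i ∈ A := by
        obtain ⟨w, hwA, hw0⟩ := haA i
        have hw : (if w = y then x else w) = a' i := hw0
        by_cases hwy : w = y
        · exfalso
          rw [if_pos hwy] at hw
          exact hxin (hw ▸ (P' i).start_mem_support)
        · rw [if_neg hwy] at hw
          exact hw ▸ hwA
      have hbii : b' i ∈ B := by
        obtain ⟨w, hwB, hw0⟩ := hbB i
        have hw : (if w = y then x else w) = b' i := hw0
        by_cases hwy : w = y
        · exfalso
          rw [if_pos hwy] at hw
          exact hxin (hw ▸ (P' i).end_mem_support)
        · rw [if_neg hwy] at hw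
          exact hw ▸ hwB
      exact ⟨a' i, b' i, p, haii, hbii, fun z hz => Or.inl (hp ▸ hz)⟩
  choose u v p huA hvB hmem using key
  apply weak_to_linked u v p huA hvB
  intro i j hij z hzi hzj
  rcases hmem i z hzi with hi | ⟨hxi, hzxy⟩
  · rcases hmem j z hzj with hj | ⟨hxj, hzxy'⟩
    · exact hdisj i j hij z hi hj
    · rcases hzxy' with rfl | rfl
      · exact hdisj i j hij z hi hxj
      · exact hy' i z hi rfl
  · rcases hmem j z hzj with hj | ⟨hxj, hzxy'⟩
    · rcases hzxy with rfl | rfl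
      · exact hdisj i j hij z hxi hj
      · exact hy' j z hj rfl
    · exact hdisj i j hij x hxi hxj


end contraction

section mengerproof

/-- Transfer a walk along a subgraph relation. -/
lemma walk_le {G₁ G₂ : SimpleGraph V} (h : G₁ ≤ G₂) :
    ∀ {u v : V} (p : G₁.Walk u v), ∃ q : G₂.Walk u v, q.support = p.support := by
  intro u v p
  induction p with
  | nil => exact ⟨Walk.nil, rfl⟩
  | @cons c d e hadj p ih =>
      obtain ⟨q, hq⟩ := ih
      exact ⟨Walk.cons (h hadj) q, by rw [Walk.support_cons, Walk.support_cons, hq]⟩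

lemma linked_mono {G₁ G₂ : SimpleGraph V} (h : G₁ ≤ G₂) {k : ℕ} {A B : Set V}
    (hl : SetsLinked G₁ k A B) : SetsLinked G₂ k A B := by
  obtain ⟨a, b, P, -, -, ha, hb, -, -, -, hdisj⟩ := hl
  have := fun i => walk_le h (P i)
  choose Q hQ using this
  apply weak_to_linked a b Q ha hb
  intro i j hij z hzi hzj
  rw [hQ i] at hzi
  rw [hQ j] at hzj
  exact hdisj i j hij z hzi hzj

/-- Glue two linkages meeting in a small separator. -/
lemma glue [Finite V] {G : SimpleGraph V} {k : ℕ} {A B X : Set V}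
    (hSep : Sep G A B X) (hXk : X.ncard ≤ k)
    (h1 : SetsLinked G k A X) (h2 : SetsLinked G k X B) : SetsLinked G k A B := by
  classical
  obtain ⟨a, b₁, P, hainj, hb1inj, haA, hb1X, hPpath, hPclA, hPclX, hPdisj⟩ := h1
  obtain ⟨a₂, b₂, Q, ha2inj, hb2inj, ha2X, hb2B, hQpath, hQclX, hQclB, hQdisj⟩ := h2
  have hcard : (Set.range b₁).ncard = k := by
    rw [← Set.image_univ, Set.ncard_image_of_injective _ hb1inj, Set.ncard_univ,
      Nat.card_eq_fintype_card, Fintype.card_fin]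
  have hrange : Set.range b₁ = X :=
    Set.eq_of_subset_of_ncard_le (fun z hz => by obtain ⟨i, rfl⟩ := hz; exact hb1X i)
      (le_trans hXk hcard.ge) (Set.toFinite _)
  have hpre : ∀ j, ∃ i, b₁ i = a₂ j := fun j => by
    have : a₂ j ∈ Set.range b₁ := hrange ▸ ha2X j
    exact this
  choose σ hσ using hpre
  have hσinj : Function.Injective σ := by
    intro j j' hjj
    apply ha2inj
    rw [← hσ j, ← hσ j', hjj]
  have hσbij : Function.Bijective σ := Finite.injective_iff_bijective.mp hσinj
  set e := Equiv.ofBijective σ hσbij with he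
  set τ := e.symm with hτ
  have hba : ∀ i, a₂ (τ i) = b₁ i := by
    intro i
    rw [← hσ (τ i)]
    congr 1
    exact e.apply_symm_apply i
  have hτinj : Function.Injective τ := e.symm.injective
  -- cross intersection property
  have cross : ∀ i j z, z ∈ (P i).support → z ∈ (Q j).support → z = b₁ i ∧ z = a₂ j := by
    intro i j z hzP hzQ
    by_cases hzX : z ∈ X
    · exact ⟨hPclX i z hzP hzX, hQclX j z hzQ hzX⟩
    · exfalso
      obtain ⟨w, q₁, hw, hpre1, -, -⟩ := exists_firstHit {z} (P i) ⟨z, hzP, rfl⟩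
      rw [mem_singleton_iff] at hw
      subst hw
      have hq1X : ∀ t ∈ q₁.support, t ∉ X := by
        intro t ht htX
        have htb : t = b₁ i := hPclX i t (hpre1.sublist.mem ht) htX
        subst htb
        have heq := prefix_eq_of_getLast_mem hpre1 ((Walk.isPath_def _).mp (hPpath i))
          (getLast?_support (P i)) ht
        have hlast : q₁.support.getLast? = some w := getLast?_support q₁
        rw [heq, getLast?_support (P i)] at hlast
        have : b₁ i = w := by injection hlast
        exact hzX (this ▸ htX)
      obtain ⟨w₂, q₂, hw₂, hpre2, -, -⟩ := exists_firstHit {w} (Q j).reverse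
        ⟨w, by rw [Walk.support_reverse, List.mem_reverse]; exact hzQ, rfl⟩
      rw [mem_singleton_iff] at hw₂
      subst hw₂
      have hq2X : ∀ t ∈ q₂.support, t ∉ X := by
        intro t ht htX
        have htb : t = a₂ j := hQclX j t (by
          have := hpre2.sublist.mem ht
          rwa [Walk.support_reverse, List.mem_reverse] at this) htX
        subst htb
        have heq := prefix_eq_of_getLast_mem hpre2
          ((Walk.isPath_def _).mp (hQpath j).reverse) (getLast?_support (Q j).reverse) ht
        have hlast : q₂.support.getLast? = some w₂ := getLast?_support q₂
        rw [heq, getLast?_support ((Q j).reverse)] at hlast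
        have : a₂ j = w₂ := by injection hlast
        exact hzX (this ▸ htX)
      obtain ⟨zz, hzzX, hzzsup⟩ := hSep (a i) (haA i) (b₂ j) (hb2B j) (q₁.append q₂.reverse)
      rw [Walk.mem_support_append_iff] at hzzsup
      rcases hzzsup with h' | h'
      · exact hq1X zz h' hzzX
      · rw [Walk.support_reverse, List.mem_reverse] at h'
        exact hq2X zz h' hzzX
  -- combined walks
  set R : ∀ i, G.Walk (a i) (b₂ (τ i)) := fun i => (P i).append ((Q (τ i)).copy (hba i) rfl)
    with hRdef
  apply weak_to_linked a (fun i => b₂ (τ i)) R haA (fun i => hb2B (τ i))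
  intro i j hij z hzi hzj
  rw [hRdef, Walk.mem_support_append_iff, Walk.support_copy] at hzi hzj
  rcases hzi with hzi | hzi <;> rcases hzj with hzj | hzj
  · exact hPdisj i j hij z hzi hzj
  · obtain ⟨h1', h2'⟩ := cross i (τ j) z hzi hzj
    rw [hba j] at h2'
    exact hij (hb1inj (h1'.symm.trans h2'))
  · obtain ⟨h1', h2'⟩ := cross j (τ i) z hzj hzi
    rw [hba i] at h2'
    exact hij (hb1inj (h2'.symm.trans h1'))
  · exact hQdisj (τ i) (τ j) (fun h => hij (hτinj h)) z hzi hzj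


lemma menger_base [Finite V] {G : SimpleGraph V} {A B : Set V} {k : ℕ}
    (hnoedge : ∀ u v : V, ¬ G.Adj u v)
    (hcut : ∀ X : Set V, Sep G A B X → k ≤ X.ncard) : SetsLinked G k A B := by
  classical
  have hAB : Sep G A B (A ∩ B) := by
    intro a ha b hb p
    cases p with
    | nil => exact ⟨a, ⟨ha, hb⟩, Walk.start_mem_support _⟩
    | cons h q => exact absurd h (hnoedge _ _)
  have hk := hcut _ hAB
  obtain ⟨t, hts, htcard⟩ := Set.exists_subset_card_eq hk
  have htfin : t.Finite := Set.Finite.subset (Set.toFinite _) hts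
  have : Finite t := htfin
  have hcard : Nat.card t = k := by rw [Nat.card_coe_set_eq]; exact htcard
  have : Fintype t := htfin.fintype
  have hcard' : Fintype.card t = k := by rwa [Nat.card_eq_fintype_card] at hcard
  set f : Fin k → V := fun i => ((Fintype.equivFinOfCardEq hcard').symm i : V) with hf
  have hfinj : Function.Injective f := by
    intro i j hij
    exact (Fintype.equivFinOfCardEq hcard').symm.injective (Subtype.ext hij)
  have hfmem : ∀ i, f i ∈ A ∩ B := fun i => hts ((Fintype.equivFinOfCardEq hcard').symm i).2
  refine ⟨f, f, fun _ => Walk.nil, hfinj, hfinj, fun i => (hfmem i).1, fun i => (hfmem i).2,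
    fun _ => Walk.IsPath.nil, ?_, ?_, ?_⟩
  · intro i z hz _
    rw [Walk.support_nil, List.mem_singleton] at hz
    exact hz
  · intro i z hz _
    rw [Walk.support_nil, List.mem_singleton] at hz
    exact hz
  · intro i j hij z hzi hzj
    rw [Walk.support_nil, List.mem_singleton] at hzi hzj
    exact hij (hfinj (hzi ▸ hzj ▸ rfl))

theorem menger [Fintype V] : ∀ (n : ℕ) (G : SimpleGraph V) (A B : Set V) (k : ℕ),
    G.edgeSet.ncard ≤ n → (∀ X : Set V, Sep G A B X → k ≤ X.ncard) →
    SetsLinked G k A B := by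
  classical
  intro n
  induction n with
  | zero =>
      intro G A B k hG hcut
      refine menger_base ?_ hcut
      intro u v huv
      have : G.edgeSet = ∅ := by
        rw [← Set.ncard_eq_zero (Set.toFinite _)]
        omega
      exact Set.eq_empty_iff_forall_notMem.mp this _ ((SimpleGraph.mem_edgeSet G).mpr huv)
  | succ n ih =>
      intro G A B k hG hcut
      by_cases hedge : ∃ u v : V, G.Adj u v
      · obtain ⟨x, y, hxy⟩ := hedge
        by_cases hcontr : ∀ X : Set V,
            Sep (contract G x y) ((fun z => if z = y then x else z) '' A)
              ((fun z => if z = y then x else z) '' B) X → k ≤ X.ncard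
        · -- contraction still has large cuts: recurse and uncontract
          have hle : (contract G x y).edgeSet.ncard ≤ n := by
            have := contract_edgeSet_lt (G := G) hxy
            omega
          exact uncontract_linked hxy (ih (contract G x y) _ _ k hle hcontr)
        · push_neg at hcontr
          obtain ⟨Y', hY'sep, hY'lt⟩ := hcontr
          have hcney : ∀ z : V, (if z = y then x else z) ≠ y := by
            intro z
            split_ifs with h1
            · exact hxy.ne
            · exact h1
          set Y'' := Y' \ {y} with hY''
          have hY''sep : Sep (contract G x y) ((fun z => if z = y then x else z) '' A)
              ((fun z => if z = y then x else z) '' B) Y'' := by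
            intro a ha b hb p
            obtain ⟨z, hzY, hzsup⟩ := hY'sep a ha b hb p
            refine ⟨z, ⟨hzY, ?_⟩, hzsup⟩
            have hay : a ≠ y := by
              obtain ⟨w, -, hw⟩ := ha
              rw [← hw]
              exact hcney w
            exact contract_no_y p hay z hzsup
          have hY''lt : Y''.ncard < k :=
            lt_of_le_of_lt (Set.ncard_le_ncard Set.diff_subset (Set.toFinite _)) hY'lt
          have hxY : x ∈ Y'' := by
            by_contra hxY
            have hsep : Sep G A B Y'' := by
              intro a ha b hb p
              obtain ⟨q, hq⟩ := contract_walk hxy p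
              obtain ⟨z, hzY, hzsup⟩ := hY''sep _ ⟨a, ha, rfl⟩ _ ⟨b, hb, rfl⟩ q
              obtain ⟨w, hwsup, hcw⟩ := hq z hzsup
              by_cases hwy : w = y
              · exfalso
                rw [if_pos hwy] at hcw
                exact hxY (hcw ▸ hzY)
              · rw [if_neg hwy] at hcw
                exact ⟨z, hzY, hcw ▸ hwsup⟩
            have := hcut _ hsep
            omega
          set X := insert y Y'' with hX
          have hXsep : Sep G A B X := by
            intro a ha b hb p
            by_cases hyp : y ∈ p.support
            · exact ⟨y, Set.mem_insert _ _, hyp⟩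
            · obtain ⟨q, hq⟩ := contract_walk hxy p
              obtain ⟨z, hzY, hzsup⟩ := hY''sep _ ⟨a, ha, rfl⟩ _ ⟨b, hb, rfl⟩ q
              obtain ⟨w, hwsup, hcw⟩ := hq z hzsup
              by_cases hwy : w = y
              · exact absurd (hwy ▸ hwsup) hyp
              · rw [if_neg hwy] at hcw
                exact ⟨z, Set.mem_insert_of_mem _ hzY, hcw ▸ hwsup⟩
          have hXk : X.ncard ≤ k := by
            have h2 := Set.ncard_insert_le y Y''
            rw [← hX] at h2
            omega
          have hyX : y ∈ X := Set.mem_insert _ _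
          have hxX : x ∈ X := Set.mem_insert_of_mem _ hxY
          set Gd := G.deleteEdges {s(x,y)} with hGd
          have hdel_le : Gd.edgeSet.ncard ≤ n := by
            have h2 := deleteEdges_edgeSet_lt (G := G) hxy
            rw [← hGd] at h2
            omega
          -- first-hit prefixes avoid the deleted edge
          have hprefix : ∀ (a b : V) (p : G.Walk a b), a ∈ A → b ∈ B →
              ∃ (w : V) (q : Gd.Walk a w), w ∈ X ∧ ∀ z ∈ q.support, z ∈ p.support := by
            intro a b p ha hb
            obtain ⟨z0, hz0X, hz0sup⟩ := hXsep a ha b hb p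
            obtain ⟨w, q, hwX, hqpre, honce, -⟩ := exists_firstHit X p ⟨z0, hz0sup, hz0X⟩
            have hqe : ∀ e ∈ q.edges, e ∉ ({s(x,y)} : Set (Sym2 V)) := by
              intro e he hecon
              rw [Set.mem_singleton_iff] at hecon
              subst hecon
              have hxs : x ∈ q.support := q.fst_mem_support_of_mem_edges he
              have hys : y ∈ q.support := q.snd_mem_support_of_mem_edges he
              exact hxy.ne ((honce x hxs hxX).trans (honce y hys hyX).symm)
            refine ⟨w, q.toDeleteEdges _ hqe, hwX, ?_⟩
            intro z hz
            rw [Walk.support_transfer] at hz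
            exact hqpre.sublist.mem hz
          have hsuffix : ∀ (a b : V) (p : G.Walk a b), a ∈ A → b ∈ B →
              ∃ (w : V) (q : Gd.Walk w b), w ∈ X ∧ ∀ z ∈ q.support, z ∈ p.support := by
            intro a b p ha hb
            obtain ⟨z0, hz0X, hz0sup⟩ := hXsep a ha b hb p
            obtain ⟨w, q, hwX, hqpre, honce, -⟩ := exists_firstHit X p.reverse
              ⟨z0, by rw [Walk.support_reverse, List.mem_reverse]; exact hz0sup, hz0X⟩
            have hqe : ∀ e ∈ q.edges, e ∉ ({s(x,y)} : Set (Sym2 V)) := by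
              intro e he hecon
              rw [Set.mem_singleton_iff] at hecon
              subst hecon
              have hxs : x ∈ q.support := q.fst_mem_support_of_mem_edges he
              have hys : y ∈ q.support := q.snd_mem_support_of_mem_edges he
              exact hxy.ne ((honce x hxs hxX).trans (honce y hys hyX).symm)
            refine ⟨w, (q.toDeleteEdges _ hqe).reverse, hwX, ?_⟩
            intro z hz
            rw [Walk.support_reverse, List.mem_reverse, Walk.support_transfer] at hz
            have := hqpre.sublist.mem hz
            rwa [Walk.support_reverse, List.mem_reverse] at this
          have hcutA : ∀ Z : Set V, Sep Gd A X Z → k ≤ Z.ncard := by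
            intro Z hZ
            apply hcut
            intro a ha b hb p
            obtain ⟨w, q, hwX, hqsub⟩ := hprefix a b p ha hb
            obtain ⟨z, hzZ, hzsup⟩ := hZ a ha w hwX q
            exact ⟨z, hzZ, hqsub z hzsup⟩
          have hcutB : ∀ Z : Set V, Sep Gd X B Z → k ≤ Z.ncard := by
            intro Z hZ
            apply hcut
            intro a ha b hb p
            obtain ⟨w, q, hwX, hqsub⟩ := hsuffix a b p ha hb
            obtain ⟨z, hzZ, hzsup⟩ := hZ w hwX b hb q
            exact ⟨z, hzZ, hqsub z hzsup⟩
          have l1 := ih Gd A X k hdel_le hcutA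
          have l2 := ih Gd X B k hdel_le hcutB
          have hSepd : Sep Gd A B X := by
            intro a ha b hb p
            obtain ⟨q, hq⟩ := walk_le (G.deleteEdges_le _) p
            obtain ⟨z, hzX, hzsup⟩ := hXsep a ha b hb q
            rw [hq] at hzsup
            exact ⟨z, hzX, hzsup⟩
          exact linked_mono (G.deleteEdges_le _) (glue hSepd hXk l1 l2)
      · push_neg at hedge
        exact menger_base hedge hcut


end mengerproof

section stargraph

/-- Auxiliary graph: `G` plus two apex vertices `inr false` (joined to `U₁`)
and `inr true` (joined to `U₂`). -/
def star (G : SimpleGraph V) (U₁ U₂ : Set V) : SimpleGraph (V ⊕ Bool) where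
  Adj w₁ w₂ :=
    match w₁, w₂ with
    | inl u, inl v => G.Adj u v
    | inl u, inr b => (b = false ∧ u ∈ U₁) ∨ (b = true ∧ u ∈ U₂)
    | inr b, inl u => (b = false ∧ u ∈ U₁) ∨ (b = true ∧ u ∈ U₂)
    | inr _, inr _ => False
  symm := by
    constructor
    rintro (u | b) (v | c) h
    · exact (show G.Adj u v from h).symm
    · exact h
    · exact h
    · exact h.elim
  loopless := by
    constructor
    rintro (u | b) h
    · exact G.loopless.irrefl u h
    · exact h

variable {G : SimpleGraph V} {U₁ U₂ : Set V}

lemma star_adj_inl {u v : V} (h : G.Adj u v) : (star G U₁ U₂).Adj (inl u) (inl v) := h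

lemma star_adj_false {u : V} (h : u ∈ U₁) : (star G U₁ U₂).Adj (inr false) (inl u) :=
  Or.inl ⟨rfl, h⟩

lemma star_adj_true {u : V} (h : u ∈ U₂) : (star G U₁ U₂).Adj (inl u) (inr true) :=
  Or.inr ⟨rfl, h⟩

/-- Embed a `G`-walk into the star graph. -/
lemma star_map : ∀ {u v : V} (p : G.Walk u v),
    ∃ q : (star G U₁ U₂).Walk (inl u) (inl v), q.support = p.support.map inl := by
  intro u v p
  induction p with
  | nil => exact ⟨Walk.nil, by simp⟩
  | @cons c d e hadj p ih =>
      obtain ⟨q, hq⟩ := ih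
      exact ⟨Walk.cons (star_adj_inl hadj) q, by
        rw [Walk.support_cons, Walk.support_cons, hq, List.map_cons]⟩

/-- Project a star-walk whose support is all `inl` back to `G`. -/
lemma star_core : ∀ {w₁ w₂ : V ⊕ Bool} (q : (star G U₁ U₂).Walk w₁ w₂),
    (∀ z ∈ q.support, ∃ v, z = inl v) → ∀ {u w : V}, w₁ = inl u → w₂ = inl w →
    ∃ p : G.Walk u w, q.support = p.support.map inl := by
  intro w₁ w₂ q
  induction q with
  | nil =>
      intro h u w h1 h2
      subst h1
      have h3 : u = w := by injection h2
      subst h3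
      exact ⟨Walk.nil, by simp⟩
  | @cons c d e hadj q ih =>
      intro h u w h1 h2
      subst h1
      obtain ⟨s, hs⟩ := h d (by rw [Walk.support_cons]; exact List.mem_cons_of_mem _ q.start_mem_support)
      subst hs
      have hadj' : G.Adj u s := hadj
      obtain ⟨p, hp⟩ := ih (fun z hz => h z (by rw [Walk.support_cons]; exact List.mem_cons_of_mem _ hz)) rfl h2
      exact ⟨Walk.cons hadj' p, by rw [Walk.support_cons, Walk.support_cons, hp, List.map_cons]⟩

/-- Project a star-path from `inl u` to an apex `inr c` back to `G`. -/
lemma star_coreR {c : Bool} {u : V} (q : (star G U₁ U₂).Walk (inl u) (inr c))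
    (hq : q.IsPath) (hno : (inr (!c) : V ⊕ Bool) ∉ q.support) :
    ∃ (u₂ : V) (p : G.Walk u u₂),
      ((c = false ∧ u₂ ∈ U₁) ∨ (c = true ∧ u₂ ∈ U₂)) ∧ p.IsPath ∧
      (∀ z : V, (inl z : V ⊕ Bool) ∈ q.support ↔ z ∈ p.support) := by
  have hmemrev : ∀ z : V ⊕ Bool, z ∈ q.reverse.support ↔ z ∈ q.support := by
    intro z
    rw [Walk.support_reverse, List.mem_reverse]
  have hqrev : q.reverse.IsPath := hq.reverse
  cases hr : q.reverse with
  | @cons _ m _ hadj rest =>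
  rcases m with s | b
  · -- m = inl s
    have hadj2 : (star G U₁ U₂).Adj (inl s) (inr c) := hadj.symm
    have hrest_path : rest.IsPath := by
      have := hr ▸ hqrev
      exact ((Walk.cons_isPath_iff _ _).mp this).1
    have hnocr : (inr c : V ⊕ Bool) ∉ rest.support := by
      have := hr ▸ hqrev
      exact ((Walk.cons_isPath_iff _ _).mp this).2
    have hrest_sub : ∀ z, z ∈ rest.support → z ∈ q.support := by
      intro z hz
      rw [← hmemrev z, hr, Walk.support_cons]
      exact List.mem_cons_of_mem _ hz
    have hallinl : ∀ z ∈ rest.support, ∃ v, z = inl v := by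
      intro z hz
      rcases z with v | b
      · exact ⟨v, rfl⟩
      · exfalso
        rcases Bool.eq_or_eq_not b c with rfl | rfl
        · exact hnocr hz
        · exact hno (hrest_sub _ hz)
    obtain ⟨p', hp'⟩ := star_core rest hallinl rfl rfl
    have hp'path : p'.IsPath := by
      rw [Walk.isPath_def _]
      have := (Walk.isPath_def _).mp hrest_path
      rw [hp'] at this
      exact this.of_map
    refine ⟨s, p'.reverse, ?_, hp'path.reverse, ?_⟩
    · rcases hadj2 with ⟨h1, h2⟩ | ⟨h1, h2⟩
      · exact Or.inl ⟨h1, h2⟩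
      · exact Or.inr ⟨h1, h2⟩
    · intro z
      rw [← hmemrev (inl z), hr, Walk.support_cons, List.mem_cons]
      constructor
      · rintro (h' | h')
        · exact absurd h' (by simp)
        · rw [hp', List.mem_map] at h'
          obtain ⟨v', hv', hveq⟩ := h'
          have : v' = z := by injection hveq
          rw [Walk.support_reverse, List.mem_reverse]
          exact this ▸ hv'
      · intro h'
        rw [Walk.support_reverse, List.mem_reverse] at h'
        right
        rw [hp', List.mem_map]
        exact ⟨z, h', rfl⟩
  · exact hadj.elim


end stargraph

end MengerAux

open MengerAux

/-- Strengthened Perfect's Theorem for two sets (Theorem 2.2). -/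
theorem setsLinked_extend_one {V : Type*} [Fintype V] (G : SimpleGraph V)
    (k : ℕ) (hk : 1 ≤ k) (S₁ S₂ T₁ T₂ : Set V)
    (hdisj : Disjoint S₁ S₂)
    (hS : SetsLinked G k S₁ S₂)
    (hT₁ : T₁ ⊆ S₁) (hT₂ : T₂ ⊆ S₂)
    (hT₁card : T₁.ncard = k - 1) (hT₂card : T₂.ncard = k - 1)
    (hT : SetsLinked G (k - 1) T₁ T₂) :
    ∃ s₁ ∈ S₁ \ T₁, ∃ s₂ ∈ S₂ \ T₂,
      SetsLinked G k (T₁ ∪ {s₁}) (T₂ ∪ {s₂}) := by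
  classical
  set U₁ := S₁ \ T₁ with hU₁
  set U₂ := S₂ \ T₂ with hU₂
  set GS := star G U₁ U₂ with hGS
  set A : Set (V ⊕ Bool) := (inl '' T₁) ∪ {inr false} with hA
  set B : Set (V ⊕ Bool) := (inl '' T₂) ∪ {inr true} with hB
  -- the cut condition in the star graph
  have hcut : ∀ X : Set (V ⊕ Bool), Sep GS A B X → k ≤ X.ncard := by
    intro X hXsep
    have hmemU₁ : ∀ w : V, w ∈ S₁ → w ∉ T₁ → w ∈ U₁ := by
      intro w hw1 hw2
      rw [hU₁]
      exact ⟨hw1, hw2⟩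
    have hmemU₂ : ∀ w : V, w ∈ S₂ → w ∉ T₂ → w ∈ U₂ := by
      intro w hw1 hw2
      rw [hU₂]
      exact ⟨hw1, hw2⟩
    obtain ⟨aS, bS, P, -, -, haS, hbS, -, -, -, hPdisj⟩ := hS
    obtain ⟨aT, bT, Q, -, -, haT, hbT, -, -, -, hQdisj⟩ := hT
    by_cases hfX : (inr false : V ⊕ Bool) ∈ X ∨ (inr true : V ⊕ Bool) ∈ X
    · -- use the T-linkage plus an apex vertex
      have hQhit : ∀ j : Fin (k-1), ∃ uj, (inl uj : V ⊕ Bool) ∈ X ∧ uj ∈ (Q j).support := by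
        intro j
        obtain ⟨qj, hqj⟩ := star_map (G := G) (U₁ := U₁) (U₂ := U₂) (Q j)
        have hstart : (inl (aT j) : V ⊕ Bool) ∈ A := Or.inl ⟨aT j, haT j, rfl⟩
        have hend : (inl (bT j) : V ⊕ Bool) ∈ B := Or.inl ⟨bT j, hbT j, rfl⟩
        obtain ⟨z, hzX, hzsup⟩ := hXsep _ hstart _ hend qj
        rw [hqj, List.mem_map] at hzsup
        obtain ⟨uj, hu, rfl⟩ := hzsup
        exact ⟨uj, hzX, hu⟩
      choose uQ huQX huQsup using hQhit
      have huQinj : Function.Injective uQ := by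
        intro j j' hjj
        by_contra hne
        exact hQdisj j j' hne (uQ j) (huQsup j) (hjj ▸ huQsup j')
      obtain ⟨e₀, he₀⟩ : ∃ e₀ : V ⊕ Bool, e₀ ∈ X ∧ ∀ v : V, e₀ ≠ inl v := by
        rcases hfX with h | h
        · exact ⟨inr false, h, fun v h' => by simp at h'⟩
        · exact ⟨inr true, h, fun v h' => by simp at h'⟩
      have hsub : insert e₀ ((inl : V → V ⊕ Bool) '' Set.range uQ) ⊆ X := by
        intro z hz
        rcases hz with rfl | ⟨w, ⟨j, rfl⟩, rfl⟩
        · exact he₀.1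
        · exact huQX j
      have hcard1 : ((inl : V → V ⊕ Bool) '' Set.range uQ).ncard = k - 1 := by
        rw [Set.ncard_image_of_injective _ Sum.inl_injective, ← Set.image_univ,
          Set.ncard_image_of_injective _ huQinj, Set.ncard_univ, Nat.card_eq_fintype_card,
          Fintype.card_fin]
      have hcard2 : (insert e₀ ((inl : V → V ⊕ Bool) '' Set.range uQ)).ncard = k := by
        rw [Set.ncard_insert_of_notMem (by
          rintro ⟨w, -, hw⟩
          exact he₀.2 w hw.symm) (Set.toFinite _), hcard1]
        omega
      calc k = _ := hcard2.symm
        _ ≤ X.ncard := Set.ncard_le_ncard hsub (Set.toFinite _)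
    · -- use the S-linkage extended by apex edges
      push_neg at hfX
      have hPhit : ∀ i : Fin k, ∃ ui, (inl ui : V ⊕ Bool) ∈ X ∧ ui ∈ (P i).support := by
        intro i
        obtain ⟨pi, hpi⟩ := star_map (G := G) (U₁ := U₁) (U₂ := U₂) (P i)
        have hπ : ∃ (w₁ w₂ : V ⊕ Bool) (π : GS.Walk w₁ w₂), w₁ ∈ A ∧ w₂ ∈ B ∧
            ∀ z ∈ π.support, z = inr false ∨ z = inr true ∨
              ∃ v' ∈ (P i).support, z = inl v' := by
          have hsup1 : ∀ z ∈ pi.support, ∃ v' ∈ (P i).support, z = (inl v' : V ⊕ Bool) := by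
            intro z hz
            rw [hpi, List.mem_map] at hz
            obtain ⟨v', hv', rfl⟩ := hz
            exact ⟨v', hv', rfl⟩
          by_cases h1 : aS i ∈ T₁ <;> by_cases h2 : bS i ∈ T₂
          · exact ⟨_, _, pi, Or.inl ⟨aS i, h1, rfl⟩, Or.inl ⟨bS i, h2, rfl⟩,
              fun z hz => Or.inr (Or.inr (hsup1 z hz))⟩
          · refine ⟨_, _, pi.concat (star_adj_true (hmemU₂ _ (hbS i) h2)),
              Or.inl ⟨aS i, h1, rfl⟩, Or.inr rfl, ?_⟩
            intro z hz
            rw [Walk.support_concat, List.mem_append] at hz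
            rcases hz with hz | hz
            · exact Or.inr (Or.inr (hsup1 z hz))
            · rw [List.mem_singleton] at hz
              exact Or.inr (Or.inl hz)
          · refine ⟨_, _, Walk.cons (star_adj_false (hmemU₁ _ (haS i) h1)) pi,
              Or.inr rfl, Or.inl ⟨bS i, h2, rfl⟩, ?_⟩
            intro z hz
            rw [Walk.support_cons, List.mem_cons] at hz
            rcases hz with rfl | hz
            · exact Or.inl rfl
            · exact Or.inr (Or.inr (hsup1 z hz))
          · refine ⟨_, _, (Walk.cons (star_adj_false (hmemU₁ _ (haS i) h1)) pi).concat
              (star_adj_true (hmemU₂ _ (hbS i) h2)), Or.inr rfl, Or.inr rfl, ?_⟩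
            intro z hz
            rw [Walk.support_concat, List.mem_append] at hz
            rcases hz with hz | hz
            · rw [Walk.support_cons, List.mem_cons] at hz
              rcases hz with rfl | hz
              · exact Or.inl rfl
              · exact Or.inr (Or.inr (hsup1 z hz))
            · rw [List.mem_singleton] at hz
              exact Or.inr (Or.inl hz)
        obtain ⟨w₁, w₂, π, hw₁, hw₂, hπsup⟩ := hπ
        obtain ⟨z, hzX, hzsup⟩ := hXsep _ hw₁ _ hw₂ π
        rcases hπsup z hzsup with rfl | rfl | ⟨v', hv', rfl⟩
        · exact absurd hzX hfX.1
        · exact absurd hzX hfX.2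
        · exact ⟨v', hzX, hv'⟩
      choose uP huPX huPsup using hPhit
      have huPinj : Function.Injective uP := by
        intro i i' hii
        by_contra hne
        exact hPdisj i i' hne (uP i) (huPsup i) (hii ▸ huPsup i')
      have hsub : (inl : V → V ⊕ Bool) '' Set.range uP ⊆ X := by
        rintro z ⟨w, ⟨i, rfl⟩, rfl⟩
        exact huPX i
      have hcard1 : ((inl : V → V ⊕ Bool) '' Set.range uP).ncard = k := by
        rw [Set.ncard_image_of_injective _ Sum.inl_injective, ← Set.image_univ,
          Set.ncard_image_of_injective _ huPinj, Set.ncard_univ, Nat.card_eq_fintype_card,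
          Fintype.card_fin]
      calc k = _ := hcard1.symm
        _ ≤ X.ncard := Set.ncard_le_ncard hsub (Set.toFinite _)
  -- apply Menger in the star graph
  obtain ⟨a', b', π, hainj, hbinj, haA, hbB, hπpath, hclA, hclB, hπdisj⟩ :=
    menger (GS.edgeSet.ncard) GS A B k le_rfl hcut
  -- the designated indices
  have hrangeA : Set.range a' = A := by
    refine Set.eq_of_subset_of_ncard_le (fun z hz => by obtain ⟨i, rfl⟩ := hz; exact haA i)
      ?_ (Set.toFinite _)
    have h1 : A.ncard ≤ k := by
      rw [hA, Set.union_singleton]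
      have h2 := Set.ncard_insert_le (inr false : V ⊕ Bool) ((inl : V → V ⊕ Bool) '' T₁)
      rw [Set.ncard_image_of_injective _ Sum.inl_injective, hT₁card] at h2
      omega
    have h3 : (Set.range a').ncard = k := by
      rw [← Set.image_univ, Set.ncard_image_of_injective _ hainj, Set.ncard_univ,
        Nat.card_eq_fintype_card, Fintype.card_fin]
    omega
  have hrangeB : Set.range b' = B := by
    refine Set.eq_of_subset_of_ncard_le (fun z hz => by obtain ⟨i, rfl⟩ := hz; exact hbB i)
      ?_ (Set.toFinite _)
    have h1 : B.ncard ≤ k := by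
      rw [hB, Set.union_singleton]
      have h2 := Set.ncard_insert_le (inr true : V ⊕ Bool) ((inl : V → V ⊕ Bool) '' T₂)
      rw [Set.ncard_image_of_injective _ Sum.inl_injective, hT₂card] at h2
      omega
    have h3 : (Set.range b').ncard = k := by
      rw [← Set.image_univ, Set.ncard_image_of_injective _ hbinj, Set.ncard_univ,
        Nat.card_eq_fintype_card, Fintype.card_fin]
    omega
  obtain ⟨i₀, hi₀⟩ : ∃ i₀, a' i₀ = inr false := by
    have : (inr false : V ⊕ Bool) ∈ Set.range a' := hrangeA ▸ Or.inr rfl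
    exact this
  obtain ⟨j₀, hj₀⟩ : ∃ j₀, b' j₀ = inr true := by
    have : (inr true : V ⊕ Bool) ∈ Set.range b' := hrangeB ▸ Or.inr rfl
    exact this
  -- extraction of each path
  have key : ∀ i, ∃ (u v : V) (p : G.Walk u v), p.IsPath ∧
      (∀ z : V, (inl z : V ⊕ Bool) ∈ (π i).support ↔ z ∈ p.support) ∧
      ((a' i = inl u ∧ u ∈ T₁) ∨ (a' i = inr false ∧ u ∈ U₁)) ∧
      ((b' i = inl v ∧ v ∈ T₂) ∨ (b' i = inr true ∧ v ∈ U₂)) := by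
    intro i
    have hnoF : ∀ (h : a' i ≠ inr false), (inr false : V ⊕ Bool) ∉ (π i).support := by
      intro hne hmem
      exact hne (hclA i _ hmem (Or.inr rfl)).symm
    have hnoT : ∀ (h : b' i ≠ inr true), (inr true : V ⊕ Bool) ∉ (π i).support := by
      intro hne hmem
      exact hne (hclB i _ hmem (Or.inr rfl)).symm
    rcases haA i with ⟨t₁, ht₁, ha⟩ | ha <;> rcases hbB i with ⟨t₂, ht₂, hb⟩ | hb
    · -- both inl: all-inl path
      have hall : ∀ z ∈ (π i).support, ∃ v, z = (inl v : V ⊕ Bool) := by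
        intro z hz
        rcases z with v | bb
        · exact ⟨v, rfl⟩
        · exfalso
          cases bb
          · exact hnoF (fun h => by rw [h] at ha; exact absurd ha (by simp)) hz
          · exact hnoT (fun h => by rw [h] at hb; exact absurd hb (by simp)) hz
      obtain ⟨p, hp⟩ := star_core (π i) hall ha.symm hb.symm
      refine ⟨t₁, t₂, p, ?_, ?_, Or.inl ⟨ha.symm, ht₁⟩, Or.inl ⟨hb.symm, ht₂⟩⟩
      · rw [Walk.isPath_def _]
        have := (Walk.isPath_def _).mp (hπpath i)
        rw [hp] at this
        exact this.of_map
      · intro z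
        rw [hp, List.mem_map]
        constructor
        · rintro ⟨v', hv', hveq⟩
          have : v' = z := by injection hveq
          exact this ▸ hv'
        · intro h'
          exact ⟨z, h', rfl⟩
    · -- a' inl, b' = inr true
      rw [Set.mem_singleton_iff] at hb
      obtain ⟨u₂, p, hmem, hppath, hpiff⟩ := star_coreR ((π i).copy ha.symm hb)
        ((Walk.isPath_copy _ _ _).mpr (hπpath i)) (by
          rw [Walk.support_copy]
          exact hnoF (fun h => by rw [h] at ha; exact absurd ha (by simp)))
      rcases hmem with ⟨hc, -⟩ | ⟨-, hu₂⟩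
      · exact absurd hc (by simp)
      refine ⟨t₁, u₂, p, hppath, ?_, Or.inl ⟨ha.symm, ht₁⟩, Or.inr ⟨hb, hu₂⟩⟩
      intro z
      rw [← hpiff z, Walk.support_copy]
    · -- a' = inr false, b' inl : reverse
      rw [Set.mem_singleton_iff] at ha
      obtain ⟨u₂, p, hmem, hppath, hpiff⟩ := star_coreR ((π i).copy ha hb.symm).reverse
        ((Walk.isPath_copy _ _ _).mpr (hπpath i)).reverse (by
          rw [Walk.support_reverse, List.mem_reverse, Walk.support_copy]
          exact hnoT (fun h => by rw [h] at hb; exact absurd hb (by simp)))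
      rcases hmem with ⟨-, hu₂⟩ | ⟨hc, -⟩
      swap
      · exact absurd hc (by simp)
      refine ⟨u₂, t₂, p.reverse, hppath.reverse, ?_, Or.inr ⟨ha, hu₂⟩, Or.inl ⟨hb.symm, ht₂⟩⟩
      intro z
      rw [Walk.support_reverse, List.mem_reverse, ← hpiff z, Walk.support_reverse,
        List.mem_reverse, Walk.support_copy]
    · -- both apexes
      rw [Set.mem_singleton_iff] at ha hb
      have hmemrev : ∀ z : V ⊕ Bool, z ∈ ((π i).copy ha hb).reverse.support ↔
          z ∈ (π i).support := by
        intro z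
        rw [Walk.support_reverse, List.mem_reverse, Walk.support_copy]
      have hrevpath : ((π i).copy ha hb).reverse.IsPath := ((Walk.isPath_copy _ _ _).mpr (hπpath i)).reverse
      cases hr : ((π i).copy ha hb).reverse with
      | @cons _ m _ hadj rest =>
      rcases m with s₂ | bb
      · have hs₂ : s₂ ∈ U₂ := by
          have hadj2 : (star G U₁ U₂).Adj (inl s₂) (inr true) := hadj.symm
          rcases hadj2 with ⟨hc, -⟩ | ⟨-, h'⟩
          · exact absurd hc (by simp)
          · exact h'
        have hrest_path : rest.IsPath := by
          have := hr ▸ hrevpath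
          exact ((Walk.cons_isPath_iff _ _).mp this).1
        have hnotr : (inr true : V ⊕ Bool) ∉ rest.support := by
          have := hr ▸ hrevpath
          exact ((Walk.cons_isPath_iff _ _).mp this).2
        have hrest_sub : ∀ z, z ∈ rest.support → z ∈ (π i).support := by
          intro z hz
          rw [← hmemrev z, hr, Walk.support_cons]
          exact List.mem_cons_of_mem _ hz
        obtain ⟨u₂, p, hmem, hppath, hpiff⟩ := star_coreR rest hrest_path (by
          show (inr (!false) : V ⊕ Bool) ∉ rest.support
          simpa using hnotr)
        rcases hmem with ⟨-, hu₂⟩ | ⟨hc, -⟩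
        swap
        · exact absurd hc (by simp)
        refine ⟨u₂, s₂, p.reverse, hppath.reverse, ?_, Or.inr ⟨ha, hu₂⟩, Or.inr ⟨hb, hs₂⟩⟩
        intro z
        rw [Walk.support_reverse, List.mem_reverse, ← hpiff z, ← hmemrev (inl z), hr,
          Walk.support_cons, List.mem_cons]
        simp
      · exact (show False from hadj).elim
  choose u v p hppath hpiff hua hvb using key
  have hpdisj : ∀ i j, i ≠ j → ∀ z, z ∈ (p i).support → z ∉ (p j).support := by
    intro i j hij z hzi hzj
    exact hπdisj i j hij (inl z) ((hpiff i z).mpr hzi) ((hpiff j z).mpr hzj)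
  have huinj : Function.Injective u := by
    intro i j hij
    by_contra hne
    apply hpdisj i j hne (u i) (Walk.start_mem_support _)
    rw [hij]
    exact Walk.start_mem_support _
  have hvinj : Function.Injective v := by
    intro i j hij
    by_contra hne
    apply hpdisj i j hne (v i) (Walk.end_mem_support _)
    rw [hij]
    exact Walk.end_mem_support _
  have hAchar : ∀ i, a' i = inr false → i = i₀ := fun i h => hainj (h.trans hi₀.symm)
  have hBchar : ∀ i, b' i = inr true → i = j₀ := fun i h => hbinj (h.trans hj₀.symm)
  have hui₀ : u i₀ ∈ U₁ := by
    rcases hua i₀ with ⟨h', -⟩ | ⟨-, h'⟩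
    · rw [hi₀] at h'; exact absurd h' (by simp)
    · exact h'
  have hvj₀ : v j₀ ∈ U₂ := by
    rcases hvb j₀ with ⟨h', -⟩ | ⟨-, h'⟩
    · rw [hj₀] at h'; exact absurd h' (by simp)
    · exact h'
  refine ⟨u i₀, hui₀, v j₀, hvj₀, u, v, p, huinj, hvinj, ?_, ?_, hppath, ?_, ?_, hpdisj⟩
  · -- u i ∈ T₁ ∪ {u i₀}
    intro i
    rcases hua i with ⟨-, h'⟩ | ⟨hf, -⟩
    · exact Or.inl h'
    · rw [hAchar i hf]
      exact Or.inr rfl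
  · intro i
    rcases hvb i with ⟨-, h'⟩ | ⟨hf, -⟩
    · exact Or.inl h'
    · rw [hBchar i hf]
      exact Or.inr rfl
  · -- clean w.r.t. T₁ ∪ {u i₀}
    intro i z hz hmem
    rcases hmem with hzT | hzs
    · have : (inl z : V ⊕ Bool) = a' i :=
        hclA i (inl z) ((hpiff i z).mpr hz) (Or.inl ⟨z, hzT, rfl⟩)
      rcases hua i with ⟨ha2, -⟩ | ⟨ha2, -⟩
      · rw [ha2] at this
        injection this
      · rw [ha2] at this
        exact absurd this (by simp)
    · rw [Set.mem_singleton_iff] at hzs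
      subst hzs
      by_cases hii : i = i₀
      · subst hii; rfl
      · exact absurd hz (fun h => hpdisj i i₀ hii _ h (Walk.start_mem_support _))
  · intro i z hz hmem
    rcases hmem with hzT | hzs
    · have : (inl z : V ⊕ Bool) = b' i :=
        hclB i (inl z) ((hpiff i z).mpr hz) (Or.inl ⟨z, hzT, rfl⟩)
      rcases hvb i with ⟨hb2, -⟩ | ⟨hb2, -⟩
      · rw [hb2] at this
        injection this
      · rw [hb2] at this
        exact absurd this (by simp)
    · rw [Set.mem_singleton_iff] at hzs
      subst hzs
      by_cases hjj : i = j₀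
      · subst hjj; rfl
      · exact absurd hz (fun h => hpdisj i j₀ hjj _ h (Walk.end_mem_support _))
end

section
/- Let G be a graph, S₁ and S₂ two disjoint subsets of V(G) that are k-linked. If each Sᵢ has a subset Tᵢ of size k−t (i = 1,2) such that T₁ and T₂ are (k−t)-linked, then there exist subsets Tᵢ' ⊆ Sᵢ \ Tᵢ of size t (i = 1,2) such that T₁ ∪ T₁' and T₂ ∪ T₂' are k-linked. -/
namespace PerfectAux

open SimpleGraph


open SimpleGraph

variable {V : Type*} {G : SimpleGraph V}

/-- A bundled walk. -/
structure PWalk (G : SimpleGraph V) where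
  s : V
  t : V
  w : G.Walk s t

/-- A good linkage from `A` to `B`. -/
def Good (G : SimpleGraph V) (A B : Set V) {k : ℕ} (L : Fin k → PWalk G) : Prop :=
  (∀ i, (L i).s ∈ A) ∧ (∀ i, (L i).t ∈ B) ∧ (∀ i, (L i).w.IsPath) ∧
  (∀ i j, i ≠ j → ∀ v ∈ (L i).w.support, v ∉ (L j).w.support)

lemma Good.inj_s {A B : Set V} {k : ℕ} {L : Fin k → PWalk G} (h : Good G A B L) :
    Function.Injective fun i => (L i).s := by
  intro i j hij
  by_contra hne
  refine h.2.2.2 i j hne _ (Walk.start_mem_support _) ?_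
  simp only at hij
  rw [hij]
  exact Walk.start_mem_support _

lemma Good.inj_t {A B : Set V} {k : ℕ} {L : Fin k → PWalk G} (h : Good G A B L) :
    Function.Injective fun i => (L i).t := by
  intro i j hij
  by_contra hne
  refine h.2.2.2 i j hne _ (Walk.end_mem_support _) ?_
  simp only at hij
  rw [hij]
  exact Walk.end_mem_support _

lemma ncard_range {k : ℕ} {f : Fin k → V} (hf : Function.Injective f) :
    (Set.range f).ncard = k := by
  rw [← Set.image_univ, Set.ncard_image_of_injective _ hf, Set.ncard_univ,
    Nat.card_eq_fintype_card, Fintype.card_fin]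

lemma ncard_range_le {k : ℕ} (f : Fin k → V) : (Set.range f).ncard ≤ k := by
  rw [← Set.image_univ]
  calc (f '' Set.univ).ncard ≤ (Set.univ : Set (Fin k)).ncard :=
        Set.ncard_image_le (Set.toFinite _)
    _ = k := by rw [Set.ncard_univ, Nat.card_eq_fintype_card, Fintype.card_fin]

/-- an initial segment of `R` up to the first vertex in `U`. -/
lemma exists_prefix {x c : V} (R : G.Walk x c) (U : Set V)
    (h : ∃ v ∈ R.support, v ∈ U) :
    ∃ (y : V) (W : G.Walk x y), y ∈ U ∧ (∀ v ∈ W.support, v ∈ R.support) ∧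
      (∀ e ∈ W.edges, e ∈ R.edges) ∧ (R.IsPath → W.IsPath) ∧
      (∀ v ∈ W.support, v ∈ U → v = y) := by
  induction R with
  | nil =>
    refine ⟨_, Walk.nil, ?_, by simp, by simp, fun _ => Walk.IsPath.nil, by simp⟩
    simpa using h
  | @cons u v c hadj R ih =>
    by_cases hu : u ∈ U
    · exact ⟨u, Walk.nil, hu, by simp, by simp, fun _ => Walk.IsPath.nil, by simp⟩
    · have h' : ∃ z ∈ R.support, z ∈ U := by
        obtain ⟨z, hz, hzU⟩ := h
        have hz2 : z = u ∨ z ∈ R.support := by simpa using hz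
        rcases hz2 with rfl | hz'
        · exact absurd hzU hu
        · exact ⟨z, hz', hzU⟩
      obtain ⟨y, W, hyU, hWs, hWe, hWp, hWU⟩ := ih h'
      refine ⟨y, Walk.cons hadj W, hyU, ?_, ?_, ?_, ?_⟩
      · intro z hz
        have hz2 : z = u ∨ z ∈ W.support := by simpa using hz
        rcases hz2 with rfl | hz'
        · simp
        · simp only [Walk.support_cons, List.mem_cons]
          right
          exact hWs z hz' 
      · intro e he
        have he2 : e = s(u, v) ∨ e ∈ W.edges := by simpa using he
        rcases he2 with rfl | he'
        · simp
        · simp only [Walk.edges_cons, List.mem_cons]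
          right
          exact hWe e he'
      · intro hp
        rw [Walk.cons_isPath_iff] at hp ⊢
        refine ⟨hWp hp.1, fun hmem => hp.2 ?_⟩
        exact hWs u hmem
      · intro z hz hzU
        have hz2 : z = u ∨ z ∈ W.support := by simpa using hz
        rcases hz2 with rfl | hz'
        · exact absurd hzU hu
        · exact hWU z hz' hzU

/-- walks using only edges of the disjoint system `Q` stay on the path they start on. -/
lemma follow_support {m : ℕ} (Q : Fin m → PWalk G)
    (hQd : ∀ l l', l ≠ l' → ∀ v ∈ (Q l).w.support, v ∉ (Q l').w.support)
    {l' : Fin m} {u y : V} (w : G.Walk u y)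
    (hw : ∀ e ∈ w.edges, ∃ l, e ∈ (Q l).w.edges)
    (hu : u ∈ (Q l').w.support) : y ∈ (Q l').w.support := by
  induction w with
  | nil => exact hu
  | @cons a b c hadj p ih =>
    obtain ⟨l, hl⟩ := hw s(a, b) (by simp)
    have hal : a ∈ (Q l).w.support := (Q l).w.fst_mem_support_of_mem_edges hl
    have hll : l = l' := by
      by_contra hne
      exact hQd l l' hne a hal hu
    subst hll
    have hb : b ∈ (Q l).w.support := (Q l).w.snd_mem_support_of_mem_edges hl
    exact ih (fun e he => hw e (by simp [he])) hb

lemma isPath_append' {u v w : V} {p : G.Walk u v} {q : G.Walk v w}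
    (hp : p.IsPath) (hq : q.IsPath) (hmeet : ∀ x ∈ p.support, x ∈ q.support → x = v) :
    (p.append q).IsPath := by
  rw [Walk.isPath_def, Walk.support_append]
  refine List.Nodup.append hp.support_nodup ?_ ?_
  · exact hq.support_nodup.tail
  · intro z hz hz'
    have hzv : z = v := hmeet z hz (List.mem_of_mem_tail hz')
    subst hzv
    have := hq.support_nodup
    rw [q.support_eq_cons] at this
    exact (List.nodup_cons.mp this).1 hz'

lemma edge_witness {u v a b : V} {p : G.Walk u v} {q : G.Walk a b} {e : Sym2 V}
    (he : e ∈ p.edges) (he' : e ∈ q.edges) :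
    ∃ z, z ∈ p.support ∧ z ∈ q.support := by
  induction e with
  | _ u1 u2 => exact ⟨u1, p.fst_mem_support_of_mem_edges he, q.fst_mem_support_of_mem_edges he'⟩


noncomputable def mu1 {k : ℕ} (X : Set V) (L : Fin k → PWalk G) : ℕ :=
  (X \ Set.range fun i => (L i).s).ncard

noncomputable def mu2 {k : ℕ} (QE : Set (Sym2 V)) (L : Fin k → PWalk G) : ℕ :=
  ((⋃ i, {e | e ∈ (L i).w.edges}) \ QE).ncard

lemma step [Fintype V] {k m : ℕ} (hmk : m ≤ k)
    (A B : Set V) (Q : Fin m → PWalk G)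
    (hQs : ∀ l, (Q l).s ∈ A) (hQt : ∀ l, (Q l).t ∈ B) (hQp : ∀ l, (Q l).w.IsPath)
    (hQd : ∀ l l', l ≠ l' → ∀ v ∈ (Q l).w.support, v ∉ (Q l').w.support)
    (L : Fin k → PWalk G) (hL : Good G A B L)
    (hns : ¬ (Set.range fun l => (Q l).s) ⊆ Set.range fun i => (L i).s) :
    ∃ L' : Fin k → PWalk G, Good G A B L' ∧
      mu1 (Set.range fun l => (Q l).s) L' * (Fintype.card (Sym2 V) + 1)
        + mu2 (⋃ l, {e | e ∈ (Q l).w.edges}) L'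
      < mu1 (Set.range fun l => (Q l).s) L * (Fintype.card (Sym2 V) + 1)
        + mu2 (⋃ l, {e | e ∈ (Q l).w.edges}) L := by
  classical
  set X : Set V := Set.range fun l => (Q l).s with hXdef
  set QE : Set (Sym2 V) := ⋃ l, {e | e ∈ (Q l).w.edges} with hQEdef
  set C := Fintype.card (Sym2 V) with hCdef
  obtain ⟨x, hxX, hxs⟩ := Set.not_subset.mp hns
  obtain ⟨l, hl⟩ := hxX
  simp only at hl
  have hxX : x ∈ X := ⟨l, hl⟩
  have hinj : Function.Injective fun i => (L i).s := hL.inj_s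
  have hmu2le : ∀ (M : Fin k → PWalk G), mu2 QE M ≤ C := by
    intro M
    calc mu2 QE M ≤ (Set.univ : Set (Sym2 V)).ncard :=
          Set.ncard_le_ncard (Set.subset_univ _) (Set.toFinite _)
      _ = C := by rw [Set.ncard_univ, Nat.card_eq_fintype_card]
  have hmu1pos : 0 < mu1 X L := by
    simp only [mu1]
    exact (Set.ncard_pos (Set.toFinite _)).mpr ⟨x, hxX, hxs⟩
  -- key decrease lemma for the first measure
  have key : ∀ (j : Fin k) (L' : Fin k → PWalk G), (∀ i, i ≠ j → L' i = L i) →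
      (L' j).s = x → (L j).s ∉ X → mu1 X L' + 1 ≤ mu1 X L := by
    intro j L' hLeq hLjs hjX
    have hsubset : X \ (Set.range fun i => (L' i).s) ⊆
        (X \ Set.range fun i => (L i).s) \ {x} := by
      rintro v ⟨hvX, hvns⟩
      have hvx : v ≠ x := by rintro rfl; exact hvns ⟨j, hLjs⟩
      refine ⟨⟨hvX, ?_⟩, hvx⟩
      rintro ⟨i, rfl⟩
      by_cases hij : i = j
      · subst hij; exact hjX hvX
      · exact hvns ⟨i, congrArg PWalk.s (hLeq i hij)⟩
    have h1 : mu1 X L' ≤ ((X \ Set.range fun i => (L i).s) \ {x}).ncard :=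
      Set.ncard_le_ncard hsubset (Set.toFinite _)
    have h2 : ((X \ Set.range fun i => (L i).s) \ {x}).ncard
        = (X \ Set.range fun i => (L i).s).ncard - 1 :=
      Set.ncard_diff_singleton_of_mem ⟨hxX, hxs⟩
    simp only [mu1] at *
    omega
  have key2 : ∀ (j : Fin k) (L' : Fin k → PWalk G), (∀ i, i ≠ j → L' i = L i) →
      (L' j).s = x → mu1 X L' ≤ mu1 X L := by
    intro j L' hLeq hLjs
    have hsubset : X \ (Set.range fun i => (L' i).s) ⊆
        insert ((L j).s) ((X \ Set.range fun i => (L i).s) \ {x}) := by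
      rintro v ⟨hvX, hvns⟩
      have hvx : v ≠ x := by rintro rfl; exact hvns ⟨j, hLjs⟩
      by_cases hvj : v = (L j).s
      · exact Set.mem_insert_iff.mpr (Or.inl hvj)
      · refine Set.mem_insert_iff.mpr (Or.inr ⟨⟨hvX, ?_⟩, hvx⟩)
        rintro ⟨i, rfl⟩
        by_cases hij : i = j
        · subst hij; exact hvj rfl
        · exact hvns ⟨i, congrArg PWalk.s (hLeq i hij)⟩
    have h1 : mu1 X L' ≤ (insert ((L j).s)
        ((X \ Set.range fun i => (L i).s) \ {x})).ncard :=
      Set.ncard_le_ncard hsubset (Set.toFinite _)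
    have h2 := Set.ncard_insert_le ((L j).s) ((X \ Set.range fun i => (L i).s) \ {x})
    have h3 : ((X \ Set.range fun i => (L i).s) \ {x}).ncard
        = (X \ Set.range fun i => (L i).s).ncard - 1 :=
      Set.ncard_diff_singleton_of_mem ⟨hxX, hxs⟩
    simp only [mu1] at *
    omega
  have harith : ∀ (L' : Fin k → PWalk G), mu1 X L' + 1 ≤ mu1 X L →
      mu1 X L' * (C + 1) + mu2 QE L' < mu1 X L * (C + 1) + mu2 QE L := by
    intro L' h
    calc mu1 X L' * (C + 1) + mu2 QE L'
        < mu1 X L' * (C + 1) + (C + 1) :=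
          Nat.add_lt_add_left (Nat.lt_succ_of_le (hmu2le L')) _
      _ = (mu1 X L' + 1) * (C + 1) := by ring
      _ ≤ mu1 X L * (C + 1) := Nat.mul_le_mul_right _ h
      _ ≤ mu1 X L * (C + 1) + mu2 QE L := Nat.le_add_right _ _
  set U : Set V := {v | ∃ i, v ∈ (L i).w.support} with hUdef
  by_cases hmeet : ∃ v ∈ (Q l).w.support, v ∈ U
  · -- the Q-path meets the linkage; reroute at the first meeting point
    obtain ⟨y, W, hyU, hWs, hWe, hWp', hWU⟩ := exists_prefix (Q l).w U hmeet
    obtain ⟨j, hyj⟩ := hyU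
    set W1 := (L j).w.takeUntil y hyj with hW1def
    set W2 := (L j).w.dropUntil y hyj with hW2def
    set N : G.Walk (Q l).s (L j).t := W.append W2 with hNdef
    set L' := Function.update L j ⟨(Q l).s, (L j).t, N⟩ with hL'def
    have hLeq : ∀ i, i ≠ j → L' i = L i := fun i h => Function.update_of_ne h _ _
    have hLj : L' j = ⟨(Q l).s, (L j).t, N⟩ := Function.update_self _ _ _
    have hNp : N.IsPath := by
      refine isPath_append' (hWp' (hQp l)) ((hL.2.2.1 j).dropUntil hyj) ?_
      intro z hz hz2
      exact hWU z hz ⟨j, Walk.support_dropUntil_subset _ hyj hz2⟩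
    have hNsup : ∀ v ∈ N.support, v ∈ W.support ∨ v ∈ (L j).w.support := by
      intro v hv
      rcases (Walk.mem_support_append_iff _ _).mp hv with h1 | h2
      · exact Or.inl h1
      · exact Or.inr (Walk.support_dropUntil_subset _ hyj h2)
    have hNdisj : ∀ i, i ≠ j → ∀ v, v ∈ N.support → v ∉ (L i).w.support := by
      intro i hij v hv hvi
      rcases hNsup v hv with h1 | h2
      · have hvy : v = y := hWU v h1 ⟨i, hvi⟩
        subst hvy
        exact hL.2.2.2 i j hij v hvi hyj
      · exact hL.2.2.2 j i (Ne.symm hij) v h2 hvi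
    have good' : Good G A B L' := by
      refine ⟨?_, ?_, ?_, ?_⟩
      · intro i
        rcases eq_or_ne i j with rfl | hij
        · rw [hLj]; exact hQs l
        · rw [hLeq i hij]; exact hL.1 i
      · intro i
        rcases eq_or_ne i j with rfl | hij
        · rw [hLj]; exact hL.2.1 _
        · rw [hLeq i hij]; exact hL.2.1 i
      · intro i
        rcases eq_or_ne i j with rfl | hij
        · rw [hLj]; exact hNp
        · rw [hLeq i hij]; exact hL.2.2.1 i
      · intro i i' hii' v hv hv'
        rcases eq_or_ne i j with rfl | hij
        · rw [hLj] at hv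
          rw [hLeq i' hii'.symm] at hv'
          exact hNdisj i' hii'.symm v hv hv'
        · rw [hLeq i hij] at hv
          rcases eq_or_ne i' j with rfl | hij'
          · rw [hLj] at hv'
            exact hNdisj i hij v hv' hv
          · rw [hLeq i' hij'] at hv'
            exact hL.2.2.2 i i' hii' v hv hv'
    have hEsub : (⋃ i, {e | e ∈ (L' i).w.edges}) \ QE
        ⊆ (⋃ i, {e | e ∈ (L i).w.edges}) \ QE := by
      rintro e ⟨he, heQ⟩
      refine ⟨?_, heQ⟩
      rcases Set.mem_iUnion.mp he with ⟨i, hei⟩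
      by_cases hij : i = j
      · subst hij
        rw [hLj] at hei
        have hei' : e ∈ W.edges ∨ e ∈ W2.edges := by
          have : e ∈ N.edges := hei
          rw [hNdef, Walk.edges_append] at this
          exact List.mem_append.mp this
        rcases hei' with h1 | h2
        · exact absurd (Set.mem_iUnion.mpr ⟨l, hWe e h1⟩) heQ
        · exact Set.mem_iUnion.mpr ⟨i, Walk.edges_dropUntil_subset _ hyj h2⟩
      · rw [hLeq i hij] at hei
        exact Set.mem_iUnion.mpr ⟨i, hei⟩
    have hLjs : (L' j).s = x := by rw [hLj, hl]
    by_cases hjX : (L j).s ∈ X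
    · -- second measure strictly decreases
      have he0 : ∃ e ∈ W1.edges, e ∉ QE := by
        by_contra hall
        push_neg at hall
        obtain ⟨l2, hl2⟩ := hjX
        simp only at hl2
        have hstart : (L j).s ∈ (Q l2).w.support := by
          rw [← hl2]; exact Walk.start_mem_support _
        have hy2 : y ∈ (Q l2).w.support := by
          refine follow_support Q hQd W1 (fun e he => ?_) hstart
          exact Set.mem_iUnion.mp (hall e he)
        have hyl : y ∈ (Q l).w.support := hWs y (Walk.end_mem_support W)
        have hll2 : l ≠ l2 := by
          rintro rfl
          exact hxs ⟨j, by rw [← hl, hl2]⟩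
        exact hQd l l2 hll2 y hyl hy2
      obtain ⟨e0, he0W1, he0Q⟩ := he0
      have he0Lj : e0 ∈ (L j).w.edges := Walk.edges_takeUntil_subset _ hyj he0W1
      have hsplit : (L j).w.edges = W1.edges ++ W2.edges := by
        conv_lhs => rw [← Walk.take_spec (L j).w hyj]
        rw [Walk.edges_append]
      have he0notW2 : e0 ∉ W2.edges := by
        have hnodup : ((L j).w.edges).Nodup := (hL.2.2.1 j).isTrail.edges_nodup
        rw [hsplit] at hnodup
        exact fun h2 => (List.disjoint_of_nodup_append hnodup) he0W1 h2
      have he0notE' : e0 ∉ (⋃ i, {e | e ∈ (L' i).w.edges}) := by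
        intro hmem
        rcases Set.mem_iUnion.mp hmem with ⟨i, hei⟩
        by_cases hij : i = j
        · subst hij
          rw [hLj] at hei
          have : e0 ∈ N.edges := hei
          rw [hNdef, Walk.edges_append] at this
          rcases List.mem_append.mp this with h1 | h2
          · exact he0Q (Set.mem_iUnion.mpr ⟨l, hWe e0 h1⟩)
          · exact he0notW2 h2
        · rw [hLeq i hij] at hei
          obtain ⟨z, hz1, hz2⟩ := edge_witness hei he0Lj
          exact hL.2.2.2 i j hij z hz1 hz2
      have hssub : (⋃ i, {e | e ∈ (L' i).w.edges}) \ QE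
          ⊂ (⋃ i, {e | e ∈ (L i).w.edges}) \ QE := by
        refine ⟨hEsub, fun hsup => ?_⟩
        have hmem : e0 ∈ (⋃ i, {e | e ∈ (L' i).w.edges}) \ QE :=
          hsup ⟨Set.mem_iUnion.mpr ⟨j, he0Lj⟩, he0Q⟩
        exact he0notE' hmem.1
      have hmu2lt : mu2 QE L' < mu2 QE L := by
        simp only [mu2]
        exact Set.ncard_lt_ncard hssub (Set.toFinite _)
      refine ⟨L', good', ?_⟩
      exact add_lt_add_of_le_of_lt (Nat.mul_le_mul_right _ (key2 j L' hLeq hLjs)) hmu2lt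
    · refine ⟨L', good', harith L' (key j L' hLeq hLjs hjX)⟩
  · -- the Q-path misses the linkage entirely; swap it in for a path not starting in X
    push_neg at hmeet
    have hj : ∃ j, (L j).s ∉ X := by
      by_contra hall
      push_neg at hall
      have hsub : (Set.range fun i => (L i).s) ⊆ X := by
        rintro _ ⟨j, rfl⟩; exact hall j
      have h1 : (Set.range fun i => (L i).s).ncard = k := ncard_range hinj
      have h2 : X.ncard ≤ m := ncard_range_le _
      have heq : (Set.range fun i => (L i).s) = X :=
        Set.eq_of_subset_of_ncard_le hsub (by omega) (Set.toFinite _)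
      rw [← heq] at hxX
      exact hxs hxX
    obtain ⟨j, hjX⟩ := hj
    set L' := Function.update L j (Q l) with hL'def
    have hLeq : ∀ i, i ≠ j → L' i = L i := fun i h => Function.update_of_ne h _ _
    have hLj : L' j = Q l := Function.update_self _ _ _
    have good' : Good G A B L' := by
      refine ⟨?_, ?_, ?_, ?_⟩
      · intro i
        rcases eq_or_ne i j with rfl | hij
        · rw [hLj]; exact hQs l
        · rw [hLeq i hij]; exact hL.1 i
      · intro i
        rcases eq_or_ne i j with rfl | hij
        · rw [hLj]; exact hQt l
        · rw [hLeq i hij]; exact hL.2.1 i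
      · intro i
        rcases eq_or_ne i j with rfl | hij
        · rw [hLj]; exact hQp l
        · rw [hLeq i hij]; exact hL.2.2.1 i
      · intro i i' hii' v hv hv'
        rcases eq_or_ne i j with rfl | hij
        · rw [hLj] at hv
          rw [hLeq i' hii'.symm] at hv'
          exact hmeet v hv ⟨i', hv'⟩
        · rw [hLeq i hij] at hv
          rcases eq_or_ne i' j with rfl | hij'
          · rw [hLj] at hv'
            exact hmeet v hv' ⟨i, hv⟩
          · rw [hLeq i' hij'] at hv'
            exact hL.2.2.2 i i' hii' v hv hv'
    have hLjs : (L' j).s = x := by rw [hLj, hl]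
    exact ⟨L', good', harith L' (key j L' hLeq hLjs hjX)⟩


/-- Perfect's theorem, one-sided version. -/
lemma aug [Fintype V] {k m : ℕ} (hmk : m ≤ k)
    (A B : Set V) (Q : Fin m → PWalk G)
    (hQs : ∀ l, (Q l).s ∈ A) (hQt : ∀ l, (Q l).t ∈ B) (hQp : ∀ l, (Q l).w.IsPath)
    (hQd : ∀ l l', l ≠ l' → ∀ v ∈ (Q l).w.support, v ∉ (Q l').w.support)
    (L : Fin k → PWalk G) (hL : Good G A B L) :
    ∃ L' : Fin k → PWalk G, Good G A B L' ∧
      (Set.range fun l => (Q l).s) ⊆ Set.range fun i => (L' i).s := by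
  classical
  have H : ∀ n (L : Fin k → PWalk G), Good G A B L →
      mu1 (Set.range fun l => (Q l).s) L * (Fintype.card (Sym2 V) + 1)
        + mu2 (⋃ l, {e | e ∈ (Q l).w.edges}) L ≤ n →
      ∃ L' : Fin k → PWalk G, Good G A B L' ∧
        (Set.range fun l => (Q l).s) ⊆ Set.range fun i => (L' i).s := by
    intro n
    induction n with
    | zero =>
      intro L hL hn
      by_cases hsub : (Set.range fun l => (Q l).s) ⊆ Set.range fun i => (L i).s
      · exact ⟨L, hL, hsub⟩
      · obtain ⟨L', _, hlt⟩ := step hmk A B Q hQs hQt hQp hQd L hL hsub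
        exact absurd (hlt.trans_le hn) (Nat.not_lt_zero _)
    | succ n ih =>
      intro L hL hn
      by_cases hsub : (Set.range fun l => (Q l).s) ⊆ Set.range fun i => (L i).s
      · exact ⟨L, hL, hsub⟩
      · obtain ⟨L', hgood', hlt⟩ := step hmk A B Q hQs hQt hQp hQd L hL hsub
        exact ih L' hgood' (Nat.lt_succ_iff.mp (hlt.trans_le hn))
  exact H _ L hL le_rfl


end PerfectAux

open PerfectAux SimpleGraph in
/-- Self-refining version of the strengthened Perfect's Theorem (Theorem 2.3). -/
theorem setsLinked_extend {V : Type*} [Fintype V] (G : SimpleGraph V)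
    (k t : ℕ) (ht : 0 < t) (htk : t < k) (S₁ S₂ T₁ T₂ : Set V)
    (hdisj : Disjoint S₁ S₂)
    (hS : SetsLinked G k S₁ S₂)
    (hT₁ : T₁ ⊆ S₁) (hT₂ : T₂ ⊆ S₂)
    (hT₁card : T₁.ncard = k - t) (hT₂card : T₂.ncard = k - t)
    (hT : SetsLinked G (k - t) T₁ T₂) :
    ∃ T₁' ⊆ S₁ \ T₁, ∃ T₂' ⊆ S₂ \ T₂,
      T₁'.ncard = t ∧ T₂'.ncard = t ∧
      SetsLinked G k (T₁ ∪ T₁') (T₂ ∪ T₂') := by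
  classical
  obtain ⟨aS, bS, PS, haSinj, hbSinj, haS, hbS, hPS, hS6, hS7, hSd⟩ := hS
  obtain ⟨aT, bT, PT, haTinj, hbTinj, haT, hbT, hPT, hT6, hT7, hTd⟩ := hT
  have hmk : k - t ≤ k := Nat.sub_le _ _
  have htk' : t ≤ k := le_of_lt htk
  -- ranges of the T-linkage endpoints are exactly T₁, T₂
  have hrangeaT : Set.range aT = T₁ := by
    refine Set.eq_of_subset_of_ncard_le ?_ ?_ (Set.toFinite _)
    · rintro _ ⟨l, rfl⟩; exact haT l
    · rw [ncard_range haTinj, hT₁card]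
  have hrangebT : Set.range bT = T₂ := by
    refine Set.eq_of_subset_of_ncard_le ?_ ?_ (Set.toFinite _)
    · rintro _ ⟨l, rfl⟩; exact hbT l
    · rw [ncard_range hbTinj, hT₂card]
  -- step 1 : get a good k-linkage from S₁ to S₂ whose starts include T₁
  set Q1 : Fin (k - t) → PWalk G := fun l => ⟨aT l, bT l, PT l⟩ with hQ1
  set L0 : Fin k → PWalk G := fun i => ⟨aS i, bS i, PS i⟩ with hL0
  have hL0good : Good G S₁ S₂ L0 :=
    ⟨haS, hbS, hPS, fun i j hne v hv => hSd i j hne v hv⟩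
  obtain ⟨L1, hL1good, hL1X⟩ := aug hmk S₁ S₂ Q1
    (fun l => hT₁ (haT l)) (fun l => hT₂ (hbT l)) hPT
    (fun l l' h v hv => hTd l l' h v hv) L0 hL0good
  have hrangeQ1 : (Set.range fun l => (Q1 l).s) = T₁ := hrangeaT
  rw [hrangeQ1] at hL1X
  -- step 2 : reverse, and get a good k-linkage from S₂ to (starts of L1) whose
  -- starts include T₂
  set B1 : Set V := Set.range fun i => (L1 i).s with hB1
  set L1r : Fin k → PWalk G := fun i => ⟨(L1 i).t, (L1 i).s, (L1 i).w.reverse⟩ with hL1r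
  have hL1rgood : Good G S₂ B1 L1r := by
    refine ⟨fun i => hL1good.2.1 i, fun i => ⟨i, rfl⟩, fun i => (hL1good.2.2.1 i).reverse, ?_⟩
    intro i j hne v hv
    rw [show (L1r i).w = (L1 i).w.reverse from rfl, Walk.support_reverse, List.mem_reverse] at hv
    rw [show (L1r j).w = (L1 j).w.reverse from rfl, Walk.support_reverse, List.mem_reverse]
    exact hL1good.2.2.2 i j hne v hv
  set Q2 : Fin (k - t) → PWalk G := fun l => ⟨bT l, aT l, (PT l).reverse⟩ with hQ2
  obtain ⟨L2, hL2good, hL2X⟩ := aug hmk S₂ B1 Q2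
    (fun l => hT₂ (hbT l))
    (fun l => hL1X (hrangeaT ▸ ⟨l, rfl⟩))
    (fun l => (hPT l).reverse)
    (fun l l' h v hv => by
      rw [show (Q2 l).w = (PT l).reverse from rfl, Walk.support_reverse, List.mem_reverse] at hv
      rw [show (Q2 l').w = (PT l').reverse from rfl, Walk.support_reverse, List.mem_reverse]
      exact hTd l l' h v hv)
    L1r hL1rgood
  have hrangeQ2 : (Set.range fun l => (Q2 l).s) = T₂ := hrangebT
  rw [hrangeQ2] at hL2X
  -- final bookkeeping
  set f : Fin k → V := fun i => (L2 i).t with hf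
  set g : Fin k → V := fun i => (L2 i).s with hg
  have hfinj : Function.Injective f := hL2good.inj_t
  have hginj : Function.Injective g := hL2good.inj_s
  have hfB1 : Set.range f ⊆ B1 := by rintro _ ⟨i, rfl⟩; exact hL2good.2.1 i
  have hrangef : Set.range f = B1 := by
    refine Set.eq_of_subset_of_ncard_le hfB1 ?_ (Set.toFinite _)
    rw [ncard_range hfinj, ncard_range hL1good.inj_s]
  have hB1S1 : B1 ⊆ S₁ := by rintro _ ⟨i, rfl⟩; exact hL1good.1 i
  have hT₁f : T₁ ⊆ Set.range f := hrangef ▸ hL1X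
  have hT₂g : T₂ ⊆ Set.range g := hL2X
  have hfS1 : Set.range f ⊆ S₁ := hrangef ▸ hB1S1
  have hgS2 : Set.range g ⊆ S₂ := by rintro _ ⟨i, rfl⟩; exact hL2good.1 i
  refine ⟨Set.range f \ T₁, ?_, Set.range g \ T₂, ?_, ?_, ?_, ?_⟩
  · exact Set.diff_subset_diff_left hfS1
  · exact Set.diff_subset_diff_left hgS2
  · rw [Set.ncard_diff hT₁f (Set.toFinite _), ncard_range hfinj, hT₁card,
      Nat.sub_sub_self htk']
  · rw [Set.ncard_diff hT₂g (Set.toFinite _), ncard_range hginj, hT₂card,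
      Nat.sub_sub_self htk']
  · have hTf : T₁ ∪ (Set.range f \ T₁) = Set.range f := Set.union_diff_cancel hT₁f
    have hTg : T₂ ∪ (Set.range g \ T₂) = Set.range g := Set.union_diff_cancel hT₂g
    rw [hTf, hTg]
    refine ⟨f, g, fun i => (L2 i).w.reverse, hfinj, hginj,
      fun i => ⟨i, rfl⟩, fun i => ⟨i, rfl⟩, fun i => (hL2good.2.2.1 i).reverse, ?_, ?_, ?_⟩
    · intro i x hx hxf
      rw [Walk.support_reverse, List.mem_reverse] at hx
      obtain ⟨i', rfl⟩ := hxf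
      by_contra hne
      have hii' : i' ≠ i := fun h => hne (by rw [h])
      exact hL2good.2.2.2 i i' (Ne.symm hii') _ hx (Walk.end_mem_support _)
    · intro i x hx hxg
      rw [Walk.support_reverse, List.mem_reverse] at hx
      obtain ⟨i', rfl⟩ := hxg
      by_contra hne
      have hii' : i' ≠ i := fun h => hne (by rw [h])
      exact hL2good.2.2.2 i i' (Ne.symm hii') _ hx (Walk.start_mem_support _)
    · intro i j hne x hx
      rw [Walk.support_reverse, List.mem_reverse] at hx
      rw [Walk.support_reverse, List.mem_reverse]
      exact hL2good.2.2.2 i j hne x hx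
end

section
/- Let G be a graph, x ∈ V(G), and S ⊆ V(G) \ {x} such that x and S are k-linked in G. If S has a subset T of size k−1 such that x and T are (k−1)-linked, then there exists a vertex s ∈ S \ T such that x and T ∪ {s} are k-linked. -/
set_option linter.unusedSectionVars false


/-- A vertex `x` and a set `S ⊆ V(G) \ {x}` are `k`-linked: there are `k` paths
from `x` to `k` distinct vertices of `S`, pairwise disjoint except at `x`, each
meeting `S` in exactly one vertex. -/
def VertexLinked {V : Type*} (G : SimpleGraph V) (k : ℕ) (x : V) (S : Set V) : Prop :=
  ∃ (b : Fin k → V) (P : ∀ i, G.Walk x (b i)),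
    Function.Injective b ∧ (∀ i, b i ∈ S) ∧
    (∀ i, (P i).IsPath) ∧
    (∀ i, ∀ y ∈ (P i).support, y ∈ S → y = b i) ∧
    (∀ i j, i ≠ j → ∀ y, y ∈ (P i).support → y ∈ (P j).support → y = x)


namespace PerfectAux

open SimpleGraph Walk

variable {V : Type*} [DecidableEq V] {G : SimpleGraph V} {vx vy : V}




/-- `C` separates `A` from `B` in `G`: every walk from `A` to `B` meets `C`. -/
def Seps (G : SimpleGraph V) (A B C : Set V) : Prop :=
  ∀ ⦃u v : V⦄, u ∈ A → v ∈ B → ∀ p : G.Walk u v, ∃ c ∈ C, c ∈ p.support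

/-- `k` pairwise vertex-disjoint `A`–`B` paths. -/
def DisjPaths (G : SimpleGraph V) (A B : Set V) (k : ℕ) : Prop :=
  ∃ (a b : Fin k → V) (P : ∀ i, G.Walk (a i) (b i)),
    (∀ i, (P i).IsPath) ∧ (∀ i, a i ∈ A) ∧ (∀ i, b i ∈ B) ∧
    (∀ i j, i ≠ j → ∀ z, z ∈ (P i).support → z ∈ (P j).support → False)

/-- In an edgeless graph every walk is trivial. -/
lemma walk_eq_nil_of_no_edges {G : SimpleGraph V} (hE : G.edgeSet = ∅) {a b : V}
    (p : G.Walk a b) : a = b ∧ p.support = [a] := by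
  cases p with
  | nil => simp
  | cons h q => exact absurd (G.mem_edgeSet.2 h) (by simp [hE])

/-- A vertex with no incident edges only appears in a walk as an endpoint. -/
lemma isolated_mem_support {G : SimpleGraph V} {z : V} (hz : ∀ w, ¬ G.Adj z w) :
    ∀ {a b : V} (p : G.Walk a b), a ≠ z → z ∈ p.support → z = b := by
  intro a b p
  induction p with
  | nil => intro h1 h2; simp at h2; exact absurd h2.symm h1
  | @cons a c b h q ih =>
      intro h1 h2
      rcases List.mem_cons.1 (by simpa using h2) with h2 | h2
      · exact absurd h2.symm h1
      · refine ih ?_ h2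
        intro hc; exact hz a (hc ▸ h).symm

/-- First hit of a set `X` along a walk: a prefix ending at the first vertex of `X`. -/
lemma exists_firstHit {G : SimpleGraph V} (X : Set V) :
    ∀ {a b : V} (p : G.Walk a b), (∃ c ∈ X, c ∈ p.support) →
      ∃ c ∈ X, ∃ q : G.Walk a c,
        (∀ z ∈ q.support, z ∈ p.support) ∧ (∀ f ∈ q.edges, f ∈ p.edges) ∧
        (∀ z ∈ q.support, z ∈ X → z = c) ∧ (p.IsPath → q.IsPath) := by
  intro a b p
  induction p with
  | nil =>
      rintro ⟨c, hcX, hc⟩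
      simp only [support_nil, List.mem_singleton] at hc
      subst hc
      exact ⟨c, hcX, Walk.nil, by simp, by simp, by simp +contextual, fun _ => IsPath.nil⟩
  | @cons a m b h q ih =>
      rintro ⟨c, hcX, hc⟩
      by_cases haX : a ∈ X
      · refine ⟨a, haX, Walk.nil, by simp, by simp, by simp +contextual, fun _ => IsPath.nil⟩
      · have hc' : c ∈ q.support := by
          rcases List.mem_cons.1 (by simpa using hc) with h1 | h1
          · exact absurd (h1 ▸ hcX) haX
          · exact h1
        obtain ⟨c', hc'X, q', hsub, hed, honly, hpath⟩ := ih ⟨c, hcX, hc'⟩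
        refine ⟨c', hc'X, Walk.cons h q', ?_, ?_, ?_, ?_⟩
        · intro z hz
          rcases List.mem_cons.1 (by simpa using hz) with h1 | h1
          · simp [h1]
          · simp [hsub z h1]
        · intro f hf
          rcases List.mem_cons.1 (by simpa using hf) with h1 | h1
          · simp [h1]
          · simp [hed f h1]
        · intro z hz hzX
          rcases List.mem_cons.1 (by simpa using hz) with h1 | h1
          · exact absurd (h1 ▸ hzX) haX
          · exact honly z h1 hzX
        · intro hp
          rw [Walk.cons_isPath_iff] at hp ⊢
          exact ⟨hpath hp.1, fun hmem => hp.2 (hsub a hmem)⟩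





/-- The contraction of the edge `vx vy`: `vy` is merged into `vx` and left isolated. -/
def cGraph (G : SimpleGraph V) (vx vy : V) : SimpleGraph V where
  Adj a b := a ≠ vy ∧ b ≠ vy ∧ a ≠ b ∧
    (G.Adj a b ∨ (a = vx ∧ G.Adj vy b) ∨ (b = vx ∧ G.Adj a vy))
  symm := by
    constructor
    rintro a b ⟨h1, h2, h3, h4⟩
    refine ⟨h2, h1, h3.symm, ?_⟩
    rcases h4 with h | ⟨h, h'⟩ | ⟨h, h'⟩
    · exact Or.inl h.symm
    · exact Or.inr (Or.inr ⟨h, h'.symm⟩)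
    · exact Or.inr (Or.inl ⟨h, h'.symm⟩)
  loopless := by constructor; rintro a ⟨_, _, h, _⟩; exact h rfl

/-- The image of a vertex set under contraction. -/
def cSet (vx vy : V) (A : Set V) : Set V := {z | z ≠ vy ∧ (z ∈ A ∨ (z = vx ∧ vy ∈ A))}

lemma mem_cSet {A : Set V} {z : V} :
    z ∈ cSet vx vy A ↔ (z ≠ vy ∧ (z ∈ A ∨ (z = vx ∧ vy ∈ A))) := Iff.rfl

/-- Projection map for the contraction. -/
def cMap [DecidableEq V] (vx vy : V) : V → V := fun z => if z = vy then vx else z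


lemma cMap_vy : cMap vx vy vy = vx := by simp [cMap]

lemma cMap_of_ne {z : V} (h : z ≠ vy) : cMap vx vy z = z := by simp [cMap, h]

lemma cMap_ne_vy (hne : vx ≠ vy) (z : V) : cMap vx vy z ≠ vy := by
  by_cases h : z = vy
  · rw [h, cMap_vy]; exact hne
  · rwa [cMap_of_ne h]

lemma cMap_mem_cSet (hne : vx ≠ vy) {A : Set V} {a : V} (ha : a ∈ A) :
    cMap vx vy a ∈ cSet vx vy A := by
  by_cases h : a = vy
  · subst h
    rw [show cMap vx a a = vx from cMap_vy]
    exact ⟨hne, Or.inr ⟨rfl, ha⟩⟩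
  · rw [cMap_of_ne h]; exact ⟨h, Or.inl ha⟩

lemma not_adj_vy : ∀ w, ¬ (cGraph G vx vy).Adj vy w := by
  rintro w ⟨h, -⟩; exact h rfl

lemma vy_not_mem_support {a b : V} (p : (cGraph G vx vy).Walk a b)
    (ha : a ≠ vy) (hb : b ≠ vy) : vy ∉ p.support := by
  intro h
  exact hb (isolated_mem_support not_adj_vy p ha h).symm

/-- Walks project along the contraction map. -/
lemma exists_proj_walk (hxy : G.Adj vx vy) {a b : V} (p : G.Walk a b) :
    ∃ q : (cGraph G vx vy).Walk (cMap vx vy a) (cMap vx vy b),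
      ∀ z ∈ q.support, ∃ w ∈ p.support, cMap vx vy w = z := by
  have hne : vx ≠ vy := hxy.ne
  induction p with
  | nil => exact ⟨Walk.nil, by simp⟩
  | @cons a m b h q ih =>
      obtain ⟨q', hq'⟩ := ih
      by_cases heq : cMap vx vy a = cMap vx vy m
      · refine ⟨q'.copy heq.symm rfl, ?_⟩
        intro z hz
        rw [Walk.support_copy] at hz
        obtain ⟨w, hw, hw'⟩ := hq' z hz
        exact ⟨w, by simp [hw], hw'⟩
      · have hadj : (cGraph G vx vy).Adj (cMap vx vy a) (cMap vx vy m) := by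
          refine ⟨cMap_ne_vy hne a, cMap_ne_vy hne m, heq, ?_⟩
          by_cases ha : a = vy <;> by_cases hm : m = vy
          · exact absurd (by rw [ha, hm]) heq
          · subst ha
            refine Or.inr (Or.inl ⟨cMap_vy, ?_⟩)
            rw [cMap_of_ne hm]; exact h
          · subst hm
            refine Or.inr (Or.inr ⟨cMap_vy, ?_⟩)
            rw [cMap_of_ne ha]; exact h
          · refine Or.inl ?_
            rw [cMap_of_ne ha, cMap_of_ne hm]; exact h
        refine ⟨Walk.cons hadj q', ?_⟩
        intro z hz
        rcases List.mem_cons.1 (by simpa using hz) with h1 | h1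
        · exact ⟨a, by simp, h1.symm⟩
        · obtain ⟨w, hw, hw'⟩ := hq' z h1
          exact ⟨w, by simp [hw], hw'⟩

/-- Walks in the contraction avoiding `vx` (and `vy`) lift back to `G`. -/
lemma exists_unproj_walk : ∀ {a b : V} (p : (cGraph G vx vy).Walk a b),
    vx ∉ p.support → vy ∉ p.support → ∃ q : G.Walk a b, q.support = p.support := by
  intro a b p
  induction p with
  | nil => exact fun _ _ => ⟨Walk.nil, rfl⟩
  | @cons a m b h q ih =>
      intro hx hy
      simp only [support_cons, List.mem_cons] at hx hy
      push_neg at hx hy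
      obtain ⟨q', hq'⟩ := ih hx.2 hy.2
      have hadj : G.Adj a m := by
        obtain ⟨h1, h2, h3, h4⟩ := h
        rcases h4 with h4 | ⟨h4, -⟩ | ⟨h4, -⟩
        · exact h4
        · exact absurd h4.symm hx.1
        · exact absurd (h4 ▸ q.start_mem_support) hx.2
      exact ⟨Walk.cons hadj q', by simp [hq']⟩





lemma cEdge_no_vy {e : Sym2 V} (he : e ∈ (cGraph G vx vy).edgeSet) : vy ∉ e := by
  induction e using Sym2.ind with
  | _ a b =>
    obtain ⟨h1, h2, -, -⟩ := (mem_edgeSet _).1 he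
    rw [Sym2.mem_iff]
    rintro (h | h) <;> [exact h1 h.symm; exact h2 h.symm]

lemma cEdge_virtual {e : Sym2 V} (he : e ∈ (cGraph G vx vy).edgeSet) (hG : e ∉ G.edgeSet) :
    ∃ c, e = s(vx, c) ∧ G.Adj vy c ∧ c ≠ vx ∧ c ≠ vy := by
  induction e using Sym2.ind with
  | _ a b =>
    obtain ⟨h1, h2, h3, h4⟩ := (mem_edgeSet _).1 he
    rcases h4 with h | ⟨h, h'⟩ | ⟨h, h'⟩
    · exact absurd ((mem_edgeSet _).2 h) hG
    · subst h; exact ⟨b, rfl, h', fun hb => h3 hb.symm, h2⟩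
    · subst h; exact ⟨a, Sym2.eq_swap, h'.symm, fun ha => h3 ha, h1⟩

lemma cGraph_ncard_lt [Fintype V] (hxy : G.Adj vx vy) :
    (cGraph G vx vy).edgeSet.ncard < G.edgeSet.ncard := by
  classical
  have hne : vx ≠ vy := hxy.ne
  set g : V → V := fun z => if z = vx then vy else z with hg
  have hgvx : g vx = vy := by simp [hg]
  set ψ : Sym2 V → Sym2 V := fun e => if e ∈ G.edgeSet then e else Sym2.map g e with hψ
  have hvirt : ∀ e ∈ (cGraph G vx vy).edgeSet, e ∉ G.edgeSet →
      ∃ c, e = s(vx, c) ∧ ψ e = s(vy, c) ∧ G.Adj vy c ∧ c ≠ vx ∧ c ≠ vy := by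
    intro e he hG
    obtain ⟨c, hc, hadj, hc1, hc2⟩ := cEdge_virtual he hG
    refine ⟨c, hc, ?_, hadj, hc1, hc2⟩
    have h1 : ψ e = Sym2.map g e := by simp [hψ, hG]
    rw [h1, hc, Sym2.map_pair_eq, hgvx]
    have hgc : g c = c := by simp [hg, hc1]
    rw [hgc]
  have hmaps : ∀ e ∈ (cGraph G vx vy).edgeSet, ψ e ∈ G.edgeSet \ {s(vx, vy)} := by
    intro e he
    by_cases hG : e ∈ G.edgeSet
    · refine ⟨by simpa [hψ, hG], ?_⟩
      simp only [Set.mem_singleton_iff]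
      intro h
      rw [show ψ e = e from by simp [hψ, hG]] at h
      subst h
      exact cEdge_no_vy he (Sym2.mem_mk_right vx vy)
    · obtain ⟨c, -, hmap, hadj, hc1, hc2⟩ := hvirt e he hG
      refine ⟨by rw [hmap]; exact (mem_edgeSet _).2 hadj, ?_⟩
      simp only [Set.mem_singleton_iff, hmap, Sym2.eq_iff]
      rintro (⟨h, -⟩ | ⟨-, h⟩)
      · exact hne h.symm
      · exact hc1 h
  have hinj : Set.InjOn ψ (cGraph G vx vy).edgeSet := by
    intro e1 he1 e2 he2 heq
    by_cases h1 : e1 ∈ G.edgeSet <;> by_cases h2 : e2 ∈ G.edgeSet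
    · simpa [hψ, h1, h2] using heq
    · obtain ⟨c, -, hmap, -, -, -⟩ := hvirt e2 he2 h2
      rw [hmap] at heq
      have : vy ∈ e1 := by
        rw [show e1 = ψ e1 by simp [hψ, h1], heq]
        exact Sym2.mem_mk_left _ _
      exact absurd this (cEdge_no_vy he1)
    · obtain ⟨c, -, hmap, -, -, -⟩ := hvirt e1 he1 h1
      rw [hmap] at heq
      have : vy ∈ e2 := by
        rw [show e2 = ψ e2 by simp [hψ, h2], ← heq]
        exact Sym2.mem_mk_left _ _
      exact absurd this (cEdge_no_vy he2)
    · obtain ⟨c1, hc1, hmap1, -, -, hcy1⟩ := hvirt e1 he1 h1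
      obtain ⟨c2, hc2, hmap2, -, -, hcy2⟩ := hvirt e2 he2 h2
      rw [hmap1, hmap2, Sym2.eq_iff] at heq
      rcases heq with ⟨-, h⟩ | ⟨h, -⟩
      · rw [hc1, hc2, h]
      · exact absurd h.symm hcy2
  calc (cGraph G vx vy).edgeSet.ncard
      ≤ (G.edgeSet \ {s(vx, vy)}).ncard :=
        Set.ncard_le_ncard_of_injOn ψ hmaps hinj (Set.toFinite _)
    _ < G.edgeSet.ncard := by
        refine Set.ncard_lt_ncard ?_ (Set.toFinite _)
        exact Set.sdiff_singleton_ssubset.2 ((mem_edgeSet _).2 hxy)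

lemma deleteEdges_ncard_lt [Fintype V] (hxy : G.Adj vx vy) :
    (G.deleteEdges {s(vx, vy)}).edgeSet.ncard < G.edgeSet.ncard := by
  rw [edgeSet_deleteEdges]
  refine Set.ncard_lt_ncard ?_ (Set.toFinite _)
  exact Set.sdiff_singleton_ssubset.2 ((mem_edgeSet _).2 hxy)





lemma end_not_mem_takeUntil {a b z : V} {p : G.Walk a b} (hp : p.IsPath)
    (hz : z ∈ p.support) (hne : z ≠ b) : b ∉ (p.takeUntil z hz).support := by
  intro hmem
  have hspec := p.take_spec hz
  have hnd : p.support.Nodup := hp.support_nodup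
  rw [← hspec, Walk.support_append] at hnd
  have hb : b ∈ (p.dropUntil z hz).support := (p.dropUntil z hz).end_mem_support
  rw [(p.dropUntil z hz).support_eq_cons] at hb
  rcases List.mem_cons.1 hb with h | h
  · exact hne h.symm
  · exact (List.disjoint_of_nodup_append hnd) hmem h

lemma start_not_mem_dropUntil {a b z : V} {p : G.Walk a b} (hp : p.IsPath)
    (hz : z ∈ p.support) (hne : z ≠ a) : a ∉ (p.dropUntil z hz).support := by
  intro hmem
  have hspec := p.take_spec hz
  have hnd : p.support.Nodup := hp.support_nodup
  rw [← hspec, Walk.support_append] at hnd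
  have ha : a ∈ (p.takeUntil z hz).support := (p.takeUntil z hz).start_mem_support
  rw [(p.dropUntil z hz).support_eq_cons] at hmem
  rcases List.mem_cons.1 hmem with h | h
  · exact hne (h ▸ rfl)
  · exact (List.disjoint_of_nodup_append hnd) ha h

lemma append_isPath {a b c : V} {p : G.Walk a c} {q : G.Walk c b}
    (hp : p.IsPath) (hq : q.IsPath)
    (hint : ∀ z, z ∈ p.support → z ∈ q.support → z = c) : (p.append q).IsPath := by
  rw [Walk.isPath_def, Walk.support_append, List.nodup_append]
  refine ⟨hp.support_nodup, ?_, ?_⟩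
  · have h2 := hq.support_nodup
    rw [q.support_eq_cons] at h2 ⊢
    exact h2.of_cons
  · rintro z hzp _ hzq rfl
    have hzq' : z ∈ q.support := by
      rw [q.support_eq_cons]; exact List.mem_cons_of_mem _ hzq
    have hzc := hint z hzp hzq'
    subst hzc
    have := hq.support_nodup
    rw [q.support_eq_cons] at this
    exact (List.nodup_cons.1 this).1 hzq

/-- Key disjointness lemma: a path from `A` meeting `X` only at its endpoint `c ∈ X`
and a path to `B` meeting `X` only at its start `c' ∈ X` can only meet at `c = c'`. -/
lemma cross_eq {A B X : Set V} (hX : Seps G A B X)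
    {a c c' b' : V} (ha : a ∈ A) (hb : b' ∈ B) (hc : c ∈ X) (hc' : c' ∈ X)
    {p : G.Walk a c} {q : G.Walk c' b'} (hp : p.IsPath) (hq : q.IsPath)
    (hpX : ∀ z ∈ p.support, z ∈ X → z = c) (hqX : ∀ z ∈ q.support, z ∈ X → z = c')
    {z : V} (hzp : z ∈ p.support) (hzq : z ∈ q.support) : z = c ∧ z = c' := by
  by_cases hzX : z ∈ X
  · exact ⟨hpX z hzp hzX, hqX z hzq hzX⟩
  · exfalso
    have hzc : z ≠ c := fun h => hzX (h ▸ hc)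
    have hzc' : z ≠ c' := fun h => hzX (h ▸ hc')
    obtain ⟨w, hwX, hw⟩ := hX ha hb ((p.takeUntil z hzp).append (q.dropUntil z hzq))
    rw [Walk.mem_support_append_iff] at hw
    rcases hw with hw | hw
    · have := hpX w (p.support_takeUntil_subset hzp hw) hwX
      subst this
      exact end_not_mem_takeUntil hp hzp hzc hw
    · have := hqX w (q.support_dropUntil_subset hzq hw) hwX
      subst this
      exact start_not_mem_dropUntil hq hzq hzc' hw


lemma loop_isPath_eq_nil {v : V} {p : G.Walk v v} (hp : p.IsPath) : p = Walk.nil := by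
  cases p with
  | nil => rfl
  | @cons _ m _ h q =>
      rw [Walk.cons_isPath_iff] at hp
      exact absurd q.end_mem_support hp.2

/-- Extract the two possible adjacency reasons for an edge at `vx` in the contraction. -/
lemma cGraph_adj_at_vx {c : V} (h : (cGraph G vx vy).Adj vx c) :
    (G.Adj vx c ∨ G.Adj vy c) ∧ c ≠ vx ∧ c ≠ vy := by
  obtain ⟨h1, h2, h3, h4⟩ := h
  refine ⟨?_, fun hc => h3 hc.symm, h2⟩
  rcases h4 with h | ⟨-, h⟩ | ⟨h, -⟩
  · exact Or.inl h
  · exact Or.inr h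
  · exact absurd h.symm h3

/-- Lifting a path from the contraction back to `G`. -/
lemma lift_path (hxy : G.Adj vx vy) {A B : Set V} {a2 b2 : V}
    (p : (cGraph G vx vy).Walk a2 b2) (hp : p.IsPath)
    (ha : a2 ∈ cSet vx vy A) (hb : b2 ∈ cSet vx vy B) :
    ∃ (a b : V) (q : G.Walk a b), q.IsPath ∧ a ∈ A ∧ b ∈ B ∧
      (∀ z ∈ q.support, ((z = vx ∨ z = vy) → vx ∈ p.support) ∧
        (z ≠ vx → z ≠ vy → z ∈ p.support)) := by
  have hne : vx ≠ vy := hxy.ne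
  rw [mem_cSet] at ha hb
  have hvyp : vy ∉ p.support := vy_not_mem_support p ha.1 hb.1
  by_cases hvx : vx ∈ p.support
  swap
  · -- vx not on p : direct transfer
    obtain ⟨q, hq⟩ := exists_unproj_walk p hvx hvyp
    have haA : a2 ∈ A := by
      rcases ha.2 with h | ⟨h, -⟩
      · exact h
      · exact absurd (h ▸ p.start_mem_support) hvx
    have hbB : b2 ∈ B := by
      rcases hb.2 with h | ⟨h, -⟩
      · exact h
      · exact absurd (h ▸ p.end_mem_support) hvx
    refine ⟨a2, b2, q, by rw [Walk.isPath_def, hq]; exact hp.support_nodup, haA, hbB, ?_⟩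
    intro z hz
    rw [hq] at hz
    exact ⟨fun h => by rcases h with h | h; exacts [absurd (h ▸ hz) hvx, absurd (h ▸ hz) hvyp],
      fun _ _ => hz⟩
  · -- vx lies on p
    have final : ∀ (a b : V) (q : G.Walk a b), q.IsPath → a ∈ A → b ∈ B →
        (∀ z ∈ q.support, z = vx ∨ z = vy ∨ z ∈ p.support) →
        ∃ (a b : V) (q : G.Walk a b), q.IsPath ∧ a ∈ A ∧ b ∈ B ∧
          (∀ z ∈ q.support, ((z = vx ∨ z = vy) → vx ∈ p.support) ∧
            (z ≠ vx → z ≠ vy → z ∈ p.support)) := by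
      intro a b q hq ha' hb' hsub
      refine ⟨a, b, q, hq, ha', hb', fun z hz => ⟨fun _ => hvx, fun h1 h2 => ?_⟩⟩
      rcases hsub z hz with h | h | h
      · exact absurd h h1
      · exact absurd h h2
      · exact h
    by_cases ha2 : a2 = vx <;> by_cases hb2 : b2 = vx
    · -- both endpoints are vx
      have hAor : vx ∈ A ∨ vy ∈ A := by
        rcases ha.2 with h | ⟨-, h⟩; exacts [Or.inl (ha2 ▸ h), Or.inr h]
      have hBor : vx ∈ B ∨ vy ∈ B := by
        rcases hb.2 with h | ⟨-, h⟩; exacts [Or.inl (hb2 ▸ h), Or.inr h]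
      by_cases hxA : vx ∈ A <;> by_cases hxB : vx ∈ B
      · exact final vx vx Walk.nil IsPath.nil hxA hxB (by simp)
      · refine final vx vy (Walk.cons hxy Walk.nil) ?_ hxA (hBor.resolve_left hxB)
          (by simp)
        simp [Walk.cons_isPath_iff, hne]
      · refine final vy vx (Walk.cons hxy.symm Walk.nil) ?_ (hAor.resolve_left hxA) hxB
          (by simp)
        simp [Walk.cons_isPath_iff, hne.symm]
      · exact final vy vy Walk.nil IsPath.nil (hAor.resolve_left hxA)
          (hBor.resolve_left hxB) (by simp)
    · -- a2 = vx, b2 ≠ vx : decompose p from the front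
      have hAor : vx ∈ A ∨ vy ∈ A := by
        rcases ha.2 with h | ⟨-, h⟩; exacts [Or.inl (ha2 ▸ h), Or.inr h]
      have hbB : b2 ∈ B := by
        rcases hb.2 with h | ⟨h, -⟩; exacts [h, absurd h hb2]
      have hps : (p.copy ha2 rfl).support = p.support := Walk.support_copy p ha2 rfl
      obtain ⟨c2, h2, q2, hpe⟩ := Walk.exists_eq_cons_of_ne (fun h => hb2 h.symm) (p.copy ha2 rfl)
      obtain ⟨hadj2, hc2x, hc2y⟩ := cGraph_adj_at_vx h2
      have hq2path : q2.IsPath ∧ vx ∉ q2.support := by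
        have := (Walk.isPath_copy p ha2 rfl).2 hp
        rw [hpe, Walk.cons_isPath_iff] at this; exact this
      have hvyq2 : vy ∉ q2.support := fun h => hvyp (by rw [← hps, hpe]; simp [h])
      obtain ⟨RG, hRG⟩ := exists_unproj_walk q2 hq2path.2 hvyq2
      have hRGpath : RG.IsPath := by rw [Walk.isPath_def, hRG]; exact hq2path.1.support_nodup
      have hsubq2 : ∀ z ∈ q2.support, z ∈ p.support := by
        intro z hz; rw [← hps, hpe]; simp [hz]
      rcases hadj2 with hreal | hvirt
      · by_cases hxA : vx ∈ A
        · refine final vx b2 (Walk.cons hreal RG) ?_ hxA hbB ?_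
          · rw [Walk.cons_isPath_iff, hRG]
            exact ⟨hRGpath, hq2path.2⟩
          · intro z hz
            rcases List.mem_cons.1 (by simpa using hz) with h | h
            · exact Or.inl h
            · exact Or.inr (Or.inr (hsubq2 z (hRG ▸ h)))
        · refine final vy b2 (Walk.cons hxy.symm (Walk.cons hreal RG)) ?_
            (hAor.resolve_left hxA) hbB ?_
          · rw [Walk.cons_isPath_iff, Walk.cons_isPath_iff, hRG]
            refine ⟨⟨hRGpath, hq2path.2⟩, ?_⟩
            simp only [support_cons, List.mem_cons]
            rintro (h | h)
            · exact hne h.symm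
            · exact hvyq2 (hRG ▸ h)
          · intro z hz
            simp only [support_cons, List.mem_cons] at hz
            rcases hz with h | h | h
            · exact Or.inr (Or.inl h)
            · exact Or.inl h
            · exact Or.inr (Or.inr (hsubq2 z (hRG ▸ h)))
      · by_cases hyA : vy ∈ A
        · refine final vy b2 (Walk.cons hvirt RG) ?_ hyA hbB ?_
          · rw [Walk.cons_isPath_iff, hRG]
            exact ⟨hRGpath, hvyq2⟩
          · intro z hz
            rcases List.mem_cons.1 (by simpa using hz) with h | h
            · exact Or.inr (Or.inl h)
            · exact Or.inr (Or.inr (hsubq2 z (hRG ▸ h)))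
        · have hxA : vx ∈ A := hAor.resolve_right hyA
          refine final vx b2 (Walk.cons hxy (Walk.cons hvirt RG)) ?_ hxA hbB ?_
          · rw [Walk.cons_isPath_iff, Walk.cons_isPath_iff, hRG]
            refine ⟨⟨hRGpath, hvyq2⟩, ?_⟩
            simp only [support_cons, List.mem_cons]
            rintro (h | h)
            · exact hne h
            · exact hq2path.2 (hRG ▸ h)
          · intro z hz
            simp only [support_cons, List.mem_cons] at hz
            rcases hz with h | h | h
            · exact Or.inl h
            · exact Or.inr (Or.inl h)
            · exact Or.inr (Or.inr (hsubq2 z (hRG ▸ h)))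
    · -- b2 = vx, a2 ≠ vx : decompose p from the back (use reverse)
      have hBor : vx ∈ B ∨ vy ∈ B := by
        rcases hb.2 with h | ⟨-, h⟩; exacts [Or.inl (hb2 ▸ h), Or.inr h]
      have haA : a2 ∈ A := by
        rcases ha.2 with h | ⟨h, -⟩; exacts [h, absurd h ha2]
      have hps : (p.copy rfl hb2).support = p.support := Walk.support_copy p rfl hb2
      obtain ⟨c1, h1, q1, hpe⟩ :=
        Walk.exists_eq_cons_of_ne (fun h => ha2 h.symm) (p.copy rfl hb2).reverse
      obtain ⟨hadj1, hc1x, hc1y⟩ := cGraph_adj_at_vx h1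
      have hq1path : q1.IsPath ∧ vx ∉ q1.support := by
        have := ((Walk.isPath_copy p rfl hb2).2 hp).reverse
        rw [hpe, Walk.cons_isPath_iff] at this; exact this
      have hsubq1 : ∀ z ∈ q1.support, z ∈ p.support := by
        intro z hz
        have h3 : z ∈ (p.copy rfl hb2).reverse.support := by rw [hpe]; simp [hz]
        rw [Walk.support_reverse, List.mem_reverse, hps] at h3
        exact h3
      have hvyq1 : vy ∉ q1.support := fun h => hvyp (hsubq1 vy h)
      obtain ⟨LGr, hLGr⟩ := exists_unproj_walk q1 hq1path.2 hvyq1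
      have hLGrpath : LGr.IsPath := by rw [Walk.isPath_def, hLGr]; exact hq1path.1.support_nodup
      rcases hadj1 with hreal | hvirt
      · by_cases hxB : vx ∈ B
        · refine final a2 vx (Walk.cons hreal LGr).reverse ?_ haA hxB ?_
          · refine IsPath.reverse ?_
            rw [Walk.cons_isPath_iff, hLGr]
            exact ⟨hLGrpath, hq1path.2⟩
          · intro z hz
            rw [Walk.support_reverse, List.mem_reverse] at hz
            rcases List.mem_cons.1 (by simpa using hz) with h | h
            · exact Or.inl h
            · exact Or.inr (Or.inr (hsubq1 z (hLGr ▸ h)))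
        · refine final a2 vy (Walk.cons hxy.symm (Walk.cons hreal LGr)).reverse ?_ haA
            (hBor.resolve_left hxB) ?_
          · refine IsPath.reverse ?_
            rw [Walk.cons_isPath_iff, Walk.cons_isPath_iff, hLGr]
            refine ⟨⟨hLGrpath, hq1path.2⟩, ?_⟩
            simp only [support_cons, List.mem_cons]
            rintro (h | h)
            · exact hne h.symm
            · exact hvyq1 (hLGr ▸ h)
          · intro z hz
            rw [Walk.support_reverse, List.mem_reverse] at hz
            simp only [support_cons, List.mem_cons] at hz
            rcases hz with h | h | h
            · exact Or.inr (Or.inl h)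
            · exact Or.inl h
            · exact Or.inr (Or.inr (hsubq1 z (hLGr ▸ h)))
      · by_cases hyB : vy ∈ B
        · refine final a2 vy (Walk.cons hvirt LGr).reverse ?_ haA hyB ?_
          · refine IsPath.reverse ?_
            rw [Walk.cons_isPath_iff, hLGr]
            exact ⟨hLGrpath, hvyq1⟩
          · intro z hz
            rw [Walk.support_reverse, List.mem_reverse] at hz
            rcases List.mem_cons.1 (by simpa using hz) with h | h
            · exact Or.inr (Or.inl h)
            · exact Or.inr (Or.inr (hsubq1 z (hLGr ▸ h)))
        · have hxB : vx ∈ B := hBor.resolve_right hyB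
          refine final a2 vx (Walk.cons hxy (Walk.cons hvirt LGr)).reverse ?_ haA hxB ?_
          · refine IsPath.reverse ?_
            rw [Walk.cons_isPath_iff, Walk.cons_isPath_iff, hLGr]
            refine ⟨⟨hLGrpath, hvyq1⟩, ?_⟩
            simp only [support_cons, List.mem_cons]
            rintro (h | h)
            · exact hne h
            · exact hq1path.2 (hLGr ▸ h)
          · intro z hz
            rw [Walk.support_reverse, List.mem_reverse] at hz
            simp only [support_cons, List.mem_cons] at hz
            rcases hz with h | h | h
            · exact Or.inl h
            · exact Or.inr (Or.inl h)
            · exact Or.inr (Or.inr (hsubq1 z (hLGr ▸ h)))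
    · -- both endpoints differ from vx : split at vx
      have haA : a2 ∈ A := by
        rcases ha.2 with h | ⟨h, -⟩; exacts [h, absurd h ha2]
      have hbB : b2 ∈ B := by
        rcases hb.2 with h | ⟨h, -⟩; exacts [h, absurd h hb2]
      have hp1path : (p.takeUntil vx hvx).IsPath := hp.takeUntil hvx
      have hp2path : (p.dropUntil vx hvx).IsPath := hp.dropUntil hvx
      have hnd : ((p.takeUntil vx hvx).support ++ (p.dropUntil vx hvx).support.tail).Nodup := by
        rw [← Walk.support_append, p.take_spec hvx]; exact hp.support_nodup
      have hdisj12 : ∀ z, z ∈ (p.takeUntil vx hvx).support →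
          z ∈ (p.dropUntil vx hvx).support.tail → False :=
        fun z h1 h2 => (List.disjoint_of_nodup_append hnd) h1 h2
      obtain ⟨c2, h2, q2, hpe2⟩ :=
        Walk.exists_eq_cons_of_ne (fun h => hb2 h.symm) (p.dropUntil vx hvx)
      obtain ⟨c1, h1, q1, hpe1⟩ :=
        Walk.exists_eq_cons_of_ne (fun h => ha2 h.symm) (p.takeUntil vx hvx).reverse
      obtain ⟨hadj1, hc1x, hc1y⟩ := cGraph_adj_at_vx h1
      obtain ⟨hadj2, hc2x, hc2y⟩ := cGraph_adj_at_vx h2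
      have hq1path : q1.IsPath ∧ vx ∉ q1.support := by
        have := hp1path.reverse; rw [hpe1, Walk.cons_isPath_iff] at this; exact this
      have hq2path : q2.IsPath ∧ vx ∉ q2.support := by
        have := hp2path; rw [hpe2, Walk.cons_isPath_iff] at this; exact this
      have hsubq1 : ∀ z ∈ q1.support, z ∈ (p.takeUntil vx hvx).support := by
        intro z hz
        have : z ∈ (p.takeUntil vx hvx).reverse.support := by rw [hpe1]; simp [hz]
        simpa using this
      have hsubq1p : ∀ z ∈ q1.support, z ∈ p.support :=
        fun z hz => p.support_takeUntil_subset hvx (hsubq1 z hz)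
      have hq2tail : ∀ z ∈ q2.support, z ∈ (p.dropUntil vx hvx).support.tail := by
        intro z hz
        have h4 : (p.dropUntil vx hvx).support = vx :: q2.support := by rw [hpe2]; simp
        rw [h4, List.tail_cons]; exact hz
      have hsubq2p : ∀ z ∈ q2.support, z ∈ p.support := by
        intro z hz
        refine p.support_dropUntil_subset hvx ?_
        rw [hpe2]; simp [hz]
      have hvyq1 : vy ∉ q1.support := fun h => hvyp (hsubq1p vy h)
      have hvyq2 : vy ∉ q2.support := fun h => hvyp (hsubq2p vy h)
      have hq1q2 : ∀ z, z ∈ q1.support → z ∈ q2.support → False :=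
        fun z h1' h2' => hdisj12 z (hsubq1 z h1') (hq2tail z h2')
      obtain ⟨LGr, hLGr⟩ := exists_unproj_walk q1 hq1path.2 hvyq1
      obtain ⟨RG, hRG⟩ := exists_unproj_walk q2 hq2path.2 hvyq2
      have hLGrpath : LGr.IsPath := by rw [Walk.isPath_def, hLGr]; exact hq1path.1.support_nodup
      have hRGpath : RG.IsPath := by rw [Walk.isPath_def, hRG]; exact hq2path.1.support_nodup
      have hLGpath : LGr.reverse.IsPath := hLGrpath.reverse
      have hc1q1 : c1 ∈ q1.support := q1.start_mem_support
      have hc2q2 : c2 ∈ q2.support := q2.start_mem_support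
      -- build the middle + right part `rest : G.Walk c1 b2` in each of 4 cases,
      -- then q := LGr.reverse.append rest
      have hbuild : ∀ rest : G.Walk c1 b2, rest.IsPath →
          (∀ z ∈ rest.support, z = c1 ∨ z = vx ∨ z = vy ∨ z ∈ q2.support) →
          (c1 ∉ rest.support.tail) →
          ∃ (a b : V) (q : G.Walk a b), q.IsPath ∧ a ∈ A ∧ b ∈ B ∧
            (∀ z ∈ q.support, ((z = vx ∨ z = vy) → vx ∈ p.support) ∧
              (z ≠ vx → z ≠ vy → z ∈ p.support)) := by
        intro rest hrest hrsub hc1tl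
        refine final a2 b2 (LGr.reverse.append rest) ?_ haA hbB ?_
        · refine append_isPath hLGpath hrest ?_
          intro z hzL hzR
          rw [Walk.support_reverse, List.mem_reverse, hLGr] at hzL
          rcases hrsub z hzR with h | h | h | h
          · exact h
          · exact absurd (h ▸ hzL) hq1path.2
          · exact absurd (h ▸ hzL) hvyq1
          · exact absurd h (fun h' => hq1q2 z hzL h')
        · intro z hz
          rw [Walk.mem_support_append_iff] at hz
          rcases hz with hz | hz
          · rw [Walk.support_reverse, List.mem_reverse, hLGr] at hz
            exact Or.inr (Or.inr (hsubq1p z hz))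
          · rcases hrsub z hz with h | h | h | h
            · exact Or.inr (Or.inr (h ▸ hsubq1p c1 hc1q1))
            · exact Or.inl h
            · exact Or.inr (Or.inl h)
            · exact Or.inr (Or.inr (hsubq2p z h))
      have hc1c2 : c1 ≠ c2 := fun h => hq1q2 c1 hc1q1 (h ▸ hc2q2)
      have hc1RG : c1 ∉ RG.support := by rw [hRG]; exact fun h => hq1q2 c1 hc1q1 h
      have hvxRG : vx ∉ RG.support := by rw [hRG]; exact hq2path.2
      have hvyRG : vy ∉ RG.support := by rw [hRG]; exact hvyq2
      rcases hadj1 with h1r | h1v <;> rcases hadj2 with h2r | h2v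
      · -- real, real : c1 - vx - c2
        refine hbuild (Walk.cons h1r.symm (Walk.cons h2r RG)) ?_ ?_ ?_
        · rw [Walk.cons_isPath_iff, Walk.cons_isPath_iff]
          refine ⟨⟨hRGpath, hvxRG⟩, ?_⟩
          simp only [support_cons, List.mem_cons]
          rintro (h | h)
          · exact hc1x h
          · exact hc1RG h
        · intro z hz
          simp only [support_cons, List.mem_cons] at hz
          rcases hz with h | h | h
          · exact Or.inl h
          · exact Or.inr (Or.inl h)
          · exact Or.inr (Or.inr (Or.inr (hRG ▸ h)))
        · simp only [support_cons, List.tail_cons, List.mem_cons]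
          rintro (h | h)
          · exact hc1x h
          · exact hc1RG h
      · -- real, virtual : c1 - vx - vy - c2
        refine hbuild (Walk.cons h1r.symm (Walk.cons hxy (Walk.cons h2v RG))) ?_ ?_ ?_
        · rw [Walk.cons_isPath_iff, Walk.cons_isPath_iff, Walk.cons_isPath_iff]
          refine ⟨⟨⟨hRGpath, hvyRG⟩, ?_⟩, ?_⟩
          · simp only [support_cons, List.mem_cons]
            rintro (h | h)
            · exact hne h
            · exact hvxRG h
          · simp only [support_cons, List.mem_cons]
            rintro (h | h | h)
            · exact hc1x h
            · exact hc1y h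
            · exact hc1RG h
        · intro z hz
          simp only [support_cons, List.mem_cons] at hz
          rcases hz with h | h | h | h
          · exact Or.inl h
          · exact Or.inr (Or.inl h)
          · exact Or.inr (Or.inr (Or.inl h))
          · exact Or.inr (Or.inr (Or.inr (hRG ▸ h)))
        · simp only [support_cons, List.tail_cons, List.mem_cons]
          rintro (h | h | h)
          · exact hc1x h
          · exact hc1y h
          · exact hc1RG h
      · -- virtual, real : c1 - vy - vx - c2
        refine hbuild (Walk.cons h1v.symm (Walk.cons hxy.symm (Walk.cons h2r RG))) ?_ ?_ ?_
        · rw [Walk.cons_isPath_iff, Walk.cons_isPath_iff, Walk.cons_isPath_iff]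
          refine ⟨⟨⟨hRGpath, hvxRG⟩, ?_⟩, ?_⟩
          · simp only [support_cons, List.mem_cons]
            rintro (h | h)
            · exact hne h.symm
            · exact hvyRG h
          · simp only [support_cons, List.mem_cons]
            rintro (h | h | h)
            · exact hc1y h
            · exact hc1x h
            · exact hc1RG h
        · intro z hz
          simp only [support_cons, List.mem_cons] at hz
          rcases hz with h | h | h | h
          · exact Or.inl h
          · exact Or.inr (Or.inr (Or.inl h))
          · exact Or.inr (Or.inl h)
          · exact Or.inr (Or.inr (Or.inr (hRG ▸ h)))
        · simp only [support_cons, List.tail_cons, List.mem_cons]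
          rintro (h | h | h)
          · exact hc1y h
          · exact hc1x h
          · exact hc1RG h
      · -- virtual, virtual : c1 - vy - c2
        refine hbuild (Walk.cons h1v.symm (Walk.cons h2v RG)) ?_ ?_ ?_
        · rw [Walk.cons_isPath_iff, Walk.cons_isPath_iff]
          refine ⟨⟨hRGpath, hvyRG⟩, ?_⟩
          simp only [support_cons, List.mem_cons]
          rintro (h | h)
          · exact hc1y h
          · exact hc1RG h
        · intro z hz
          simp only [support_cons, List.mem_cons] at hz
          rcases hz with h | h | h
          · exact Or.inl h
          · exact Or.inr (Or.inr (Or.inl h))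
          · exact Or.inr (Or.inr (Or.inr (hRG ▸ h)))
        · simp only [support_cons, List.tail_cons, List.mem_cons]
          rintro (h | h)
          · exact hc1y h
          · exact hc1RG h



/-- Menger's theorem (hard direction), by strong induction on the number of edges. -/
theorem menger_aux [Fintype V] :
    ∀ (n : ℕ) (G : SimpleGraph V) (A B : Set V) (k : ℕ), G.edgeSet.ncard = n →
      (∀ C : Set V, Seps G A B C → k ≤ C.ncard) → DisjPaths G A B k := by
  intro n
  induction n using Nat.strong_induction_on with
  | _ n IH =>
  intro G A B k hn hsep
  by_cases hE : G.edgeSet = ∅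
  · -- base case : no edges, take k trivial paths in A ∩ B
    have hSep : Seps G A B (A ∩ B) := by
      intro u v hu hv p
      obtain ⟨huv, hsupp⟩ := walk_eq_nil_of_no_edges hE p
      exact ⟨u, ⟨hu, huv ▸ hv⟩, by simp [hsupp]⟩
    obtain ⟨t, hts, htc⟩ := Set.exists_subset_card_eq (hsep _ hSep)
    have hfin : t.Finite := Set.toFinite t
    have hcard : hfin.toFinset.card = k := by
      rw [← Set.ncard_eq_toFinset_card _ hfin, htc]
    let e := hfin.toFinset.equivFinOfCardEq hcard
    refine ⟨fun i => (e.symm i : V), fun i => (e.symm i : V), fun i => Walk.nil,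
      fun i => IsPath.nil, ?_, ?_, ?_⟩
    · intro i
      exact (hts (hfin.mem_toFinset.1 (e.symm i).2)).1
    · intro i
      exact (hts (hfin.mem_toFinset.1 (e.symm i).2)).2
    · intro i j hij z hzi hzj
      simp only [support_nil, List.mem_singleton] at hzi hzj
      refine hij ?_
      have : e.symm i = e.symm j := Subtype.ext (hzi ▸ hzj ▸ rfl)
      simpa using congrArg e this
  · -- inductive case : pick an edge
    obtain ⟨ed, hed⟩ := Set.nonempty_iff_ne_empty.2 hE
    revert hed
    refine Sym2.ind (fun vx vy hed => ?_) ed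
    have hxy : G.Adj vx vy := (mem_edgeSet G).1 hed
    by_cases hC : ∃ C : Set V, Seps (cGraph G vx vy) (cSet vx vy A) (cSet vx vy B) C ∧
        C.ncard < k
    · -- a small separator in the contraction : get a min separator X containing vx, vy
      obtain ⟨C, hCsep, hClt⟩ := hC
      have hC'sep : Seps (cGraph G vx vy) (cSet vx vy A) (cSet vx vy B) (C \ {vy}) := by
        intro u v hu hv p
        obtain ⟨c, hcC, hcp⟩ := hCsep hu hv p
        have hvyp : vy ∉ p.support :=
          vy_not_mem_support p (mem_cSet.1 hu).1 (mem_cSet.1 hv).1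
        exact ⟨c, ⟨hcC, fun h => hvyp (h ▸ hcp)⟩, hcp⟩
      have hC'card : (C \ {vy}).ncard ≤ C.ncard :=
        Set.ncard_le_ncard Set.diff_subset (Set.toFinite _)
      have hvxC' : vx ∈ C \ {vy} := by
        by_contra hvxC'
        have hsepC' : Seps G A B (C \ {vy}) := by
          intro u v hu hv p
          obtain ⟨q, hq⟩ := exists_proj_walk hxy p
          obtain ⟨c, hcC, hcq⟩ := hC'sep (cMap_mem_cSet hxy.ne hu) (cMap_mem_cSet hxy.ne hv) q
          obtain ⟨w, hwp, hwc⟩ := hq c hcq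
          by_cases hw : w = vy
          · rw [hw, cMap_vy] at hwc
            exact absurd (hwc ▸ hcC) hvxC'
          · rw [cMap_of_ne hw] at hwc
            exact ⟨w, hwc ▸ hcC, hwp⟩
        have := hsep _ hsepC'
        omega
      have hXsep : Seps G A B (insert vy (C \ {vy})) := by
        intro u v hu hv p
        obtain ⟨q, hq⟩ := exists_proj_walk hxy p
        obtain ⟨c, hcC, hcq⟩ := hC'sep (cMap_mem_cSet hxy.ne hu) (cMap_mem_cSet hxy.ne hv) q
        obtain ⟨w, hwp, hwc⟩ := hq c hcq
        by_cases hw : w = vy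
        · exact ⟨w, by simp [hw], hwp⟩
        · rw [cMap_of_ne hw] at hwc
          exact ⟨w, Set.mem_insert_of_mem _ (hwc ▸ hcC), hwp⟩
      have hXcard : (insert vy (C \ {vy})).ncard = k := by
        have h1 := hsep _ hXsep
        have h2 := Set.ncard_insert_le vy (C \ {vy})
        omega
      -- now reason in G minus the edge vx-vy
      have hG'lt : (G.deleteEdges {s(vx, vy)}).edgeSet.ncard < n :=
        hn ▸ deleteEdges_ncard_lt hxy
      set X := insert vy (C \ {vy}) with hX
      have hvyX : vy ∈ X := Set.mem_insert _ _
      have hvxX : vx ∈ X := Set.mem_insert_of_mem _ hvxC'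
      -- separator condition on the A-side
      have hfirst : ∀ (u v : V) (p : G.Walk u v), (∃ c ∈ X, c ∈ p.support) →
          ∃ c ∈ X, ∃ q : G.Walk u c,
            (∀ z ∈ q.support, z ∈ p.support) ∧
            (∀ f ∈ q.edges, f ∈ (G.deleteEdges {s(vx, vy)}).edgeSet) ∧
            (∀ z ∈ q.support, z ∈ X → z = c) := by
        intro u v p hhit
        obtain ⟨c, hcX, q, hqsub, hqed, hqonly, -⟩ := exists_firstHit X p hhit
        refine ⟨c, hcX, q, hqsub, ?_, hqonly⟩
        intro f hf
        rw [edgeSet_deleteEdges]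
        refine ⟨q.edges_subset_edgeSet hf, ?_⟩
        simp only [Set.mem_singleton_iff]
        intro hfe
        subst hfe
        have h1 := hqonly vx (q.fst_mem_support_of_mem_edges hf) hvxX
        have h2 := hqonly vy (q.snd_mem_support_of_mem_edges hf) hvyX
        exact hxy.ne (h1.trans h2.symm)
      have hsepL : ∀ Z : Set V, Seps (G.deleteEdges {s(vx, vy)}) A X Z → k ≤ Z.ncard := by
        intro Z hZ
        refine hsep Z ?_
        intro u v hu hv p
        obtain ⟨c0, hc0X, hcp⟩ := hXsep hu hv p
        obtain ⟨c, hcX, q, hqsub, hqed, -⟩ := hfirst u v p ⟨c0, hc0X, hcp⟩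
        obtain ⟨c', hcZ, hc'q⟩ := hZ hu hcX (q.transfer _ hqed)
        rw [Walk.support_transfer] at hc'q
        exact ⟨c', hcZ, hqsub c' hc'q⟩
      have hsepR : ∀ Z : Set V, Seps (G.deleteEdges {s(vx, vy)}) X B Z → k ≤ Z.ncard := by
        intro Z hZ
        refine hsep Z ?_
        intro u v hu hv p
        obtain ⟨c0, hc0X, hcp⟩ := hXsep hu hv p
        obtain ⟨c, hcX, q, hqsub, hqed, -⟩ := hfirst v u p.reverse
          ⟨c0, hc0X, by rw [Walk.support_reverse, List.mem_reverse]; exact hcp⟩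
        -- q : G.Walk v c ; use its reverse, from X to B
        obtain ⟨c', hcZ, hc'q⟩ := hZ hcX hv ((q.transfer _ hqed).reverse)
        rw [Walk.support_reverse, List.mem_reverse, Walk.support_transfer] at hc'q
        have := hqsub c' hc'q
        rw [Walk.support_reverse, List.mem_reverse] at this
        exact ⟨c', hcZ, this⟩
      -- apply the induction hypothesis on both sides of X
      obtain ⟨aL, cL, PL, hPLpath, hPLa, hPLX, hPLdisj⟩ :=
        IH _ hG'lt (G.deleteEdges {s(vx, vy)}) A X k rfl hsepL
      obtain ⟨cR, bR, PR, hPRpath, hPRX, hPRb, hPRdisj⟩ :=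
        IH _ hG'lt (G.deleteEdges {s(vx, vy)}) X B k rfl hsepR
      have hGle : ∀ {u v : V} (w : (G.deleteEdges {s(vx, vy)}).Walk u v),
          ∀ f ∈ w.edges, f ∈ G.edgeSet := by
        intro u v w f hf
        have := w.edges_subset_edgeSet hf
        rw [edgeSet_deleteEdges] at this
        exact this.1
      -- truncate left paths at their first X-vertex
      have keyL : ∀ i, ∃ c, c ∈ X ∧ ∃ q : G.Walk (aL i) c, q.IsPath ∧
          (∀ z ∈ q.support, z ∈ (PL i).support) ∧ (∀ z ∈ q.support, z ∈ X → z = c) := by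
        intro i
        have hPG : ((PL i).transfer G (hGle _)).support = (PL i).support :=
          Walk.support_transfer _ _
        obtain ⟨c, hcX, q, hsub, -, honly, hqp⟩ :=
          exists_firstHit X ((PL i).transfer G (hGle _))
            ⟨cL i, hPLX i, by rw [hPG]; exact (PL i).end_mem_support⟩
        refine ⟨c, hcX, q, hqp ((hPLpath i).transfer _), ?_, honly⟩
        intro z hz
        have := hsub z hz
        rwa [hPG] at this
      -- truncate right paths at their last X-vertex (first along the reverse)
      have keyR : ∀ i, ∃ c, c ∈ X ∧ ∃ q : G.Walk c (bR i), q.IsPath ∧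
          (∀ z ∈ q.support, z ∈ (PR i).support) ∧ (∀ z ∈ q.support, z ∈ X → z = c) := by
        intro i
        have hPG : ((PR i).transfer G (hGle _)).support = (PR i).support :=
          Walk.support_transfer _ _
        obtain ⟨c, hcX, q, hsub, -, honly, hqp⟩ :=
          exists_firstHit X ((PR i).transfer G (hGle _)).reverse
            ⟨cR i, hPRX i, by
              rw [Walk.support_reverse, List.mem_reverse, hPG]
              exact (PR i).start_mem_support⟩
        refine ⟨c, hcX, q.reverse, (hqp ((hPRpath i).transfer _).reverse).reverse, ?_, ?_⟩
        · intro z hz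
          rw [Walk.support_reverse, List.mem_reverse] at hz
          have := hsub z hz
          rwa [Walk.support_reverse, List.mem_reverse, hPG] at this
        · intro z hz
          rw [Walk.support_reverse, List.mem_reverse] at hz
          exact honly z hz
      choose cL' hcL'X QL hQLpath hQLsub hQLonly using keyL
      choose cR' hcR'X QR hQRpath hQRsub hQRonly using keyR
      have hcLinj : Function.Injective cL' := by
        intro i j hij
        by_contra hne'
        refine hPLdisj i j hne' (cL' i) (hQLsub i _ (QL i).end_mem_support) ?_
        refine hQLsub j _ ?_
        rw [hij]
        exact (QL j).end_mem_support
      have hcRinj : Function.Injective cR' := by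
        intro i j hij
        by_contra hne'
        refine hPRdisj i j hne' (cR' i) (hQRsub i _ (QR i).start_mem_support) ?_
        refine hQRsub j _ ?_
        rw [hij]
        exact (QR j).start_mem_support
      have hrangeR : Set.range cR' = X := by
        refine Set.eq_of_subset_of_ncard_le (Set.range_subset_iff.2 hcR'X) ?_ (Set.toFinite _)
        rw [hXcard]
        have h5 : (Set.range cR').ncard = k := by
          rw [← Set.image_univ, Set.ncard_image_of_injective _ hcRinj, Set.ncard_univ,
            Nat.card_eq_fintype_card, Fintype.card_fin]
        rw [h5]
      have hpair : ∀ i, ∃ j, cR' j = cL' i := by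
        intro i
        have : cL' i ∈ Set.range cR' := by rw [hrangeR]; exact hcL'X i
        exact this
      choose σ hσ using hpair
      have hσinj : Function.Injective σ := fun i j h => hcLinj (by rw [← hσ i, ← hσ j, h])
      -- glue
      refine ⟨aL, fun i => bR (σ i),
        fun i => (QL i).append ((QR (σ i)).copy (hσ i) rfl), ?_, hPLa, fun i => hPRb (σ i), ?_⟩
      · intro i
        refine append_isPath (hQLpath i) (by rw [Walk.isPath_copy]; exact hQRpath (σ i)) ?_
        intro z hzL hzR
        rw [Walk.support_copy] at hzR
        exact (cross_eq hXsep (hPLa i) (hPRb (σ i)) (hcL'X i) (hcR'X (σ i)) (hQLpath i)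
          (hQRpath (σ i)) (hQLonly i) (hQRonly (σ i)) hzL hzR).1
      · intro i j hij z hzi hzj
        rw [Walk.mem_support_append_iff] at hzi hzj
        have hcop : ∀ m z', z' ∈ ((QR (σ m)).copy (hσ m) rfl).support ↔
            z' ∈ (QR (σ m)).support := by
          intro m z'
          rw [Walk.support_copy]
        rcases hzi with hzi | hzi <;> rcases hzj with hzj | hzj
        · exact hPLdisj i j hij z (hQLsub i z hzi) (hQLsub j z hzj)
        · rw [hcop] at hzj
          obtain ⟨h1, h2⟩ := cross_eq hXsep (hPLa i) (hPRb (σ j)) (hcL'X i) (hcR'X (σ j))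
            (hQLpath i) (hQRpath (σ j)) (hQLonly i) (hQRonly (σ j)) hzi hzj
          exact hij (hcLinj (h1 ▸ h2 ▸ (hσ j)))
        · rw [hcop] at hzi
          obtain ⟨h1, h2⟩ := cross_eq hXsep (hPLa j) (hPRb (σ i)) (hcL'X j) (hcR'X (σ i))
            (hQLpath j) (hQRpath (σ i)) (hQLonly j) (hQRonly (σ i)) hzj hzi
          exact hij (hcLinj (h1 ▸ h2 ▸ (hσ i))).symm
        · rw [hcop] at hzi hzj
          exact hPRdisj (σ i) (σ j) (fun h => hij (hσinj h)) z
            (hQRsub (σ i) z hzi) (hQRsub (σ j) z hzj)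

    · -- no small separator in the contraction : induct there and lift
      have hsep2 : ∀ C : Set V, Seps (cGraph G vx vy) (cSet vx vy A) (cSet vx vy B) C →
          k ≤ C.ncard := fun C hc => le_of_not_gt (fun hlt => hC ⟨C, hc, hlt⟩)
      have hlt : (cGraph G vx vy).edgeSet.ncard < n := hn ▸ cGraph_ncard_lt hxy
      obtain ⟨a2, b2, P2, hP2path, hP2a, hP2b, hP2disj⟩ :=
        IH _ hlt (cGraph G vx vy) (cSet vx vy A) (cSet vx vy B) k rfl hsep2
      have key : ∀ i, ∃ (a b : V) (q : G.Walk a b), q.IsPath ∧ a ∈ A ∧ b ∈ B ∧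
          (∀ z ∈ q.support, ((z = vx ∨ z = vy) → vx ∈ (P2 i).support) ∧
            (z ≠ vx → z ≠ vy → z ∈ (P2 i).support)) :=
        fun i => lift_path hxy (P2 i) (hP2path i) (hP2a i) (hP2b i)
      choose fa fb fq hqpath hqa hqb hqsupp using key
      refine ⟨fa, fb, fq, hqpath, hqa, hqb, ?_⟩
      intro i j hij z hzi hzj
      by_cases hzx : z = vx ∨ z = vy
      · exact hP2disj i j hij vx ((hqsupp i z hzi).1 hzx) ((hqsupp j z hzj).1 hzx)
      · push_neg at hzx
        exact hP2disj i j hij z ((hqsupp i z hzi).2 hzx.1 hzx.2)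
          ((hqsupp j z hzj).2 hzx.1 hzx.2)



/-- Menger's theorem, fan version: paths from a vertex `x` to a set `B`. -/
theorem fan_menger [Fintype V] (G : SimpleGraph V) (x : V) (B : Set V) (k : ℕ)
    (hxB : x ∉ B)
    (hsep : ∀ C : Set V, x ∉ C → (∀ b ∈ B, ∀ p : G.Walk x b, ∃ c ∈ C, c ∈ p.support) →
      k ≤ C.ncard) :
    ∃ (b : Fin k → V) (P : ∀ i, G.Walk x (b i)),
      Function.Injective b ∧ (∀ i, b i ∈ B) ∧ (∀ i, (P i).IsPath) ∧
      (∀ i, ∀ z ∈ (P i).support, z ∈ B → z = b i) ∧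
      (∀ i j, i ≠ j → ∀ z, z ∈ (P i).support → z ∈ (P j).support → z = x) := by
  have hxiso : ∀ w, ¬ (G.deleteEdges {f : Sym2 V | x ∈ f}).Adj x w := by
    intro w h
    rw [deleteEdges_adj] at h
    exact h.2 (Sym2.mem_mk_left x w)
  have hsepGx : ∀ C : Set V, Seps (G.deleteEdges {f : Sym2 V | x ∈ f}) (G.neighborSet x) B C →
      k ≤ C.ncard := by
    intro C hC
    refine le_trans (hsep (C \ {x}) (by simp) ?_)
      (Set.ncard_le_ncard Set.diff_subset (Set.toFinite _))
    intro b hb p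
    have hxp : x ∈ p.reverse.support := by
      rw [Walk.support_reverse, List.mem_reverse]
      exact p.start_mem_support
    have hxb : x ≠ b := fun h => hxB (h ▸ hb)
    obtain ⟨d, hadj, q2, hqe⟩ :=
      Walk.exists_eq_cons_of_ne hxb (p.reverse.takeUntil x hxp).reverse
    have hcount : (p.reverse.takeUntil x hxp).support.count x = 1 :=
      p.reverse.count_support_takeUntil_eq_one hxp
    have hxq2 : x ∉ q2.support := by
      intro hmem
      have h1 : (p.reverse.takeUntil x hxp).reverse.support.count x = 1 := by
        rw [Walk.support_reverse, List.count_reverse]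
        exact hcount
      rw [hqe] at h1
      simp only [Walk.support_cons] at h1
      rw [List.count_cons_self] at h1
      have := List.count_pos_iff.2 hmem  -- 0 < count
      omega
    have hq2ed : ∀ f ∈ q2.edges, f ∈ (G.deleteEdges {f : Sym2 V | x ∈ f}).edgeSet := by
      intro f hf
      rw [edgeSet_deleteEdges]
      refine ⟨q2.edges_subset_edgeSet hf, ?_⟩
      simp only [Set.mem_setOf_eq]
      intro hxf
      revert hf hxf
      refine Sym2.ind (fun u v hf hxf => ?_) f
      rw [Sym2.mem_iff] at hxf
      rcases hxf with h | h
      · subst h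
        exact hxq2 (q2.fst_mem_support_of_mem_edges hf)
      · subst h
        exact hxq2 (q2.snd_mem_support_of_mem_edges hf)
    obtain ⟨c, hcC, hcq⟩ := hC hadj hb (q2.transfer _ hq2ed)
    rw [Walk.support_transfer] at hcq
    refine ⟨c, ⟨hcC, fun h => hxq2 (by simpa using h ▸ hcq)⟩, ?_⟩
    have h1 : c ∈ (p.reverse.takeUntil x hxp).reverse.support := by
      rw [hqe]
      simp [hcq]
    rw [Walk.support_reverse, List.mem_reverse] at h1
    have h2 := p.reverse.support_takeUntil_subset hxp h1
    rw [Walk.support_reverse, List.mem_reverse] at h2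
    exact h2
  obtain ⟨a, bb0, P, hPpath, hPa, hPb, hPdisj⟩ :=
    menger_aux _ (G.deleteEdges {f : Sym2 V | x ∈ f}) (G.neighborSet x) B k rfl hsepGx
  have hPa' : ∀ i, G.Adj x (a i) := hPa
  have hax : ∀ i, a i ≠ x := by
    intro i h
    exact G.loopless.irrefl x (h ▸ hPa' i)
  have hxnot : ∀ i, x ∉ (P i).support := by
    intro i hx
    have := isolated_mem_support hxiso (P i) (hax i) hx
    exact hxB (this ▸ hPb i)
  have hGle : ∀ {u v : V} (w : (G.deleteEdges {f : Sym2 V | x ∈ f}).Walk u v),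
      ∀ f ∈ w.edges, f ∈ G.edgeSet := by
    intro u v w f hf
    have := w.edges_subset_edgeSet hf
    rw [edgeSet_deleteEdges] at this
    exact this.1
  have key : ∀ i, ∃ c, c ∈ B ∧ ∃ q : G.Walk x c, q.IsPath ∧
      (∀ z ∈ q.support, z = x ∨ z ∈ (P i).support) ∧ (∀ z ∈ q.support, z ∈ B → z = c) := by
    intro i
    have hPG : ((P i).transfer G (hGle _)).support = (P i).support :=
      Walk.support_transfer _ _
    have hWpath : (Walk.cons (hPa' i) ((P i).transfer G (hGle _))).IsPath := by
      rw [Walk.cons_isPath_iff]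
      exact ⟨(hPpath i).transfer _, fun h => hxnot i (hPG ▸ h)⟩
    obtain ⟨c, hcB, q, hsub, -, honly, hqp⟩ :=
      exists_firstHit B (Walk.cons (hPa' i) ((P i).transfer G (hGle _)))
        ⟨bb0 i, hPb i, by
          simp only [Walk.support_cons, List.mem_cons]
          exact Or.inr (hPG ▸ ((P i).transfer G (hGle _)).end_mem_support)⟩
    refine ⟨c, hcB, q, hqp hWpath, ?_, honly⟩
    intro z hz
    have := hsub z hz
    simp only [Walk.support_cons, List.mem_cons] at this
    rcases this with h | h
    · exact Or.inl h
    · exact Or.inr (hPG ▸ h)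
  choose bb hbbB Q hQpath hQsub hQonly using key
  refine ⟨bb, Q, ?_, hbbB, hQpath, hQonly, ?_⟩
  · intro i j hij
    by_contra hne'
    have hbx : bb i ≠ x := fun h => hxB (h ▸ hbbB i)
    have h1 : bb i ∈ (Q i).support := (Q i).end_mem_support
    have h2 : bb i ∈ (Q j).support := by rw [hij]; exact (Q j).end_mem_support
    rcases hQsub i _ h1 with h | h
    · exact hbx h
    rcases hQsub j _ h2 with h' | h'
    · exact hbx h'
    exact hPdisj i j hne' (bb i) h h'
  · intro i j hij z hzi hzj
    rcases hQsub i z hzi with h | h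
    · exact h
    rcases hQsub j z hzj with h' | h'
    · exact h'
    exact (hPdisj i j hij z h h').elim


/-- The graph `G` with an apex vertex `none` joined to every vertex of `W`. -/
def apexG (G : SimpleGraph V) (W : Set V) : SimpleGraph (Option V) where
  Adj o₁ o₂ :=
    match o₁, o₂ with
    | some a, some b => G.Adj a b
    | some a, none => a ∈ W
    | none, some b => b ∈ W
    | none, none => False
  symm := by
    constructor
    rintro (_ | a) (_ | b) h
    · exact h
    · exact h
    · exact h
    · exact h.symm
  loopless := by
    constructor
    rintro (_ | a) h
    · exact h
    · exact G.loopless.irrefl a h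

variable {W : Set V}

lemma apex_adj_some_some {a b : V} : (apexG G W).Adj (some a) (some b) ↔ G.Adj a b := Iff.rfl
lemma apex_adj_none_some {b : V} : (apexG G W).Adj none (some b) ↔ b ∈ W := Iff.rfl
lemma apex_adj_some_none {a : V} : (apexG G W).Adj (some a) none ↔ a ∈ W := Iff.rfl

def apexHom (G : SimpleGraph V) (W : Set V) : G →g apexG G W where
  toFun := some
  map_rel' := fun h => h

lemma apex_unmap : ∀ {o₁ o₂ : Option V} (p : (apexG G W).Walk o₁ o₂) {a b : V},
    o₁ = some a → o₂ = some b → none ∉ p.support →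
    ∃ q : G.Walk a b, q.support.map some = p.support := by
  intro o₁ o₂ p
  induction p with
  | nil =>
      intro a b h1 h2 _
      subst h1
      injection h2 with h
      subst h
      exact ⟨Walk.nil, by simp⟩
  | @cons o₁ m o₂ h p ih =>
      intro a b h1 h2 hn
      cases m with
      | none =>
          exact absurd (by simp [Walk.support_cons, p.start_mem_support]) hn
      | some c =>
          subst h1
          have hadj : G.Adj a c := h
          obtain ⟨q, hq⟩ := ih rfl h2 (fun hm => hn (by simp [Walk.support_cons, hm]))
          exact ⟨Walk.cons hadj q, by simp [Walk.support_cons, hq]⟩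


theorem perfect_main {V : Type*} [Fintype V] [DecidableEq V] (G : SimpleGraph V)
    (k : ℕ) (hk : 1 ≤ k) (x : V) (S T : Set V)
    (hxS : x ∉ S) (hTS : T ⊆ S) (hTcard : T.ncard = k - 1)
    (hSk : VertexLinked G k x S)
    (hTk : VertexLinked G (k - 1) x T) :
    ∃ s ∈ S \ T, VertexLinked G k x (T ∪ {s}) := by
  obtain ⟨bS, PS, hbSinj, hbSS, hPSpath, hPSmeet, hPSdisj⟩ := hSk
  obtain ⟨bT, PT, hbTinj, hbTT, hPTpath, hPTmeet, hPTdisj⟩ := hTk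
  have hxT : x ∉ T := fun h => hxS (hTS h)
  set H := apexG G (S \ T) with hH
  set Bs : Set (Option V) := some '' T ∪ {none} with hBs
  have hxBs : (some x : Option V) ∉ Bs := by
    rw [hBs]
    rintro (⟨t, htT, hts⟩ | h)
    · exact hxT (Option.some_injective V hts ▸ htT)
    · simp at h
  -- the separator condition in the apex graph
  have hsepH : ∀ C : Set (Option V), some x ∉ C →
      (∀ b ∈ Bs, ∀ p : H.Walk (some x) b, ∃ c ∈ C, c ∈ p.support) → k ≤ C.ncard := by
    intro C hxC hC
    by_cases hnone : (none : Option V) ∈ C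
    · -- every T-fan path is hit by C
      have hits : ∀ j : Fin (k - 1), ∃ d, d ∈ (PT j).support ∧ some d ∈ C := by
        intro j
        obtain ⟨c, hcC, hc⟩ := hC (some (bT j)) (Or.inl ⟨bT j, hbTT j, rfl⟩)
          ((PT j).map (apexHom G (S \ T)))
        replace hc : c ∈ ((PT j).map (apexHom G (S \ T))).support := hc
        rw [Walk.support_map, List.mem_map] at hc
        obtain ⟨d, hd, hdc⟩ := hc
        have hdc' : some d = c := hdc
        exact ⟨d, hd, hdc' ▸ hcC⟩
      choose d hd hdC using hits
      have hdx : ∀ j, d j ≠ x := fun j h => hxC (h ▸ hdC j)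
      have hdinj : Function.Injective d := by
        intro i j hij
        by_contra hne'
        exact (hdx i) (hPTdisj i j hne' (d i) (hd i) (hij ▸ hd j))
      have hsub : insert none (Set.range fun j => (some (d j) : Option V)) ⊆ C := by
        rintro c (rfl | ⟨j, rfl⟩)
        · exact hnone
        · exact hdC j
      have hcard : (insert none (Set.range fun j => (some (d j) : Option V))).ncard = k := by
        rw [Set.ncard_insert_of_notMem (by rintro ⟨j, hj⟩; exact Option.some_ne_none _ hj)
          (Set.toFinite _)]
        have hinj2 : Function.Injective fun j => (some (d j) : Option V) :=
          fun i j h => hdinj (Option.some_injective V h)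
        rw [← Set.image_univ, Set.ncard_image_of_injective _ hinj2, Set.ncard_univ,
          Nat.card_eq_fintype_card, Fintype.card_fin]
        omega
      calc k = _ := hcard.symm
        _ ≤ C.ncard := Set.ncard_le_ncard hsub (Set.toFinite _)
    · by_cases hmiss : ∃ i, ∀ z ∈ (PS i).support, some z ∉ C
      · exfalso
        obtain ⟨i, hi⟩ := hmiss
        by_cases hbiT : bS i ∈ T
        · obtain ⟨c, hcC, hc⟩ := hC (some (bS i)) (Or.inl ⟨bS i, hbiT, rfl⟩)
            ((PS i).map (apexHom G (S \ T)))
          replace hc : c ∈ ((PS i).map (apexHom G (S \ T))).support := hc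
          rw [Walk.support_map, List.mem_map] at hc
          obtain ⟨z, hz, rfl⟩ := hc
          exact hi z hz hcC
        · have hadj : H.Adj (some (bS i)) none := by
            rw [hH, apex_adj_some_none]
            exact ⟨hbSS i, hbiT⟩
          obtain ⟨c, hcC, hc⟩ := hC none (Or.inr rfl)
            (((PS i).map (apexHom G (S \ T))).concat hadj)
          replace hc : c ∈ (((PS i).map (apexHom G (S \ T))).concat
            (show (apexG G (S \ T)).Adj ((apexHom G (S \ T)) (bS i)) none from hadj)).support := hc
          rw [Walk.support_concat, List.mem_append] at hc
          rcases hc with hc | hc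
          · rw [Walk.support_map, List.mem_map] at hc
            obtain ⟨z, hz, rfl⟩ := hc
            exact hi z hz hcC
          · simp only [List.mem_singleton] at hc
            exact hnone (hc ▸ hcC)
      · push_neg at hmiss
        choose z hz hzC using hmiss
        have hzx : ∀ i, z i ≠ x := fun i h => hxC (h ▸ hzC i)
        have hzinj : Function.Injective z := by
          intro i j hij
          by_contra hne'
          exact (hzx i) (hPSdisj i j hne' (z i) (hz i) (hij ▸ hz j))
        have hsub : (Set.range fun i => (some (z i) : Option V)) ⊆ C := by
          rintro c ⟨i, rfl⟩
          exact hzC i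
        have hinj2 : Function.Injective fun i => (some (z i) : Option V) :=
          fun i j h => hzinj (Option.some_injective V h)
        have hcard : (Set.range fun i => (some (z i) : Option V)).ncard = k := by
          rw [← Set.image_univ, Set.ncard_image_of_injective _ hinj2, Set.ncard_univ,
            Nat.card_eq_fintype_card, Fintype.card_fin]
        calc k = _ := hcard.symm
          _ ≤ C.ncard := Set.ncard_le_ncard hsub (Set.toFinite _)
  obtain ⟨bH, PH, hbHinj, hbHB, hPHpath, hPHmeet, hPHdisj⟩ :=
    fan_menger H (some x) Bs k hxBs hsepH
  -- the endpoints cover all of Bs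
  have hBscard : Bs.ncard = k := by
    rw [hBs, Set.union_singleton, Set.ncard_insert_of_notMem
      (by rintro ⟨t, -, ht⟩; exact Option.some_ne_none _ ht) (Set.toFinite _),
      Set.ncard_image_of_injective _ (Option.some_injective V), hTcard]
    omega
  have hrange : Set.range bH = Bs := by
    refine Set.eq_of_subset_of_ncard_le (Set.range_subset_iff.2 hbHB) ?_ (Set.toFinite _)
    rw [hBscard, ← Set.image_univ, Set.ncard_image_of_injective _ hbHinj, Set.ncard_univ,
      Nat.card_eq_fintype_card, Fintype.card_fin]
  obtain ⟨i0, hi0⟩ : ∃ i0, bH i0 = none := by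
    have : (none : Option V) ∈ Set.range bH := by rw [hrange]; exact Or.inr rfl
    exact this
  -- decompose the path to `none`
  have hRpath : ((PH i0).copy rfl hi0).IsPath := by
    rw [Walk.isPath_copy]
    exact hPHpath i0
  have hxnone : (none : Option V) ≠ some x := by simp
  obtain ⟨m, hadjR, r', hre⟩ := Walk.exists_eq_cons_of_ne hxnone ((PH i0).copy rfl hi0).reverse
  have hRsupp : ∀ z, z ∈ r'.support → z ∈ (PH i0).support := by
    intro c hc
    have h1 : c ∈ ((PH i0).copy rfl hi0).reverse.support := by
      rw [hre, Walk.support_cons]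
      exact List.mem_cons_of_mem _ hc
    rw [Walk.support_reverse, List.mem_reverse, Walk.support_copy] at h1
    exact h1
  cases m with
  | none =>
      exact absurd hadjR (by rw [hH]; exact fun h => h)
  | some s =>
  have hsW : s ∈ S \ T := hadjR
  have hr'split : r'.IsPath ∧ (none : Option V) ∉ r'.support := by
    have := hRpath.reverse
    rw [hre, Walk.cons_isPath_iff] at this
    exact this
  have hnr' : none ∉ r'.support := hr'split.2
  obtain ⟨Ps, hPs⟩ := apex_unmap r'.reverse rfl rfl
    (by rw [Walk.support_reverse, List.mem_reverse]; exact hnr')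
  have hPssub : ∀ z ∈ Ps.support, some z ∈ (PH i0).support := by
    intro z hzmem
    have h1 : some z ∈ r'.reverse.support := by
      rw [← hPs]
      exact List.mem_map_of_mem hzmem
    rw [Walk.support_reverse, List.mem_reverse] at h1
    exact hRsupp _ h1
  have hsPH : some s ∈ (PH i0).support := hRsupp _ r'.start_mem_support
  -- construct all k paths in G
  have master : ∀ i, ∃ (v : V) (q : G.Walk x v), v ∈ T ∪ {s} ∧ q.IsPath ∧
      (∀ z ∈ q.support, some z ∈ (PH i).support) ∧
      (∀ z ∈ q.support, z ∈ T ∪ {s} → z = v) ∧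
      ((i = i0 ∧ v = s) ∨ (i ≠ i0 ∧ bH i = some v)) := by
    intro i
    by_cases hi : i = i0
    · subst hi
      refine ⟨s, Ps, Or.inr rfl, ?_, hPssub, ?_, Or.inl ⟨rfl, rfl⟩⟩
      · rw [Walk.isPath_def]
        refine List.Nodup.of_map some ?_
        rw [hPs]
        exact hr'split.1.reverse.support_nodup
      · intro z hzmem hzTs
        rcases hzTs with hzT | hzs
        · exfalso
          have h1 := hPssub z hzmem
          have h2 := hPHmeet _ (some z) h1 (Or.inl ⟨z, hzT, rfl⟩)
          rw [hi0] at h2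
          exact Option.some_ne_none _ h2
        · exact hzs
    · -- i ≠ i0 : path to some t ∈ T
      have hbi : bH i ∈ some '' T := by
        rcases hbHB i with h | h
        · exact h
        · exact absurd (hbHinj (h.trans hi0.symm)) hi
      obtain ⟨t, htT, hbt⟩ := hbi
      have hnone : none ∉ (PH i).support := by
        intro hmem
        have := hPHmeet i none hmem (Or.inr rfl)
        rw [← hbt] at this
        exact Option.some_ne_none _ this.symm
      obtain ⟨q, hq⟩ := apex_unmap (PH i) rfl hbt.symm hnone
      have hqsub : ∀ z ∈ q.support, some z ∈ (PH i).support := by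
        intro z hzmem
        rw [← hq]
        exact List.mem_map_of_mem hzmem
      refine ⟨t, q, Or.inl htT, ?_, hqsub, ?_, Or.inr ⟨hi, hbt.symm⟩⟩
      · rw [Walk.isPath_def]
        refine List.Nodup.of_map some ?_
        rw [hq]
        exact (hPHpath i).support_nodup
      · intro z hzmem hzTs
        rcases hzTs with hzT | hzs
        · have h2 := hPHmeet i (some z) (hqsub z hzmem) (Or.inl ⟨z, hzT, rfl⟩)
          rw [← hbt] at h2
          exact Option.some_injective V h2
        · exfalso
          rw [Set.mem_singleton_iff] at hzs
          subst hzs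
          have := hPHdisj i i0 hi (some z) (hqsub z hzmem) hsPH
          have hzx : z = x := Option.some_injective V this
          exact hxS (hzx ▸ hsW.1)
  choose bv Pv hbvT hPvpath hPvsub hPvmeet hcase using master
  refine ⟨s, hsW, bv, Pv, ?_, hbvT, hPvpath, hPvmeet, ?_⟩
  · intro i j hij
    rcases hcase i with ⟨hi, hvi⟩ | ⟨hi, hvi⟩ <;> rcases hcase j with ⟨hj, hvj⟩ | ⟨hj, hvj⟩
    · rw [hi, hj]
    · exfalso
      have hbj : bH j ∈ some '' T := by
        rcases hbHB j with h | h
        · exact h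
        · exact absurd (hbHinj (h.trans hi0.symm)) hj
      obtain ⟨t, htT, hbt⟩ := hbj
      have h6 : bv j = t := Option.some_injective V (hvj ▸ hbt).symm
      refine hsW.2 ?_
      rw [show s = t from by rw [← h6, ← hij, hvi]]
      exact htT
    · exfalso
      have hbi : bH i ∈ some '' T := by
        rcases hbHB i with h | h
        · exact h
        · exact absurd (hbHinj (h.trans hi0.symm)) hi
      obtain ⟨t, htT, hbt⟩ := hbi
      have h6 : bv i = t := Option.some_injective V (hvi ▸ hbt).symm
      refine hsW.2 ?_
      rw [show s = t from by rw [← h6, hij, hvj]]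
      exact htT
    · refine hbHinj ?_
      rw [hvi, hvj, hij]
  · intro i j hij z hzi hzj
    have := hPHdisj i j hij (some z) (hPvsub i z hzi) (hPvsub j z hzj)
    exact Option.some_injective V this


end PerfectAux

/-- Perfect's Theorem. -/
theorem perfect_theorem {V : Type*} [Fintype V] (G : SimpleGraph V)
    (k : ℕ) (hk : 1 ≤ k) (x : V) (S T : Set V)
    (hxS : x ∉ S) (hTS : T ⊆ S) (hTcard : T.ncard = k - 1)
    (hSk : VertexLinked G k x S)
    (hTk : VertexLinked G (k - 1) x T) :
    ∃ s ∈ S \ T, VertexLinked G k x (T ∪ {s}) := by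
  classical
  exact PerfectAux.perfect_main G k hk x S T hxS hTS hTcard hSk hTk
end

section
/- Let G be a 3-connected claw-free graph and T a 3-element vertex cut of G. Then each of the (exactly two) connected components of G − T is 2-connected or has at most 2 vertices; in particular, no component of G − T contains a cutvertex. -/
open SimpleGraph

/-- Reachability within a vertex set `S`: a walk whose support stays in `S`. -/
def RIn {V : Type*} (G : SimpleGraph V) (S : Set V) (x y : V) : Prop :=
  ∃ w : G.Walk x y, ∀ z ∈ w.support, z ∈ S

namespace RIn

variable {V : Type*} {G : SimpleGraph V} {S S' : Set V} {x y z : V}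

lemma mem_left (h : RIn G S x y) : x ∈ S := by
  obtain ⟨w, hw⟩ := h; exact hw x (Walk.start_mem_support _)

lemma mem_right (h : RIn G S x y) : y ∈ S := by
  obtain ⟨w, hw⟩ := h; exact hw y (Walk.end_mem_support _)

lemma refl (hx : x ∈ S) : RIn G S x x := ⟨Walk.nil, by simp [hx]⟩

lemma symm (h : RIn G S x y) : RIn G S y x := by
  obtain ⟨w, hw⟩ := h
  exact ⟨w.reverse, by simpa using hw⟩

lemma trans (h1 : RIn G S x y) (h2 : RIn G S y z) : RIn G S x z := by
  obtain ⟨w1, hw1⟩ := h1; obtain ⟨w2, hw2⟩ := h2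
  refine ⟨w1.append w2, fun a ha => ?_⟩
  rcases (Walk.mem_support_append_iff _ _).1 ha with h | h
  · exact hw1 a h
  · exact hw2 a h

lemma adj (h : G.Adj x y) (hx : x ∈ S) (hy : y ∈ S) : RIn G S x y :=
  ⟨h.toWalk, by simp [hx, hy]⟩

lemma mono (hss : S ⊆ S') (h : RIn G S x y) : RIn G S' x y := by
  obtain ⟨w, hw⟩ := h; exact ⟨w, fun z hz => hss (hw z hz)⟩

end RIn

section Aux

variable {V : Type*}

lemma reachable_induce_of_walk {G : SimpleGraph V} {S : Set V} {a b : V}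
    (w : G.Walk a b) (hw : ∀ z ∈ w.support, z ∈ S) :
    ∃ (ha : a ∈ S) (hb : b ∈ S), (G.induce S).Reachable ⟨a, ha⟩ ⟨b, hb⟩ := by
  induction w with
  | nil => exact ⟨hw _ (Walk.start_mem_support _), hw _ (Walk.start_mem_support _),
      Reachable.refl _⟩
  | @cons u c d h p ih =>
    have hu : u ∈ S := hw _ (Walk.start_mem_support _)
    have hc : c ∈ S := hw _ (by simp)
    obtain ⟨hc', hd, hr⟩ := ih (fun z hz => hw z (by simp [hz]))
    refine ⟨hu, hd, Reachable.trans ?_ hr⟩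
    exact (Adj.reachable (by simpa using h : (G.induce S).Adj ⟨u, hu⟩ ⟨c, hc'⟩))

lemma rIn_of_reachable_induce {G : SimpleGraph V} {S : Set V} {x y : ↥S}
    (h : (G.induce S).Reachable x y) : RIn G S ↑x ↑y := by
  obtain ⟨w⟩ := h
  induction w with
  | nil => exact ⟨Walk.nil, by simp⟩
  | @cons u c d h p ih =>
    obtain ⟨w', hw'⟩ := ih
    refine ⟨Walk.cons (by simpa using h) w', fun z hz => ?_⟩
    rcases (by simpa using hz : z = ↑u ∨ z ∈ w'.support) with rfl | hz'
    · exact u.2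
    · exact hw' z hz'

lemma reachable_induce_iff' {G : SimpleGraph V} {S : Set V} (x y : ↥S) :
    (G.induce S).Reachable x y ↔ RIn G S ↑x ↑y := by
  constructor
  · exact rIn_of_reachable_induce
  · rintro ⟨w, hw⟩
    obtain ⟨ha, hb, hr⟩ := reachable_induce_of_walk w hw
    simpa using hr

lemma connected_induce_iff' {G : SimpleGraph V} {S : Set V} :
    (G.induce S).Connected ↔ S.Nonempty ∧ ∀ x ∈ S, ∀ y ∈ S, RIn G S x y := by
  rw [connected_iff]
  constructor
  · rintro ⟨hp, ⟨x⟩⟩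
    refine ⟨⟨x, x.2⟩, fun a ha b hb => ?_⟩
    exact (reachable_induce_iff' ⟨a, ha⟩ ⟨b, hb⟩).1 (hp _ _)
  · rintro ⟨⟨x, hx⟩, h⟩
    refine ⟨fun a b => (reachable_induce_iff' a b).2 (h _ a.2 _ b.2), ⟨⟨x, hx⟩⟩⟩

/-- Every vertex on a walk staying in `S` is `RIn S`-reachable from the start. -/
lemma rIn_of_mem_support {G : SimpleGraph V} {S : Set V} {a b : V} (w : G.Walk a b) :
    (∀ z ∈ w.support, z ∈ S) → ∀ z ∈ w.support, RIn G S a z := by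
  induction w with
  | nil =>
    intro hw z hz
    rw [Walk.support_nil, List.mem_singleton] at hz
    subst hz
    exact ⟨Walk.nil, hw⟩
  | @cons u c d h p ih =>
    intro hw z hz
    have hu : u ∈ S := hw _ (Walk.start_mem_support _)
    have hc : c ∈ S := hw _ (by simp)
    rcases (by simpa using hz : z = u ∨ z ∈ p.support) with rfl | hz'
    · exact RIn.refl hu
    · exact (RIn.adj h hu hc).trans (ih (fun z hz => hw z (by simp [hz])) z hz')

/-- From a walk to `t` staying in `insert t R`, starting in `R`, we find a
neighbor of `t` reachable within `R` from the start. -/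
lemma exists_adj_of_walk {G : SimpleGraph V} {R : Set V} {t u : V} (w : G.Walk u t) :
    t ∉ R → u ∈ R → (∀ z ∈ w.support, z ∈ insert t R) → ∃ a, G.Adj t a ∧ RIn G R u a := by
  induction w with
  | nil => intro ht hu _; exact absurd hu ht
  | @cons u c d h p ih =>
    intro ht hu hw
    by_cases hc : c = d
    · subst hc
      exact ⟨u, h.symm, ⟨Walk.nil, by simpa⟩⟩
    · have hcR : c ∈ R := by
        rcases Set.mem_insert_iff.1 (hw c (by simp)) with h' | h'
        · exact absurd h' hc
        · exact h'
      obtain ⟨a, hadj, ha⟩ := ih ht hcR (fun z hz => hw z (by simp [hz]))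
      exact ⟨a, hadj, (RIn.adj h hu hcR).trans ha⟩

/-- Crossing lemma: a walk from inside `A` to outside `A` has a crossing edge. -/
lemma exists_crossing {G : SimpleGraph V} {A : Set V} {a b : V} (w : G.Walk a b) :
    a ∈ A → b ∉ A → ∃ p q, p ∈ A ∧ q ∉ A ∧ G.Adj p q ∧ q ∈ w.support := by
  induction w with
  | nil => intro ha hb; exact absurd ha hb
  | @cons u c d h p ih =>
    intro ha hb
    by_cases hc : c ∈ A
    · obtain ⟨p', q', h1, h2, h3, h4⟩ := ih hc hb
      exact ⟨p', q', h1, h2, h3, by simp [h4]⟩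
    · exact ⟨u, c, ha, hc, h, by simp⟩

end Aux

/-- `G` is claw-free: no induced `K_{1,3}`. -/
def ClawFree {V : Type*} (G : SimpleGraph V) : Prop :=
  ∀ v a b c : V, G.Adj v a → G.Adj v b → G.Adj v c → a ≠ b → a ≠ c → b ≠ c →
    G.Adj a b ∨ G.Adj a c ∨ G.Adj b c

/-- `G` is 3-connected: at least 4 vertices, and deleting any at most 2
vertices leaves a connected graph. -/
def ThreeConnected {V : Type*} [Fintype V] (G : SimpleGraph V) : Prop :=
  4 ≤ Fintype.card V ∧
    ∀ X : Finset V, X.card ≤ 2 → (G.induce ((↑X : Set V)ᶜ)).Connected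

/-- `Q` is the vertex set of a connected component of the subgraph of `G`
induced on `R`: a maximal nonempty subset of `R` inducing a connected graph. -/
def IsComponentSet {V : Type*} (G : SimpleGraph V) (R Q : Set V) : Prop :=
  Q ⊆ R ∧ Q.Nonempty ∧ (G.induce Q).Connected ∧
    ∀ Q' : Set V, Q ⊆ Q' → Q' ⊆ R → (G.induce Q').Connected → Q' = Q

lemma rIn_shrink {V : Type*} {G : SimpleGraph V} {R : Set V} {x a : V}
    (h : RIn G R x a) : RIn G {z | RIn G R x z} x a := by
  obtain ⟨w, hw⟩ := h
  exact ⟨w, rIn_of_mem_support w hw⟩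

lemma setOf_rIn_connected {V : Type*} {G : SimpleGraph V} {R : Set V} {x : V} (hx : x ∈ R) :
    (G.induce {z | RIn G R x z}).Connected := by
  rw [connected_induce_iff']
  refine ⟨⟨x, RIn.refl hx⟩, fun a ha b hb => ?_⟩
  exact (rIn_shrink ha).symm.trans (rIn_shrink hb)

lemma isComponentSet_iff {V : Type*} {G : SimpleGraph V} {R Q : Set V} :
    IsComponentSet G R Q ↔ ∃ x, x ∈ R ∧ Q = {y | RIn G R x y} := by
  constructor
  · rintro ⟨hQR, ⟨x, hx⟩, hconn, hmax⟩
    refine ⟨x, hQR hx, ?_⟩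
    have h1 : Q ⊆ {y | RIn G R x y} := fun y hy =>
      ((connected_induce_iff'.1 hconn).2 x hx y hy).mono hQR
    exact (hmax {y | RIn G R x y} h1 (fun y hy => hy.mem_right)
      (setOf_rIn_connected (hQR hx))).symm
  · rintro ⟨x, hxR, rfl⟩
    refine ⟨fun y hy => hy.mem_right, ⟨x, RIn.refl hxR⟩, setOf_rIn_connected hxR, ?_⟩
    intro Q' hsub hsub' hconn'
    apply Set.Subset.antisymm _ hsub
    intro y hy
    exact ((connected_induce_iff'.1 hconn').2 x (hsub (RIn.refl hxR)) y hy).mono hsub'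

/-- Lemma 3.2, second part: if `T` is a 3-cut of a 3-connected claw-free graph
`G`, then `G - T` has exactly two components, and each component is
2-connected or has at most 2 vertices; in particular, no component of `G - T`
contains a cutvertex. -/
theorem components_of_three_cut_no_cutvertex {V : Type*} [Fintype V] [DecidableEq V]
    (G : SimpleGraph V) (hG3 : ThreeConnected G) (hcf : ClawFree G)
    (T : Finset V) (hT : T.card = 3)
    (hcut : ¬ (G.induce ((↑T : Set V)ᶜ)).Connected) :
    Nat.card (G.induce ((↑T : Set V)ᶜ)).ConnectedComponent = 2 ∧
    (∀ Q : Set V, IsComponentSet G ((↑T : Set V)ᶜ) Q →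
      (Q.ncard ≤ 2 ∨ (3 ≤ Q.ncard ∧ ∀ v ∈ Q, (G.induce (Q \ {v})).Connected)) ∧
      (∀ v ∈ Q, (Q \ {v}).Nonempty → (G.induce (Q \ {v})).Connected)) := by
  classical
  set R : Set V := ((↑T : Set V)ᶜ) with hRdef
  have hRmem : ∀ z : V, z ∈ R ↔ z ∉ T := by intro z; simp [hRdef]
  have htR : ∀ t ∈ T, t ∉ R := fun t ht h => (hRmem t).1 h ht
  -- R is nonempty
  have hRne : R.Nonempty := by
    have h4 := hG3.1
    have h1 : 0 < (Tᶜ : Finset V).card := by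
      rw [Finset.card_compl, hT]
      omega
    obtain ⟨v, hv⟩ := Finset.card_pos.1 h1
    exact ⟨v, (hRmem v).2 (Finset.mem_compl.1 hv)⟩
  -- every vertex of T has a neighbor reachable (within R) from any given vertex of R
  have hadjT : ∀ t ∈ T, ∀ u ∈ R, ∃ a, G.Adj t a ∧ RIn G R u a := by
    intro t ht u hu
    have hconn := hG3.2 (T.erase t) (by rw [Finset.card_erase_of_mem ht, hT])
    rw [connected_induce_iff'] at hconn
    have h1 : u ∈ ((↑(T.erase t) : Set V))ᶜ := fun h =>
      (hRmem u).1 hu (Finset.mem_of_mem_erase (Finset.mem_coe.1 h))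
    have h2 : t ∈ ((↑(T.erase t) : Set V))ᶜ := by simp
    obtain ⟨w, hw⟩ := hconn.2 u h1 t h2
    refine exists_adj_of_walk w (htR t ht) hu (fun z hz => ?_)
    have hz' : z ∉ T.erase t := fun h => hw z hz (Finset.mem_coe.2 h)
    rcases eq_or_ne z t with rfl | hzt
    · exact Set.mem_insert _ _
    · exact Set.mem_insert_of_mem _ ((hRmem z).2 (fun h => hz' (Finset.mem_erase.2 ⟨hzt, h⟩)))
  -- edge absorption into a component set
  have hedgeQ : ∀ x0 p w : V, RIn G R x0 p → w ∈ R → G.Adj p w → RIn G R x0 w :=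
    fun x0 p w hp hw hadj => hp.trans (RIn.adj hadj hp.mem_right hw)
  -- main claim: no cutvertices in component sets
  have hmain : ∀ Q : Set V, IsComponentSet G R Q → ∀ v ∈ Q, (Q \ {v}).Nonempty →
      (G.induce (Q \ {v})).Connected := by
    intro Q hQ v hv hne
    obtain ⟨x0, hx0R, rfl⟩ := isComponentSet_iff.1 hQ
    set Q : Set V := {y | RIn G R x0 y} with hQdef
    have hQsub : Q ⊆ R := fun _ h => h.mem_right
    rw [connected_induce_iff']
    refine ⟨hne, ?_⟩
    intro y hy z hz
    by_contra hyz
    -- find a vertex in the other component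
    have hq' : ∃ q', q' ∈ R ∧ q' ∉ Q := by
      by_contra h
      push_neg at h
      apply hcut
      rw [connected_induce_iff']
      exact ⟨hRne, fun a ha b hb => (h a ha).symm.trans (h b hb)⟩
    obtain ⟨q', hq'R, hq'Q⟩ := hq'
    set A : Set V := {w | w ∈ Q \ {v} ∧ RIn G (Q \ {v}) y w} with hAdef
    have hyA : y ∈ A := ⟨hy, RIn.refl hy⟩
    have hzA : z ∉ A := fun h => hyz h.2
    -- attachment lemma
    have attach : ∀ P : Set V, P ⊆ Q \ {v} → P.Nonempty →
        (∀ p ∈ P, ∀ w, G.Adj p w → w ∉ P → w ∈ Q \ {v} → False) →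
        ∃ t1, t1 ∈ T ∧ ∃ t2, t2 ∈ T ∧ t1 ≠ t2 ∧
          (∃ a ∈ P, G.Adj t1 a) ∧ (∃ a ∈ P, G.Adj t2 a) := by
      intro P hPsub hPne hPedge
      have h2N : 2 ≤ (T.filter fun t => ∃ a ∈ P, G.Adj t a).card := by
        by_contra hcard
        push_neg at hcard
        set N : Finset V := T.filter (fun t => ∃ a ∈ P, G.Adj t a) with hNdef
        have hX : (insert v N).card ≤ 2 :=
          le_trans (Finset.card_insert_le _ _) (by omega)
        have hconn := hG3.2 (insert v N) hX
        rw [connected_induce_iff'] at hconn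
        obtain ⟨a, haP⟩ := hPne
        have haQ : a ∈ Q \ {v} := hPsub haP
        have hNsubT : N ⊆ T := Finset.filter_subset _ _
        have hamem : a ∈ ((↑(insert v N) : Set V))ᶜ := by
          intro h
          rcases by simpa using h with rfl | hN
          · exact haQ.2 rfl
          · exact (hRmem a).1 (hQsub haQ.1) (hNsubT hN)
        have hq'mem : q' ∈ ((↑(insert v N) : Set V))ᶜ := by
          intro h
          rcases by simpa using h with rfl | hN
          · exact hq'Q hv
          · exact (hRmem q').1 hq'R (hNsubT hN)
        obtain ⟨w, hw⟩ := hconn.2 a hamem q' hq'mem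
        have hq'P : q' ∉ P := fun h => hq'Q (hPsub h).1
        obtain ⟨p₁, q₁, hp₁, hq₁, hadj, hq₁mem⟩ := exists_crossing w haP hq'P
        have hq₁X : q₁ ∉ (insert v N : Finset V) := by simpa using hw q₁ hq₁mem
        by_cases hq₁T : q₁ ∈ T
        · exact hq₁X (Finset.mem_insert_of_mem
            (Finset.mem_filter.2 ⟨hq₁T, p₁, hp₁, hadj.symm⟩))
        · have hq₁R : q₁ ∈ R := (hRmem q₁).2 hq₁T
          have hq₁Q : q₁ ∈ Q := hedgeQ x0 p₁ q₁ (hPsub hp₁).1 hq₁R hadj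
          have hq₁v : q₁ ≠ v := fun h => hq₁X (h ▸ Finset.mem_insert_self _ _)
          exact hPedge p₁ hp₁ q₁ hadj hq₁ ⟨hq₁Q, hq₁v⟩
      obtain ⟨t1, ht1, t2, ht2, ht12⟩ := Finset.one_lt_card.1 h2N
      obtain ⟨ht1T, h1⟩ := Finset.mem_filter.1 ht1
      obtain ⟨ht2T, h2⟩ := Finset.mem_filter.1 ht2
      exact ⟨t1, ht1T, t2, ht2T, ht12, h1, h2⟩
    -- apply to A
    have hAedge : ∀ p ∈ A, ∀ w, G.Adj p w → w ∉ A → w ∈ Q \ {v} → False :=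
      fun p hp w hadj hwA hwQ => hwA ⟨hwQ, hp.2.trans (RIn.adj hadj hp.1 hwQ)⟩
    obtain ⟨t1, ht1T, t2, ht2T, ht12, hAt1, hAt2⟩ := attach A (fun _ h => h.1) ⟨y, hyA⟩ hAedge
    -- apply to B
    set B : Set V := {w | w ∈ Q \ {v} ∧ w ∉ A} with hBdef
    have hzB : z ∈ B := ⟨hz, hzA⟩
    have hBedge : ∀ p ∈ B, ∀ w, G.Adj p w → w ∉ B → w ∈ Q \ {v} → False := by
      intro p hp w hadj hwB hwQ
      have hwA : w ∈ A := by
        by_contra h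
        exact hwB ⟨hwQ, h⟩
      exact hp.2 ⟨hp.1, hwA.2.trans (RIn.adj hadj.symm hwQ hp.1)⟩
    obtain ⟨s1, hs1T, s2, hs2T, hs12, hBs1, hBs2⟩ := attach B (fun _ h => h.1) ⟨z, hzB⟩ hBedge
    -- pigeonhole: a common attachment vertex t
    -- a vertex of T adjacent to A, B and the other component yields a claw
    have claw : ∀ t ∈ T, (∃ a ∈ A, G.Adj t a) → (∃ b ∈ B, G.Adj t b) → False := by
      rintro t htT ⟨a, haA, hta⟩ ⟨b, hbB, htb⟩
      obtain ⟨c, htc, hcQ'⟩ := hadjT t htT q' hq'R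
      have hcQ : c ∉ Q := fun h => hq'Q (h.trans hcQ'.symm)
      have hcR : c ∈ R := hcQ'.mem_right
      have hab : a ≠ b := fun h => hbB.2 (h ▸ haA)
      have hac : a ≠ c := fun h => hcQ (h ▸ haA.1.1)
      have hbc : b ≠ c := fun h => hcQ (h ▸ hbB.1.1)
      have hnab : ¬G.Adj a b := fun h => hAedge a haA b h hbB.2 hbB.1
      have hnac : ¬G.Adj a c := fun h => hcQ (hedgeQ x0 a c haA.1.1 hcR h)
      have hnbc : ¬G.Adj b c := fun h => hcQ (hedgeQ x0 b c hbB.1.1 hcR h)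
      rcases hcf t a b c hta htb htc hab hac hbc with h | h | h
      · exact hnab h
      · exact hnac h
      · exact hnbc h
    -- pigeonhole on the 3-set T
    have h11 : t1 ≠ s1 := fun h => claw t1 ht1T hAt1 (h ▸ hBs1)
    have h12 : t1 ≠ s2 := fun h => claw t1 ht1T hAt1 (h ▸ hBs2)
    have h21 : t2 ≠ s1 := fun h => claw t2 ht2T hAt2 (h ▸ hBs1)
    have h22 : t2 ≠ s2 := fun h => claw t2 ht2T hAt2 (h ▸ hBs2)
    have hsub : ({t1, t2, s1, s2} : Finset V) ⊆ T := by
      intro x hx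
      rcases Finset.mem_insert.1 hx with rfl | hx
      · exact ht1T
      rcases Finset.mem_insert.1 hx with rfl | hx
      · exact ht2T
      rcases Finset.mem_insert.1 hx with rfl | hx
      · exact hs1T
      rw [Finset.mem_singleton] at hx
      exact hx ▸ hs2T
    have hcard4 : ({t1, t2, s1, s2} : Finset V).card = 4 := by
      rw [Finset.card_insert_of_notMem (by simp [ht12, h11, h12]),
        Finset.card_insert_of_notMem (by simp [h21, h22]),
        Finset.card_insert_of_notMem (by simp [hs12]), Finset.card_singleton]
    have := Finset.card_le_card hsub
    omega
  constructor
  · -- exactly two components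
    have hR1 : Nonempty ↥R := hRne.to_subtype
    have hnp : ¬(G.induce R).Preconnected := fun h => hcut ((connected_iff _).2 ⟨h, hR1⟩)
    simp only [Preconnected] at hnp
    push_neg at hnp
    obtain ⟨x, y, hxy⟩ := hnp
    rw [Nat.card_eq_two_iff]
    refine ⟨(G.induce R).connectedComponentMk x, (G.induce R).connectedComponentMk y,
      fun h => hxy (ConnectedComponent.eq.1 h), ?_⟩
    rw [Set.eq_univ_iff_forall]
    intro c
    induction c using ConnectedComponent.ind with
    | _ u =>
    by_contra hmem
    simp only [Set.mem_insert_iff, Set.mem_singleton_iff, not_or] at hmem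
    obtain ⟨hux, huy⟩ := hmem
    have hux' : ¬(G.induce R).Reachable u x := fun h => hux (ConnectedComponent.eq.2 h)
    have huy' : ¬(G.induce R).Reachable u y := fun h => huy (ConnectedComponent.eq.2 h)
    obtain ⟨t, htT⟩ := Finset.card_pos.1 (by omega : 0 < T.card)
    obtain ⟨a, hta, hua⟩ := hadjT t htT ↑u u.2
    obtain ⟨b, htb, hxb⟩ := hadjT t htT ↑x x.2
    obtain ⟨c, htc, hyc⟩ := hadjT t htT ↑y y.2
    have key : ∀ (p q : ↥R) (a b : V), ¬(G.induce R).Reachable p q →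
        RIn G R ↑p a → RIn G R ↑q b → a ≠ b ∧ ¬G.Adj a b := by
      intro p q a b hpq hpa hqb
      constructor
      · rintro rfl
        exact hpq ((reachable_induce_iff' p q).2 (hpa.trans hqb.symm))
      · intro h
        exact hpq ((reachable_induce_iff' p q).2
          ((hpa.trans (RIn.adj h hpa.mem_right hqb.mem_right)).trans hqb.symm))
    obtain ⟨hab, hnab⟩ := key u x a b hux' hua hxb
    obtain ⟨hac, hnac⟩ := key u y a c huy' hua hyc
    obtain ⟨hbc, hnbc⟩ := key x y b c hxy hxb hyc
    rcases hcf t a b c hta htb htc hab hac hbc with h | h | h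
    · exact hnab h
    · exact hnac h
    · exact hnbc h
  · -- component structure
    intro Q hQ
    refine ⟨?_, fun v hv hne => hmain Q hQ v hv hne⟩
    by_cases h2 : Q.ncard ≤ 2
    · exact Or.inl h2
    · refine Or.inr ⟨by omega, fun v hv => hmain Q hQ v hv ?_⟩
      obtain ⟨b, hb, hbv⟩ := Set.exists_ne_of_one_lt_ncard (s := Q) (by omega) v
      exact ⟨b, hb, hbv⟩
end

section
/- Let G be a 3-connected claw-free graph, T a 3-element vertex cut, and v ∈ T. Then v has a neighbor in each of the two connected components of G − T, and the neighbors of v inside each single component of G − T form a clique. -/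
lemma walk_closed {V : Type*} (G : SimpleGraph V) (s A : Set V)
    (hclosed : ∀ a ∈ A, ∀ b ∈ s, G.Adj a b → b ∈ A)
    {x y : s} (w : (G.induce s).Walk x y) (hx : (x : V) ∈ A) : (y : V) ∈ A := by
  induction w with
  | nil => exact hx
  | @cons _ u _ h p ih => exact ih (hclosed _ hx _ u.2 h)

lemma induce_singleton_connected {V : Type*} (G : SimpleGraph V) (x : V) :
    (G.induce {x}).Connected := by
  rw [SimpleGraph.connected_iff]
  refine ⟨?_, ⟨⟨x, rfl⟩⟩⟩
  rintro ⟨a, ha⟩ ⟨b, hb⟩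
  cases ha; cases hb
  rfl

/-- If `T` is a 3-cut of a 3-connected claw-free graph `G` and `v ∈ T`, then
`v` has a neighbor in each connected component of `G - T`, and the neighbors
of `v` inside any single component form a clique. -/
theorem cut_vertex_neighbors_in_components {V : Type*} [Fintype V] [DecidableEq V]
    (G : SimpleGraph V) (hG3 : ThreeConnected G) (hcf : ClawFree G)
    (T : Finset V) (hT : T.card = 3)
    (hcut : ¬ (G.induce ((↑T : Set V)ᶜ)).Connected)
    (v : V) (hv : v ∈ T) :
    ∀ Q : Set V, IsComponentSet G ((↑T : Set V)ᶜ) Q →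
      (∃ w ∈ Q, G.Adj v w) ∧
      (∀ a ∈ Q, ∀ b ∈ Q, G.Adj v a → G.Adj v b → a ≠ b → G.Adj a b) := by
  rintro Q ⟨hQR, hQne, hQconn, hQmax⟩
  -- Step A: Q absorbs neighbors inside Tᶜ
  have absorb : ∀ q ∈ Q, ∀ x, x ∈ ((↑T : Set V)ᶜ) → G.Adj q x → x ∈ Q := by
    intro q hq x hx hadj
    have hconn' : (G.induce (Q ∪ {x})).Connected :=
      SimpleGraph.connected_induce_union hQconn.preconnected (induce_singleton_connected G x).preconnected
        hq rfl hadj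
    have := hQmax (Q ∪ {x}) Set.subset_union_left
      (Set.union_subset hQR (by simpa using hx)) hconn'
    rw [← this]; exact Set.mem_union_right _ rfl
  -- Step B: there is a vertex of Tᶜ outside Q
  have hout : ∃ y, y ∈ ((↑T : Set V)ᶜ) ∧ y ∉ Q := by
    by_contra h
    push_neg at h
    have : Q = ((↑T : Set V)ᶜ) := Set.Subset.antisymm hQR (fun y hy => h y hy)
    exact hcut (this ▸ hQconn)
  -- Step C: key lemma
  have key : ∀ A : Set V, A ⊆ ((↑T : Set V)ᶜ) → A.Nonempty →
      (∀ a ∈ A, ∀ b, b ∈ ((↑T : Set V)ᶜ) → G.Adj a b → b ∈ A) →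
      (∃ y, y ∈ ((↑T : Set V)ᶜ) ∧ y ∉ A) → ∃ w ∈ A, G.Adj v w := by
    intro A hAR ⟨a0, ha0⟩ hAcl ⟨y, hyT, hyA⟩
    by_contra h
    push_neg at h
    set s : Set V := ((↑(T.erase v) : Set V)ᶜ) with hs
    have hcard : (T.erase v).card ≤ 2 := by
      rw [Finset.card_erase_of_mem hv, hT]
    have hconn : (G.induce s).Connected := hG3.2 (T.erase v) hcard
    have hsub : ∀ z, z ∈ ((↑T : Set V)ᶜ) → z ∈ s := by
      intro z hz
      simp only [hs, Set.mem_compl_iff, Finset.coe_erase, Set.mem_diff] at *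
      tauto
    have hclosed : ∀ a ∈ A, ∀ b ∈ s, G.Adj a b → b ∈ A := by
      intro a ha b hb hadj
      by_cases hbv : b = v
      · exact absurd (hbv ▸ hadj).symm (h a ha)
      · refine hAcl a ha b ?_ hadj
        have hb' : b ∉ T.erase v := hb
        simp only [Set.mem_compl_iff, Finset.mem_coe]
        exact fun hbT => hb' (Finset.mem_erase.mpr ⟨hbv, hbT⟩)
    have hreach := hconn.preconnected ⟨a0, hsub a0 (hAR ha0)⟩ ⟨y, hsub y hyT⟩
    exact hreach.elim fun w => hyA (walk_closed G s A hclosed w ha0)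
  have part1 : ∃ w ∈ Q, G.Adj v w := key Q hQR hQne (fun a ha b hb h => absorb a ha b hb h) hout
  refine ⟨part1, ?_⟩
  -- neighbor outside Q
  obtain ⟨c, ⟨hcT, hcQ⟩, hvc⟩ := by
    refine key (((↑T : Set V)ᶜ) \ Q) Set.diff_subset (by obtain ⟨y, hy1, hy2⟩ := hout; exact ⟨y, hy1, hy2⟩) ?_ ?_
    · rintro a ⟨haT, haQ⟩ b hbT hadj
      refine ⟨hbT, fun hbQ => haQ (absorb b hbQ a haT hadj.symm)⟩
    · obtain ⟨q, hq⟩ := hQne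
      exact ⟨q, hQR hq, fun h' => h'.2 hq⟩
  intro a ha b hb hva hvb hab
  rcases hcf v a b c hva hvb hvc hab (fun h' => hcQ (h' ▸ ha)) (fun h' => hcQ (h' ▸ hb)) with
    h' | h' | h'
  · exact h'
  · exact absurd (absorb a ha c hcT h') hcQ
  · exact absurd (absorb b hb c hcT h') hcQ
end

section
/- The complete bipartite graph K_{3,3} is 3-connected but does not satisfy property C(3,1): there is no cycle containing all three vertices of one side of the bipartition while avoiding some vertex of the other side. -/
open SimpleGraph

abbrev K33 := completeBipartiteGraph (Fin 3) (Fin 3)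

private def side : Fin 3 ⊕ Fin 3 → ℤ := fun x => if x.isLeft then 1 else -1

private lemma walk_count {u v : Fin 3 ⊕ Fin 3} (p : K33.Walk u v) :
    2 * ((p.support.countP (fun x => x.isLeft)) : ℤ)
      - 2 * (p.support.countP (fun x => x.isRight)) = side u + side v := by
  induction p with
  | nil => rename_i w; cases w <;> simp [side]
  | @cons a b c h p ih =>
    rw [Walk.support_cons, List.countP_cons, List.countP_cons]
    cases a <;> cases b <;> simp_all [side] <;> push_cast <;> linarith

private lemma no_cycle (u : Fin 3 ⊕ Fin 3) (c : K33.Walk u u) (hc : c.IsCycle)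
    (h0 : Sum.inl 0 ∈ c.support) (h1 : Sum.inl 1 ∈ c.support)
    (h2 : Sum.inl 2 ∈ c.support) (hz : Sum.inr 0 ∉ c.support) : False := by
  set t := c.support.tail with ht
  have hnd : t.Nodup := hc.support_nodup
  have hlen : 3 ≤ c.length := hc.three_le_length
  have hnil : ¬ c.Nil := by
    intro h
    rw [SimpleGraph.Walk.nil_iff_length_eq] at h
    omega
  have hut : u ∈ t := by
    rw [ht, ← SimpleGraph.Walk.support_tail_of_not_nil c hnil]
    exact SimpleGraph.Walk.end_mem_support _
  have hmem : ∀ x ∈ c.support, x ∈ t := by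
    intro x hx
    rw [c.support_eq_cons, List.mem_cons] at hx
    rcases hx with rfl | h
    · exact hut
    · exact h
  -- counts
  have key := walk_count c
  have hsup : c.support = u :: t := c.support_eq_cons
  have hLR : t.countP (fun x => x.isLeft) = t.countP (fun x => x.isRight) := by
    rw [hsup, List.countP_cons, List.countP_cons] at key
    cases u <;> simp [side] at key <;> push_cast at key <;> omega
  -- lower bound on left count
  have hLsub : ({Sum.inl 0, Sum.inl 1, Sum.inl 2} : Finset (Fin 3 ⊕ Fin 3)) ⊆
      (t.filter (fun x => x.isLeft)).toFinset := by
    intro x hx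
    simp only [Finset.mem_insert, Finset.mem_singleton] at hx
    rcases hx with rfl | rfl | rfl <;>
      · rw [List.mem_toFinset, List.mem_filter]
        exact ⟨hmem _ (by assumption), rfl⟩
  have hL : 3 ≤ t.countP (fun x => x.isLeft) := by
    have := Finset.card_le_card hLsub
    have h3 : ({Sum.inl 0, Sum.inl 1, Sum.inl 2} : Finset (Fin 3 ⊕ Fin 3)).card = 3 := by decide
    calc 3 = _ := h3.symm
      _ ≤ (t.filter (fun x => x.isLeft)).toFinset.card := this
      _ ≤ (t.filter (fun x => x.isLeft)).length := List.toFinset_card_le _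
      _ = t.countP (fun x => x.isLeft) := (List.countP_eq_length_filter).symm
  -- upper bound on right count
  have hRsub : (t.filter (fun x => x.isRight)).toFinset ⊆
      ({Sum.inr 1, Sum.inr 2} : Finset (Fin 3 ⊕ Fin 3)) := by
    intro x hx
    rw [List.mem_toFinset, List.mem_filter] at hx
    obtain ⟨hxt, hxr⟩ := hx
    match x with
    | Sum.inr j =>
      have hj0 : j ≠ 0 := by
        rintro rfl
        exact hz (by rw [hsup]; exact List.mem_cons_of_mem _ hxt)
      have hj : j = 1 ∨ j = 2 := by
        have h3 : ∀ k : Fin 3, k ≠ 0 → k = 1 ∨ k = 2 := by decide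
        exact h3 j hj0
      rcases hj with rfl | rfl <;> simp
  have hR : t.countP (fun x => x.isRight) ≤ 2 := by
    have hcard := Finset.card_le_card hRsub
    have h2c : ({Sum.inr 1, Sum.inr 2} : Finset (Fin 3 ⊕ Fin 3)).card = 2 := by decide
    have hnodupf : (t.filter (fun x => x.isRight)).Nodup := hnd.filter _
    calc t.countP (fun x => x.isRight) = (t.filter (fun x => x.isRight)).length :=
        List.countP_eq_length_filter
      _ = (t.filter (fun x => x.isRight)).toFinset.card := (List.toFinset_card_of_nodup hnodupf).symm
      _ ≤ 2 := by omega
  omega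

private lemma avail (X : Finset (Fin 3 ⊕ Fin 3)) (hX : X.card ≤ 2) :
    (∃ i : Fin 3, Sum.inl i ∉ X) ∧ (∃ j : Fin 3, Sum.inr j ∉ X) := by
  constructor
  · by_contra h
    push_neg at h
    have hsub : ({Sum.inl 0, Sum.inl 1, Sum.inl 2} : Finset (Fin 3 ⊕ Fin 3)) ⊆ X := by
      intro x hx
      simp only [Finset.mem_insert, Finset.mem_singleton] at hx
      rcases hx with rfl | rfl | rfl <;> exact h _
    have := Finset.card_le_card hsub
    have h3 : ({Sum.inl 0, Sum.inl 1, Sum.inl 2} : Finset (Fin 3 ⊕ Fin 3)).card = 3 := by decide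
    omega
  · by_contra h
    push_neg at h
    have hsub : ({Sum.inr 0, Sum.inr 1, Sum.inr 2} : Finset (Fin 3 ⊕ Fin 3)) ⊆ X := by
      intro x hx
      simp only [Finset.mem_insert, Finset.mem_singleton] at hx
      rcases hx with rfl | rfl | rfl <;> exact h _
    have := Finset.card_le_card hsub
    have h3 : ({Sum.inr 0, Sum.inr 1, Sum.inr 2} : Finset (Fin 3 ⊕ Fin 3)).card = 3 := by decide
    omega




private lemma K33_conn (X : Finset (Fin 3 ⊕ Fin 3)) (hX : X.card ≤ 2) :
    (K33.induce ((↑X : Set (Fin 3 ⊕ Fin 3))ᶜ)).Connected := by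
  obtain ⟨⟨i0, hi0⟩, ⟨j0, hj0⟩⟩ := avail X hX
  rw [SimpleGraph.connected_iff]
  refine ⟨?_, ⟨⟨Sum.inl i0, hi0⟩⟩⟩
  intro a b
  have adjLR : ∀ (i j : Fin 3) (hi : Sum.inl i ∈ (↑X : Set (Fin 3 ⊕ Fin 3))ᶜ)
      (hj : Sum.inr j ∈ (↑X : Set (Fin 3 ⊕ Fin 3))ᶜ),
      (K33.induce ((↑X : Set (Fin 3 ⊕ Fin 3))ᶜ)).Adj ⟨Sum.inl i, hi⟩ ⟨Sum.inr j, hj⟩ := by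
    intro i j hi hj
    simp [SimpleGraph.induce, SimpleGraph.comap]
  obtain ⟨av, ha⟩ := a
  obtain ⟨bv, hb⟩ := b
  match av, bv with
  | Sum.inl i, Sum.inl i' =>
    exact ((adjLR i j0 ha hj0).reachable).trans ((adjLR i' j0 hb hj0).symm.reachable)
  | Sum.inl i, Sum.inr j =>
    exact (adjLR i j ha hb).reachable
  | Sum.inr j, Sum.inl i =>
    exact (adjLR i j hb ha).symm.reachable
  | Sum.inr j, Sum.inr j' =>
    exact ((adjLR i0 j hi0 ha).symm.reachable).trans ((adjLR i0 j' hi0 hb).reachable)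


/-- `G` has a cycle whose vertex set contains `S` and avoids every vertex of `A`. -/
def CycleThrough {V : Type*} (G : SimpleGraph V) (S A : Set V) : Prop :=
  ∃ (u : V) (c : G.Walk u u), c.IsCycle ∧
    (∀ x ∈ S, x ∈ c.support) ∧ (∀ x ∈ A, x ∉ c.support)

/-- Property `C(m, n)`: for any disjoint vertex sets `S₁`, `S₂` with
`|S₁| = m`, `|S₂| = n`, there is a cycle containing all of `S₁` and no
vertex of `S₂`. -/
def PropC {V : Type*} [DecidableEq V] (G : SimpleGraph V) (m n : ℕ) : Prop :=
  ∀ S₁ S₂ : Finset V, Disjoint S₁ S₂ → S₁.card = m → S₂.card = n →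
    ∃ (u : V) (c : G.Walk u u), c.IsCycle ∧
      (∀ x ∈ S₁, x ∈ c.support) ∧ (∀ x ∈ S₂, x ∉ c.support)

/-- `K_{3,3}` is 3-connected but does not satisfy `C(3,1)`: no cycle contains
all three vertices of one side while avoiding some vertex of the other side. -/
theorem K33_not_C31 :
    ThreeConnected (completeBipartiteGraph (Fin 3) (Fin 3)) ∧
    (∃ z : Fin 3, ¬ CycleThrough (completeBipartiteGraph (Fin 3) (Fin 3))
        {Sum.inl 0, Sum.inl 1, Sum.inl 2} {Sum.inr z}) ∧
    ¬ PropC (completeBipartiteGraph (Fin 3) (Fin 3)) 3 1 := by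
  have hC : ¬ CycleThrough (completeBipartiteGraph (Fin 3) (Fin 3))
      {Sum.inl 0, Sum.inl 1, Sum.inl 2} {Sum.inr 0} := by
    rintro ⟨u, c, hcyc, hall, havoid⟩
    exact no_cycle u c hcyc
      (hall _ (by simp)) (hall _ (by simp)) (hall _ (by simp))
      (havoid _ (by simp))
  refine ⟨⟨by simp, K33_conn⟩, ⟨0, hC⟩, ?_⟩
  intro hP
  obtain ⟨u, c, hcyc, hall, havoid⟩ :=
    hP {Sum.inl 0, Sum.inl 1, Sum.inl 2} {Sum.inr 0} (by decide) (by decide) (by decide)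
  exact hC ⟨u, c, hcyc, fun x hx => hall x (by rcases hx with rfl | rfl | rfl <;> simp),
    fun x hx => havoid x (by rw [Set.mem_singleton_iff] at hx; subst hx; simp)⟩
end
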